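/- arXiv:1312.2520 — 5 statements merged into one kernel-verified Lean document; each statement's English description precedes it below -/
import Mathlib

section
/- Let P be a finite bounded poset. The m-cover poset P^⟨m⟩ is a lattice for every integer m > 0 if and only if P is a lattice in which the meet p ∧ q belongs to {0̂, p, q} for all p, q ∈ P. -/
/-- The defining shape of elements of the `m`-cover poset: a tuple consisting of
`l₀` copies of `⊥`, then `l₁` copies of `p₁`, then `l₂` copies of `p₂`,
where `p₁ ⋖ p₂` is a cover relation. -/
def IsMCoverTuple {α : Type*} [PartialOrder α] [OrderBot α] (m : ℕ) (f : Fin m → α) : Prop :=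
  ∃ (l₀ l₁ l₂ : ℕ) (p₁ p₂ : α), l₀ + l₁ + l₂ = m ∧ p₁ ⋖ p₂ ∧
    ∀ i : Fin m, f i = if (i : ℕ) < l₀ then ⊥ else if (i : ℕ) < l₀ + l₁ then p₁ else p₂

/-- The `m`-cover poset of `α`, as a subposet of the `m`-fold direct product `Fin m → α`
with the componentwise order. -/
abbrev MCover (α : Type*) [PartialOrder α] [OrderBot α] (m : ℕ) : Type _ :=
  {f : Fin m → α // IsMCoverTuple m f}

/-- A partial order is a lattice: any two elements have a least upper bound and a
greatest lower bound. -/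
def IsLatticeOrder (β : Type*) [PartialOrder β] : Prop :=
  (∀ a b : β, ∃ c, IsLUB {a, b} c) ∧ (∀ a b : β, ∃ c, IsGLB {a, b} c)

section Helpers

lemma isGLB_pair_iff {β : Type*} [Preorder β] {a b c : β} :
    IsGLB {a, b} c ↔ (c ≤ a ∧ c ≤ b) ∧ ∀ w, w ≤ a → w ≤ b → w ≤ c := by
  constructor
  · rintro ⟨h1, h2⟩
    refine ⟨⟨h1 (by simp), h1 (by simp)⟩, fun w hwa hwb => h2 ?_⟩
    rintro x (rfl | rfl) <;> assumption
  · rintro ⟨⟨h1, h2⟩, h3⟩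
    refine ⟨?_, fun w hw => h3 w (hw (by simp)) (hw (by simp))⟩
    rintro x (rfl | rfl) <;> assumption

lemma isLUB_pair_iff {β : Type*} [Preorder β] {a b c : β} :
    IsLUB {a, b} c ↔ (a ≤ c ∧ b ≤ c) ∧ ∀ w, a ≤ w → b ≤ w → c ≤ w := by
  constructor
  · rintro ⟨h1, h2⟩
    refine ⟨⟨h1 (by simp), h1 (by simp)⟩, fun w hwa hwb => h2 ?_⟩
    rintro x (rfl | rfl) <;> assumption
  · rintro ⟨⟨h1, h2⟩, h3⟩
    refine ⟨?_, fun w hw => h3 w (hw (by simp)) (hw (by simp))⟩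
    rintro x (rfl | rfl) <;> assumption

variable {α : Type*} [PartialOrder α] [OrderBot α]

/-- The local "cover-tuple" condition. -/
def MCond (m : ℕ) (f : Fin m → α) : Prop :=
  ∀ i j : Fin m, i ≤ j → f i = ⊥ ∨ f i = f j ∨ f i ⋖ f j

lemma mcond_mono {m : ℕ} {f : Fin m → α} (h : MCond m f) : Monotone f := by
  intro i j hij
  rcases h i j hij with h' | h' | h'
  · simp [h']
  · exact h'.le
  · exact h'.le

lemma isMCoverTuple_iff [Fintype α] {m : ℕ} (f : Fin m → α) :
    IsMCoverTuple m f ↔ (∃ p q : α, p ⋖ q) ∧ MCond m f := by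
  constructor
  · rintro ⟨l₀, l₁, l₂, p₁, p₂, hsum, hcov, hf⟩
    refine ⟨⟨p₁, p₂, hcov⟩, fun i j hij => ?_⟩
    rw [hf i, hf j]
    rcases lt_or_ge (i : ℕ) l₀ with hi | hi
    · simp [hi]
    · rw [if_neg (by omega)]
      have hj : ¬ ((j : ℕ) < l₀) := by omega
      rw [if_neg hj]
      rcases lt_or_ge (i : ℕ) (l₀ + l₁) with hi' | hi'
      · rw [if_pos hi']
        rcases lt_or_ge (j : ℕ) (l₀ + l₁) with hj' | hj'
        · simp [hj']
        · rw [if_neg (by omega)]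
          exact Or.inr (Or.inr hcov)
      · rw [if_neg (by omega), if_neg (by omega)]
        simp
  · rintro ⟨⟨p, q, hpq⟩, hC⟩
    induction m with
    | zero => exact ⟨0, 0, 0, p, q, rfl, hpq, fun i => i.elim0⟩
    | succ m ih =>
      have hbotlt : ∀ (x : α), x ≠ ⊥ → ⊥ < x := fun x hx => bot_lt_iff_ne_bot.2 hx
      by_cases h0 : f 0 = ⊥
      · -- first entry is ⊥ : recurse on tail
        obtain ⟨l₀, l₁, l₂, p₁, p₂, hsum, hcov, hf⟩ :=
          ih (f ∘ Fin.succ) (fun i j hij => hC i.succ j.succ (by simpa using hij))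
        refine ⟨l₀ + 1, l₁, l₂, p₁, p₂, by omega, hcov, ?_⟩
        intro i
        induction i using Fin.cases with
        | zero => simpa using h0
        | succ j =>
          have := hf j
          simp only [Function.comp_apply] at this
          rw [this]
          have hval : ((j.succ : Fin (m+1)) : ℕ) = (j : ℕ) + 1 := by simp
          rw [hval]
          split_ifs <;> first | rfl | omega
      · -- first entry nonzero: all entries nonzero
        have hge : ∀ i : Fin (m+1), f 0 = f i ∨ f 0 ⋖ f i := by
          intro i
          rcases hC 0 i (Fin.zero_le i) with h | h | h
          · exact absurd h h0
          · exact Or.inl h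
          · exact Or.inr h
        have hne : ∀ i : Fin (m+1), f i ≠ ⊥ := by
          intro i hbot
          rcases hge i with h | h
          · exact h0 (h.trans hbot)
          · rw [hbot] at h
            exact absurd h.lt (by simp)
        obtain ⟨l₀, l₁, l₂, p₁, p₂, hsum, hcov, hf⟩ :=
          ih (f ∘ Fin.succ) (fun i j hij => hC i.succ j.succ (by simpa using hij))
        have hl₀ : l₀ = 0 := by
          by_contra hl
          have hm : 0 < m := by omega
          have := hf ⟨0, hm⟩
          rw [if_pos (by simp only [Fin.val_mk]; omega)] at this
          exact hne (⟨0, hm⟩ : Fin m).succ this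
        subst hl₀
        rcases Nat.eq_zero_or_pos l₁ with hl₁ | hl₁
        · subst hl₁
          rcases Nat.eq_zero_or_pos l₂ with hl₂ | hl₂
          · -- m = 0 : singleton
            have hm : m = 0 := by omega
            subst hm
            obtain ⟨r, -, hr⟩ := exists_le_covBy_of_lt (bot_lt_iff_ne_bot.2 h0)
            refine ⟨0, 0, 1, r, f 0, rfl, hr, ?_⟩
            intro i
            have : i = 0 := Fin.ext (by omega)
            subst this
            simp
          · -- tail is constant p₂
            have hm : l₂ = m := by omega
            have hg0 : f (⟨0, by omega⟩ : Fin m).succ = p₂ := by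
              have := hf ⟨0, by omega⟩
              rw [if_neg (by simp only [Fin.val_mk]; omega), if_neg (by simp only [Fin.val_mk]; omega)] at this
              exact this
            rcases hge (⟨0, by omega⟩ : Fin m).succ with h | h
            · -- f 0 = p₂
              rw [hg0] at h
              refine ⟨0, 0, l₂ + 1, p₁, p₂, by omega, hcov, ?_⟩
              intro i
              induction i using Fin.cases with
              | zero => simpa using h
              | succ j =>
                have := hf j
                simp only [Function.comp_apply] at this
                rw [this, Fin.val_succ]
                split_ifs <;> first | rfl | omega
            · -- f 0 ⋖ p₂
              rw [hg0] at h
              refine ⟨0, 1, l₂, f 0, p₂, by omega, h, ?_⟩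
              intro i
              induction i using Fin.cases with
              | zero => simp
              | succ j =>
                have := hf j
                simp only [Function.comp_apply] at this
                rw [this, Fin.val_succ]
                split_ifs <;> first | rfl | omega
        · -- l₁ > 0 : first tail entry is p₁
          have hg0 : f (⟨0, by omega⟩ : Fin m).succ = p₁ := by
            have := hf ⟨0, by omega⟩
            rw [if_neg (by simp only [Fin.val_mk]; omega), if_pos (by simp only [Fin.val_mk]; omega)] at this
            exact this
          rcases hge (⟨0, by omega⟩ : Fin m).succ with h | h
          · -- f 0 = p₁
            rw [hg0] at h
            refine ⟨0, l₁ + 1, l₂, p₁, p₂, by omega, hcov, ?_⟩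
            intro i
            induction i using Fin.cases with
            | zero => simp [h]
            | succ j =>
              have := hf j
              simp only [Function.comp_apply] at this
              rw [this, Fin.val_succ]
              split_ifs <;> first | rfl | omega
          · -- f 0 ⋖ p₁ : then l₂ = 0
            rw [hg0] at h
            have hl₂ : l₂ = 0 := by
              by_contra hl₂
              have hidx : l₁ < m := by omega
              have hg2 : f (⟨l₁, hidx⟩ : Fin m).succ = p₂ := by
                have := hf ⟨l₁, hidx⟩
                rw [if_neg (by simp only [Fin.val_mk]; omega), if_neg (by simp only [Fin.val_mk]; omega)] at this
                exact this
              have hlt : f 0 < p₁ := h.lt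
              have hlt2 : p₁ < p₂ := hcov.lt
              rcases hge (⟨l₁, hidx⟩ : Fin m).succ with h2 | h2 <;> rw [hg2] at h2
              · exact absurd (h2 ▸ (hlt.trans hlt2)) (lt_irrefl _)
              · exact h2.2 hlt hlt2
            subst hl₂
            refine ⟨0, 1, l₁, f 0, p₁, by omega, h, ?_⟩
            intro i
            induction i using Fin.cases with
            | zero => simp
            | succ j =>
              have := hf j
              simp only [Function.comp_apply] at this
              rw [this, Fin.val_succ]
              split_ifs <;> first | rfl | omega
  
section Mu

open Classical in
/-- candidate meet -/
noncomputable def mu (a b : α) : α := if a ≤ b then a else if b ≤ a then b else ⊥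

lemma mu_eq_left {a b : α} (h : a ≤ b) : mu a b = a := if_pos h

lemma mu_eq_right {a b : α} (h : b ≤ a) : mu a b = b := by
  unfold mu
  split_ifs with h1
  · exact le_antisymm h1 h
  · rfl

lemma mu_eq_bot {a b : α} (h1 : ¬ a ≤ b) (h2 : ¬ b ≤ a) : mu a b = ⊥ := by
  unfold mu
  rw [if_neg h1, if_neg h2]

lemma mu_le_left (a b : α) : mu a b ≤ a := by
  unfold mu
  split_ifs with h1 h2
  · exact le_rfl
  · exact h2
  · exact bot_le

lemma mu_le_right (a b : α) : mu a b ≤ b := by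
  unfold mu
  split_ifs with h1 h2
  · exact h1
  · exact le_rfl
  · exact bot_le

variable (hG : ∀ a b : α, IsGLB {a, b} (mu a b))
include hG

lemma le_mu {a b w : α} (hwa : w ≤ a) (hwb : w ≤ b) : w ≤ mu a b :=
  (isGLB_pair_iff.1 (hG a b)).2 w hwa hwb

lemma mu_comm (a b : α) : mu a b = mu b a :=
  (hG a b).unique (Set.pair_comm a b ▸ hG b a)

lemma D_core1 (p q₁ q₂ : α) (hq : q₁ ⋖ q₂) :
    mu p q₁ = ⊥ ∨ mu p q₁ = mu p q₂ ∨ mu p q₁ ⋖ mu p q₂ := by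
  by_cases h1 : p ≤ q₁
  · rw [mu_eq_left h1, mu_eq_left (h1.trans hq.le)]
    exact Or.inr (Or.inl rfl)
  by_cases h2 : q₁ ≤ p
  · rw [mu_eq_right h2]
    by_cases h3 : p ≤ q₂
    · have hq1p : q₁ < p := lt_of_le_of_ne h2 (fun e => h1 e.symm.le)
      have hpq2 : p = q₂ := by
        rcases lt_or_eq_of_le h3 with h | h
        · exact absurd h (fun h' => hq.2 hq1p h')
        · exact h
      rw [mu_eq_left h3, hpq2]
      exact Or.inr (Or.inr hq)
    · by_cases h4 : q₂ ≤ p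
      · rw [mu_eq_right h4]
        exact Or.inr (Or.inr hq)
      · have hle : q₁ ≤ mu p q₂ := le_mu hG h2 hq.le
        rw [mu_eq_bot h3 h4] at hle
        exact Or.inl (le_bot_iff.1 hle)
  · rw [mu_eq_bot h1 h2]
    exact Or.inl rfl

lemma D_core2 (p₁ p₂ q₁ q₂ : α) (hp : p₁ ⋖ p₂) (hq : q₁ ⋖ q₂) :
    mu p₁ q₁ = ⊥ ∨ mu p₁ q₁ = mu p₂ q₂ ∨ mu p₁ q₁ ⋖ mu p₂ q₂ := by
  by_cases h1 : p₁ ≤ q₁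
  · rw [mu_eq_left h1]
    by_cases h3 : p₂ ≤ q₂
    · rw [mu_eq_left h3]
      exact Or.inr (Or.inr hp)
    · by_cases h4 : q₂ ≤ p₂
      · rw [mu_eq_right h4]
        have hq1p2 : q₁ < p₂ := lt_of_lt_of_le hq.lt h4
        have he : p₁ = q₁ := by
          rcases lt_or_eq_of_le h1 with h | h
          · exact absurd hq1p2 (fun h' => hp.2 h h')
          · exact h
        rw [he]
        exact Or.inr (Or.inr hq)
      · have hle : p₁ ≤ mu p₂ q₂ := le_mu hG hp.le (h1.trans hq.le)
        rw [mu_eq_bot h3 h4] at hle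
        exact Or.inl (le_bot_iff.1 hle)
  by_cases h2 : q₁ ≤ p₁
  · rw [mu_eq_right h2]
    have hq1p1 : q₁ < p₁ := lt_of_le_of_ne h2 (fun e => h1 e.symm.le)
    by_cases h4 : q₂ ≤ p₂
    · rw [mu_eq_right h4]
      exact Or.inr (Or.inr hq)
    · by_cases h3 : p₂ ≤ q₂
      · exact absurd (hp.lt.trans_le h3) (fun h' => hq.2 hq1p1 h')
      · have hle : q₁ ≤ mu p₂ q₂ := le_mu hG (h2.trans hp.le) hq.le
        rw [mu_eq_bot h3 h4] at hle
        exact Or.inl (le_bot_iff.1 hle)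
  · rw [mu_eq_bot h1 h2]
    exact Or.inl rfl

lemma D_main {x₁ x₂ y₁ y₂ : α}
    (hx : x₁ = ⊥ ∨ x₁ = x₂ ∨ x₁ ⋖ x₂) (hy : y₁ = ⊥ ∨ y₁ = y₂ ∨ y₁ ⋖ y₂) :
    mu x₁ y₁ = ⊥ ∨ mu x₁ y₁ = mu x₂ y₂ ∨ mu x₁ y₁ ⋖ mu x₂ y₂ := by
  rcases hx with rfl | hx
  · exact Or.inl (mu_eq_left bot_le)
  rcases hy with rfl | hy
  · exact Or.inl (mu_eq_right bot_le)
  rcases hx with rfl | hx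
  · rcases hy with rfl | hy
    · exact Or.inr (Or.inl rfl)
    · exact D_core1 hG _ _ _ hy
  · rcases hy with rfl | hy
    · rw [mu_comm hG x₁ y₁, mu_comm hG x₂ y₁]
      exact D_core1 hG _ _ _ hx
    · exact D_core2 hG _ _ _ _ hx hy

end Mu

lemma mcover_le_iff {m : ℕ} (u v : MCover α m) : u ≤ v ↔ ∀ i, u.1 i ≤ v.1 i :=
  Iff.rfl

lemma mcover_glb [Fintype α] (hG : ∀ a b : α, IsGLB {a, b} (mu a b)) {m : ℕ}
    (u v : MCover α m) :
    ∃ w : MCover α m, IsGLB {u, v} w := by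
  have hu := (isMCoverTuple_iff u.1).1 u.2
  have hv := (isMCoverTuple_iff v.1).1 v.2
  have hz : IsMCoverTuple m (fun i => mu (u.1 i) (v.1 i)) := by
    refine (isMCoverTuple_iff _).2 ⟨hu.1, fun i j hij => ?_⟩
    exact D_main hG (hu.2 i j hij) (hv.2 i j hij)
  refine ⟨⟨_, hz⟩, isGLB_pair_iff.2 ⟨⟨?_, ?_⟩, ?_⟩⟩
  · exact fun i => mu_le_left _ _
  · exact fun i => mu_le_right _ _
  · exact fun w hwu hwv i => le_mu hG (hwu i) (hwv i)

/-- In a finite poset, nonempty "list-described" sets have GLBs given pairwise GLBs. -/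
lemma list_glb {β : Type*} [PartialOrder β]
    (hglb : ∀ a b : β, ∃ c, IsGLB {a, b} c) (x : β) (l : List β) :
    ∃ c, IsGLB (insert x {y | y ∈ l}) c := by
  induction l with
  | nil => exact ⟨x, by simpa using isGLB_singleton⟩
  | cons a l ih =>
    obtain ⟨c, hc⟩ := ih
    obtain ⟨d, hd⟩ := hglb a c
    rw [isGLB_pair_iff] at hd
    refine ⟨d, ?_⟩
    have hset : insert x {y | y ∈ a :: l} = insert a (insert x {y | y ∈ l}) := by
      ext y
      simp [List.mem_cons]
      tauto
    rw [hset]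
    constructor
    · rintro y (rfl | hy)
      · exact hd.1.1
      · exact (hd.1.2).trans (hc.1 hy)
    · intro w hw
      refine hd.2 w (hw (by simp)) (hc.2 fun y hy => hw (Set.mem_insert_of_mem _ hy))

lemma exists_lub_of_glb {β : Type*} [PartialOrder β] [Finite β]
    (hglb : ∀ a b : β, ∃ c, IsGLB {a, b} c)
    (htop : ∀ a b : β, ∃ t, a ≤ t ∧ b ≤ t) :
    ∀ a b : β, ∃ c, IsLUB {a, b} c := by
  classical
  intro a b
  obtain ⟨t, hta, htb⟩ := htop a b
  have : Fintype β := Fintype.ofFinite β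
  set l := Finset.univ.toList.filter (fun x => decide (a ≤ x ∧ b ≤ x)) with hl
  obtain ⟨c, hc⟩ := list_glb hglb t l
  have hset : insert t {y | y ∈ l} = upperBounds {a, b} := by
    ext y
    simp only [Set.mem_insert_iff, Set.mem_setOf_eq, hl, List.mem_filter,
      Finset.mem_toList, Finset.mem_univ, true_and, decide_eq_true_eq]
    constructor
    · rintro (rfl | ⟨h1, h2⟩)
      · rintro z (rfl | rfl) <;> assumption
      · rintro z (rfl | rfl)
        · exact h1
        · exact h2
    · intro h
      exact Or.inr ⟨h (by simp), h (by simp)⟩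
  rw [hset] at hc
  refine ⟨c, ?_, fun w hw => hc.1 hw⟩
  rintro z (rfl | rfl)
  · exact hc.2 fun y hy => hy (by simp)
  · exact hc.2 fun y hy => hy (by simp)

/-- constant tuples are cover tuples (given some cover exists) -/
lemma const_mcover [Fintype α] (hcov : ∃ p q : α, p ⋖ q) (m : ℕ) (a : α) :
    IsMCoverTuple m (fun _ => a) :=
  (isMCoverTuple_iff _).2 ⟨hcov, fun _ _ _ => Or.inr (Or.inl rfl)⟩

/-- two-entry tuples -/
lemma pair_mcover [Fintype α] (hcov : ∃ p q : α, p ⋖ q) {x y : α} (h : x = y ∨ x ⋖ y) :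
    IsMCoverTuple 2 ![x, y] := by
  refine (isMCoverTuple_iff _).2 ⟨hcov, fun i j hij => ?_⟩
  fin_cases i <;> fin_cases j
  · exact Or.inr (Or.inl rfl)
  · simpa using Or.inr h
  · exact absurd hij (by decide)
  · exact Or.inr (Or.inl rfl)

end Helpers

section MainAux

variable {α : Type*} [Fintype α] [PartialOrder α] [OrderBot α]

lemma pair_le {x y x' y' : α} (hx : x ≤ x') (hy : y ≤ y') :
    (![x, y] : Fin 2 → α) ≤ ![x', y'] := by
  intro i
  fin_cases i <;> simpa

lemma forward_dir [OrderTop α] (h : ∀ m : ℕ, 0 < m → IsLatticeOrder (MCover α m)) :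
    (∀ a b : α, ∃ c, IsLUB {a, b} c) ∧
      (∀ a b : α, ∃ c, IsGLB {a, b} c ∧ (c = ⊥ ∨ c = a ∨ c = b)) := by
  by_cases hcov : ∃ p q : α, p ⋖ q
  · have h1 : (∀ a b : MCover α 1, ∃ c, IsLUB {a, b} c) ∧
        (∀ a b : MCover α 1, ∃ c, IsGLB {a, b} c) := h 1 one_pos
    have h2 : (∀ a b : MCover α 2, ∃ c, IsLUB {a, b} c) ∧
        (∀ a b : MCover α 2, ∃ c, IsGLB {a, b} c) := h 2 (by norm_num)
    obtain ⟨hL1, hG1⟩ := h1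
    obtain ⟨hL2, -⟩ := h2
    have hconst1 : ∀ a : α, IsMCoverTuple 1 (fun _ => a) := fun a => const_mcover hcov 1 a
    -- α has all LUBs
    have hLUBα : ∀ a b : α, ∃ c, IsLUB {a, b} c := by
      intro a b
      obtain ⟨c, hc⟩ := hL1 ⟨fun _ => a, hconst1 a⟩ ⟨fun _ => b, hconst1 b⟩
      rw [isLUB_pair_iff] at hc
      refine ⟨c.1 0, isLUB_pair_iff.2 ⟨⟨(mcover_le_iff _ _).1 hc.1.1 0,
        (mcover_le_iff _ _).1 hc.1.2 0⟩, fun w hwa hwb => ?_⟩⟩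
      have := hc.2 ⟨fun _ => w, hconst1 w⟩ (fun _ => hwa) (fun _ => hwb)
      exact (mcover_le_iff _ _).1 this 0
    -- α has all GLBs
    have hGLBα : ∀ a b : α, ∃ c, IsGLB {a, b} c := by
      intro a b
      obtain ⟨c, hc⟩ := hG1 ⟨fun _ => a, hconst1 a⟩ ⟨fun _ => b, hconst1 b⟩
      rw [isGLB_pair_iff] at hc
      refine ⟨c.1 0, isGLB_pair_iff.2 ⟨⟨(mcover_le_iff _ _).1 hc.1.1 0,
        (mcover_le_iff _ _).1 hc.1.2 0⟩, fun w hwa hwb => ?_⟩⟩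
      have := hc.2 ⟨fun _ => w, hconst1 w⟩ (fun _ => hwa) (fun _ => hwb)
      exact (mcover_le_iff _ _).1 this 0
    refine ⟨hLUBα, fun a b => ?_⟩
    obtain ⟨c, hc⟩ := hGLBα a b
    obtain ⟨⟨hca, hcb⟩, hcglb⟩ := isGLB_pair_iff.1 hc
    by_cases hab : a ≤ b
    · exact ⟨c, hc, Or.inr (Or.inl (hc.unique
        (isGLB_pair_iff.2 ⟨⟨le_rfl, hab⟩, fun w hw _ => hw⟩)))⟩
    by_cases hba : b ≤ a
    · exact ⟨c, hc, Or.inr (Or.inr (hc.unique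
        (isGLB_pair_iff.2 ⟨⟨hba, le_rfl⟩, fun w _ hw => hw⟩)))⟩
    refine ⟨c, hc, Or.inl ?_⟩
    by_contra hcbot
    have hclta : c < a := lt_of_le_of_ne hca (fun e => hab (e ▸ hcb))
    have hcltb : c < b := lt_of_le_of_ne hcb (fun e => hba (e ▸ hca))
    obtain ⟨a₂, hca₂, ha₂a⟩ := exists_covBy_le_of_lt hclta
    obtain ⟨b₂, hcb₂, hb₂b⟩ := exists_covBy_le_of_lt hcltb
    obtain ⟨s, hs⟩ := hLUBα a₂ b₂
    obtain ⟨⟨ha₂s, hb₂s⟩, hsl⟩ := isLUB_pair_iff.1 hs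
    have ha₂s' : a₂ < s := by
      rcases lt_or_eq_of_le ha₂s with hlt | he
      · exact hlt
      · exact absurd (hcglb b₂ ((le_of_le_of_eq hb₂s he.symm).trans ha₂a) hb₂b)
          (not_le_of_gt hcb₂.lt)
    have hb₂s' : b₂ < s := by
      rcases lt_or_eq_of_le hb₂s with hlt | he
      · exact hlt
      · exact absurd (hcglb a₂ ha₂a ((le_of_le_of_eq ha₂s he.symm).trans hb₂b))
          (not_le_of_gt hca₂.lt)
    obtain ⟨xa, ha₂xa, hxas⟩ := exists_le_covBy_of_lt ha₂s'
    obtain ⟨xb, hb₂xb, hxbs⟩ := exists_le_covBy_of_lt hb₂s'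
    have hxab : xa ≠ xb := by
      rintro rfl
      exact absurd (hsl xa ha₂xa hb₂xb) (not_le_of_gt hxas.lt)
    have hu : IsMCoverTuple 2 ![c, a₂] := pair_mcover hcov (Or.inr hca₂)
    have hv : IsMCoverTuple 2 ![c, b₂] := pair_mcover hcov (Or.inr hcb₂)
    obtain ⟨w, hw⟩ := hL2 ⟨_, hu⟩ ⟨_, hv⟩
    obtain ⟨⟨hwu, hwv⟩, hwl⟩ := isLUB_pair_iff.1 hw
    have hcw1 : c ≤ w.1 0 := by simpa using (mcover_le_iff _ _).1 hwu 0
    have ha₂w : a₂ ≤ w.1 1 := by simpa using (mcover_le_iff _ _).1 hwu 1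
    have hb₂w : b₂ ≤ w.1 1 := by simpa using (mcover_le_iff _ _).1 hwv 1
    have hsw2 : s ≤ w.1 1 := hsl _ ha₂w hb₂w
    have hsconst : (fun (_ : Fin 2) => s) = ![s, s] := by
      funext i
      fin_cases i <;> simp
    have hwss := hwl ⟨![s, s], hsconst ▸ const_mcover hcov 2 s⟩
      (pair_le (hca₂.le.trans ha₂s) ha₂s) (pair_le (hcb₂.le.trans hb₂s) hb₂s)
    have hw2 : w.1 1 = s := le_antisymm (by simpa using (mcover_le_iff _ _).1 hwss 1) hsw2
    have hxa_t : IsMCoverTuple 2 ![xa, s] := pair_mcover hcov (Or.inr hxas)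
    have hxb_t : IsMCoverTuple 2 ![xb, s] := pair_mcover hcov (Or.inr hxbs)
    have hcxa : c ≤ xa := hca₂.le.trans ha₂xa
    have hcxb : c ≤ xb := hcb₂.le.trans hb₂xb
    have h1xa := hwl ⟨![xa, s], hxa_t⟩ (pair_le hcxa ha₂s) (pair_le hcxa hb₂s)
    have h1xb := hwl ⟨![xb, s], hxb_t⟩ (pair_le hcxb ha₂s) (pair_le hcxb hb₂s)
    have hwxa : w.1 0 ≤ xa := by simpa using (mcover_le_iff _ _).1 h1xa 0
    have hwxb : w.1 0 ≤ xb := by simpa using (mcover_le_iff _ _).1 h1xb 0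
    rcases ((isMCoverTuple_iff w.1).1 w.2).2 0 1 (by decide) with hsh | hsh | hsh
    · rw [hsh] at hcw1
      exact hcbot (le_bot_iff.1 hcw1)
    · have : s ≤ xa := by
        rw [← hw2, ← hsh]
        exact hwxa
      exact absurd this (not_le_of_gt hxas.lt)
    · rw [hw2] at hsh
      have e1 : w.1 0 = xa := by
        rcases lt_or_eq_of_le hwxa with hlt | he
        · exact absurd hxas.lt (hsh.2 hlt)
        · exact he
      have e2 : w.1 0 = xb := by
        rcases lt_or_eq_of_le hwxb with hlt | he
        · exact absurd hxbs.lt (hsh.2 hlt)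
        · exact he
      exact hxab (e1.symm.trans e2)
  · -- no covers: α is trivial
    have hall : ∀ a : α, a = ⊥ := by
      intro a
      by_contra ha
      obtain ⟨x, hx, -⟩ := exists_covBy_le_of_lt (bot_lt_iff_ne_bot.2 ha)
      exact hcov ⟨⊥, x, hx⟩
    constructor
    · intro a b
      refine ⟨a, isLUB_pair_iff.2 ⟨⟨le_rfl, ?_⟩, fun w hw _ => hw⟩⟩
      rw [hall a, hall b]
    · intro a b
      refine ⟨a, isGLB_pair_iff.2 ⟨⟨le_rfl, ?_⟩, fun w hw _ => hw⟩, Or.inl (hall a)⟩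
      rw [hall b, hall a]

end MainAux

/-- The m-cover poset `P^⟨m⟩` is a lattice for every `m > 0` if and only if `P` is a
lattice in which the meet of any two elements belongs to `{⊥, p, q}`. -/
theorem stmt_0 {α : Type*} [Fintype α] [PartialOrder α] [BoundedOrder α] :
    (∀ m : ℕ, 0 < m → IsLatticeOrder (MCover α m)) ↔
      ((∀ a b : α, ∃ c, IsLUB {a, b} c) ∧
        (∀ a b : α, ∃ c, IsGLB {a, b} c ∧ (c = ⊥ ∨ c = a ∨ c = b))) := by
  constructor
  · exact forward_dir
  · rintro ⟨hLUB, hGLB⟩ m hm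
    have hG : ∀ a b : α, IsGLB {a, b} (mu a b) := by
      intro a b
      obtain ⟨c, hc, hmem⟩ := hGLB a b
      by_cases h1 : a ≤ b
      · rw [mu_eq_left h1]
        exact isGLB_pair_iff.2 ⟨⟨le_rfl, h1⟩, fun w hwa _ => hwa⟩
      by_cases h2 : b ≤ a
      · rw [mu_eq_right h2]
        exact isGLB_pair_iff.2 ⟨⟨h2, le_rfl⟩, fun w _ hwb => hwb⟩
      · rw [mu_eq_bot h1 h2]
        rcases hmem with rfl | rfl | rfl
        · exact hc
        · exact absurd ((isGLB_pair_iff.1 hc).1.2) h1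
        · exact absurd ((isGLB_pair_iff.1 hc).1.1) h2
    refine ⟨?_, fun u v => mcover_glb hG u v⟩
    apply exists_lub_of_glb (fun u v => mcover_glb hG u v)
    intro u v
    have hcov := ((isMCoverTuple_iff u.1).1 u.2).1
    exact ⟨⟨fun _ => ⊤, const_mcover hcov m ⊤⟩, fun i => le_top, fun i => le_top⟩
end

section
/- Let P be a finite bounded poset and let m > 0 be an integer. Then ℓ(P^⟨m⟩) = m·ℓ(P), where ℓ denotes the length of a finite bounded poset, i.e., the maximum length of a chain from its least to its greatest element. -/
/-- An element is join-irreducible: non-minimal with exactly one lower cover. -/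
def JoinIrred {β : Type*} [PartialOrder β] (x : β) : Prop :=
  (∃ y, y < x) ∧ ∃! y, y ⋖ x

/-- An element is meet-irreducible: non-maximal with exactly one upper cover. -/
def MeetIrred {β : Type*} [PartialOrder β] (x : β) : Prop :=
  (∃ y, x < y) ∧ ∃! y, x ⋖ y

/-- The length of a bounded poset: the maximum length of a chain from the least element
to the greatest element. -/
noncomputable def posetLength (β : Type*) [PartialOrder β] : ℕ :=
  sSup {n : ℕ | ∃ f : Fin (n + 1) → β, StrictMono f ∧ IsBot (f 0) ∧ IsTop (f (Fin.last n))}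

/-- A bounded poset is extremal if its numbers of join-irreducible and of meet-irreducible
elements both equal its length. -/
def Extremal (β : Type*) [PartialOrder β] : Prop :=
  Nat.card {x : β // JoinIrred x} = posetLength β ∧
  Nat.card {x : β // MeetIrred x} = posetLength β

section Mc5Aux

variable {α : Type*} [PartialOrder α]

lemma mc5_strictMono_snoc {n : ℕ} {f : Fin (n + 1) → α} (hf : StrictMono f) {q : α}
    (hq : f (Fin.last n) < q) : StrictMono (Fin.snoc f q : Fin (n + 2) → α) := by
  rw [Fin.strictMono_iff_lt_succ]
  intro i
  induction i using Fin.lastCases with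
  | last =>
      rw [Fin.succ_last, Fin.snoc_last, Fin.snoc_castSucc]
      exact hq
  | cast j =>
      rw [Fin.succ_castSucc, Fin.snoc_castSucc, Fin.snoc_castSucc]
      exact hf (Fin.castSucc_lt_succ : j.castSucc < j.succ)

lemma mc5_snoc_zero {n : ℕ} (f : Fin (n + 1) → α) (q : α) :
    (Fin.snoc f q : Fin (n + 2) → α) 0 = f 0 := by
  have h := Fin.snoc_castSucc (α := fun _ : Fin (n + 2) => α) q f 0
  simpa using h

end Mc5Aux

section Mc5Ht

variable {α : Type*} [Fintype α] [PartialOrder α] [BoundedOrder α]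

/-- The set of lengths of chains from `⊥` to `p`. -/
def mc5Set (p : α) : Set ℕ :=
  {n | ∃ f : Fin (n + 1) → α, StrictMono f ∧ f 0 = ⊥ ∧ f (Fin.last n) = p}

/-- Height of `p`: maximal length of a chain from `⊥` to `p`. -/
noncomputable def mc5Ht (p : α) : ℕ := sSup (mc5Set p)

lemma mc5Set_nonempty (p : α) : (mc5Set p).Nonempty := by
  rcases eq_or_lt_of_le (bot_le : (⊥ : α) ≤ p) with h | h
  · exact ⟨0, fun _ => p, fun a b hab => absurd hab ((by decide : ∀ a b : Fin 1, ¬a < b) a b),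
      h.symm, rfl⟩
  · refine ⟨1, fun i => if (i : ℕ) = 0 then ⊥ else p, ?_, by simp, by simp [Fin.last]⟩
    rw [Fin.strictMono_iff_lt_succ]
    intro i
    fin_cases i
    simpa using h

lemma mc5Set_bddAbove (p : α) : BddAbove (mc5Set p) := by
  refine ⟨Fintype.card α, ?_⟩
  rintro n ⟨f, hf, -, -⟩
  have h := Fintype.card_le_of_injective f hf.injective
  simp only [Fintype.card_fin] at h
  omega

lemma mc5Ht_mem (p : α) : mc5Ht p ∈ mc5Set p :=
  Nat.sSup_mem (mc5Set_nonempty p) (mc5Set_bddAbove p)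

lemma mc5_le_ht {p : α} {n : ℕ} (h : n ∈ mc5Set p) : n ≤ mc5Ht p :=
  le_csSup (mc5Set_bddAbove p) h

lemma mc5Ht_lt {p q : α} (h : p < q) : mc5Ht p < mc5Ht q := by
  obtain ⟨f, hf, h0, hl⟩ := mc5Ht_mem p
  have hmem : mc5Ht p + 1 ∈ mc5Set q := by
    refine ⟨Fin.snoc f q, mc5_strictMono_snoc hf (show f (Fin.last _) < q by rw [hl]; exact h),
      ?_, Fin.snoc_last ..⟩
    rw [mc5_snoc_zero]; exact h0
  exact lt_of_lt_of_le (Nat.lt_succ_self _) (mc5_le_ht hmem)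

lemma mc5Ht_mono : Monotone (mc5Ht (α := α)) := fun p q h =>
  h.lt_or_eq.elim (fun h' => (mc5Ht_lt h').le) (fun h' => h' ▸ le_rfl)

lemma mc5Ht_bot : mc5Ht (⊥ : α) = 0 := by
  by_contra h
  obtain ⟨f, hf, h0, hl⟩ := mc5Ht_mem (⊥ : α)
  have hpos : 0 < mc5Ht (⊥ : α) := Nat.pos_of_ne_zero h
  have hlt : f 0 < f (Fin.last _) := hf (by simp [Fin.lt_def]; omega)
  rw [h0, hl] at hlt
  exact lt_irrefl _ hlt

lemma mc5Ht_top : mc5Ht (⊤ : α) = posetLength α := by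
  unfold posetLength mc5Ht mc5Set
  congr 1
  ext n
  constructor
  · rintro ⟨f, hf, h0, hl⟩
    exact ⟨f, hf, h0 ▸ isBot_bot, hl ▸ isTop_top⟩
  · rintro ⟨f, hf, h0, hl⟩
    exact ⟨f, hf, h0.eq_bot, hl.eq_top⟩

lemma mc5_exists_covChain : ∀ (n : ℕ) (p : α), mc5Ht p = n →
    ∃ f : Fin (n + 1) → α, (∀ i : Fin n, f i.castSucc ⋖ f i.succ) ∧
      f 0 = ⊥ ∧ f (Fin.last n) = p := by
  intro n
  induction n with
  | zero =>
      intro p hp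
      have hpb : p = ⊥ := by
        by_contra hne
        have hlt : (⊥ : α) < p := bot_le.lt_of_ne (Ne.symm hne)
        have h2 := mc5Ht_lt hlt
        rw [mc5Ht_bot, hp] at h2
        exact absurd h2 (lt_irrefl 0)
      exact ⟨fun _ => ⊥, fun i => i.elim0, rfl, by rw [hpb]⟩
  | succ n ih =>
      intro p hp
      have hm := mc5Ht_mem p
      rw [hp] at hm
      obtain ⟨g, hg, hg0, hgl⟩ := hm
      have hq'p : g (Fin.castSucc (Fin.last n)) < p := hgl ▸ hg (Fin.castSucc_lt_last _)
      obtain ⟨q, hq'q, hqp⟩ := exists_le_covBy_of_lt hq'p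
      have hq'ht : n ≤ mc5Ht (g (Fin.castSucc (Fin.last n))) := by
        refine mc5_le_ht ⟨g ∘ Fin.castSucc, hg.comp Fin.strictMono_castSucc, ?_, rfl⟩
        simpa using hg0
      have hqn : mc5Ht q = n := by
        have h1 : mc5Ht (g (Fin.castSucc (Fin.last n))) ≤ mc5Ht q := mc5Ht_mono hq'q
        have h2 : mc5Ht q < mc5Ht p := mc5Ht_lt hqp.lt
        omega
      obtain ⟨f', hf', hf'0, hf'l⟩ := ih q hqn
      refine ⟨Fin.snoc f' p, ?_, ?_, Fin.snoc_last ..⟩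
      · intro i
        induction i using Fin.lastCases with
        | last =>
            rw [Fin.succ_last, Fin.snoc_last, Fin.snoc_castSucc, hf'l]
            exact hqp
        | cast j =>
            rw [Fin.succ_castSucc, Fin.snoc_castSucc, Fin.snoc_castSucc]
            exact hf' j
      · rw [mc5_snoc_zero]; exact hf'0

end Mc5Ht

/-- The length of the m-cover poset is `m` times the length of `P`. -/
theorem stmt_5 {α : Type*} [Fintype α] [PartialOrder α] [BoundedOrder α]
    (m : ℕ) (hm : 0 < m) :
    posetLength (MCover α m) = m * posetLength α := by
  rcases eq_or_lt_of_le (bot_le : (⊥ : α) ≤ ⊤) with hbt | hbt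
  · -- degenerate case: `⊥ = ⊤`
    have hα : posetLength α = 0 := by
      unfold posetLength
      refine le_antisymm (csSup_le ⟨0, ?_⟩ ?_) (Nat.zero_le _)
      · refine ⟨fun _ => ⊥, fun a b hab => absurd hab ((by decide : ∀ a b : Fin 1, ¬a < b) a b),
          isBot_bot, fun b => le_top.trans hbt.ge⟩
      · rintro n ⟨f, hf, h0, hl⟩
        by_contra hn
        have hlt : f 0 < f (Fin.last n) := hf (by simp [Fin.lt_def]; omega)
        rw [h0.eq_bot, hl.eq_top, ← hbt] at hlt
        exact lt_irrefl _ hlt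
    rw [hα, mul_zero]
    have hS : {n : ℕ | ∃ f : Fin (n + 1) → MCover α m,
        StrictMono f ∧ IsBot (f 0) ∧ IsTop (f (Fin.last n))} = ∅ := by
      rw [Set.eq_empty_iff_forall_notMem]
      rintro n ⟨f, -, -, -⟩
      obtain ⟨l₀, l₁, l₂, p₁, p₂, hsum, hcov, hform⟩ := (f 0).2
      have hcontra : p₁ < p₁ := hcov.lt.trans_le ((le_top.trans hbt.ge).trans bot_le)
      exact lt_irrefl _ hcontra
    unfold posetLength
    rw [hS, csSup_empty]
    rfl
  · -- nontrivial case
    set L := posetLength α with hLdef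
    have hLt : mc5Ht (⊤ : α) = L := mc5Ht_top
    have hL1 : 1 ≤ L := by
      have h := mc5Ht_lt hbt
      rw [mc5Ht_bot, hLt] at h
      omega
    obtain ⟨c, hcc, hc0, hcl⟩ := mc5_exists_covChain L ⊤ hLt
    have hcmono : StrictMono c := Fin.strictMono_iff_lt_succ.mpr fun i => (hcc i).lt
    set cc : ℕ → α := fun n => c ⟨min n L, by omega⟩ with hccdef
    have cc_mono : Monotone cc := fun a b hab =>
      hcmono.monotone (by simp only [Fin.mk_le_mk]; omega)
    have cc_eq : ∀ {n : ℕ} (h : n ≤ L), cc n = c ⟨n, by omega⟩ := by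
      intro n h
      simp only [hccdef]
      exact congrArg c (Fin.ext (by simp; omega))
    have cc_lt : ∀ {k : ℕ}, k < L → cc k ⋖ cc (k + 1) := by
      intro k hk
      rw [cc_eq hk.le, cc_eq (by omega : k + 1 ≤ L)]
      exact hcc ⟨k, hk⟩
    have cc0 : cc 0 = ⊥ := by
      rw [cc_eq (Nat.zero_le L)]
      rw [show (⟨0, by omega⟩ : Fin (L + 1)) = 0 from Fin.ext (by simp)]
      exact hc0
    have ccL : ∀ {n : ℕ}, L ≤ n → cc n = ⊤ := by
      intro n h
      simp only [hccdef]
      rw [show (⟨min n L, by omega⟩ : Fin (L + 1)) = Fin.last L from Fin.ext (by simp; omega)]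
      exact hcl
    set dval : ℕ → Fin m → α :=
      fun i j => if (j : ℕ) + i % m < m then cc (i / m) else cc (i / m + 1) with hdval
    -- generic facts about two-block tuples
    have keyTuple : ∀ t k : ℕ, t < m → k < L →
        IsMCoverTuple m (fun j : Fin m => if (j : ℕ) + t < m then cc k else cc (k + 1)) := by
      intro t k htm hkL
      refine ⟨0, m - t, t, cc k, cc (k + 1), by omega, cc_lt hkL, fun j => ?_⟩
      dsimp only
      have hj := j.isLt
      split_ifs <;> first | rfl | (exfalso; omega)
    have keyLt : ∀ t k : ℕ, t < m → k < L →
        (fun j : Fin m => if (j : ℕ) + t < m then cc k else cc (k + 1)) <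
        (fun j : Fin m => if (j : ℕ) + (t + 1) < m then cc k else cc (k + 1)) := by
      intro t k htm hkL
      rw [Pi.lt_def]
      constructor
      · intro j
        dsimp only
        split_ifs <;> first | exact cc_mono (by omega) | (exfalso; omega)
      · refine ⟨⟨m - 1 - t, by omega⟩, ?_⟩
        dsimp only
        rw [if_pos (show m - 1 - t + t < m by omega),
          if_neg (show ¬(m - 1 - t + (t + 1) < m) by omega)]
        exact (cc_lt hkL).lt
    -- basic div/mod facts
    have hdiv : ∀ i : ℕ, i < m * L → i / m < L := by
      intro i hi
      exact (Nat.div_lt_iff_lt_mul hm).2 (by rw [Nat.mul_comm]; exact hi)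
    -- membership
    have hmem : ∀ i : ℕ, i ≤ m * L → IsMCoverTuple m (dval i) := by
      intro i hi
      by_cases hk : i / m < L
      · have htm : i % m < m := Nat.mod_lt _ hm
        simpa only [hdval] using keyTuple (i % m) (i / m) htm hk
      · have hiL : i = m * L := by
          refine le_antisymm hi ?_
          rw [Nat.mul_comm]
          exact le_of_not_gt fun h => hk ((Nat.div_lt_iff_lt_mul hm).2 h)
        have ht0 : i % m = 0 := by rw [hiL]; exact Nat.mul_mod_right m L
        have hk0 : i / m = L := by rw [hiL]; exact Nat.mul_div_cancel_left L hm
        refine ⟨0, 0, m, c ⟨L - 1, by omega⟩, ⊤, by omega, ?_, ?_⟩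
        · have h5 := hcc ⟨L - 1, by omega⟩
          rw [show ((⟨L - 1, by omega⟩ : Fin L)).succ = Fin.last L from Fin.ext (by simp; omega),
            hcl] at h5
          exact h5
        · intro j
          have hv : dval i j = ⊤ := by
            simp only [hdval, ht0, hk0]
            rw [if_pos (show (j : ℕ) + 0 < m by have := j.isLt; omega)]
            exact ccL le_rfl
          rw [hv]
          simp
    -- the chain in the m-cover poset
    set d : Fin (m * L + 1) → MCover α m :=
      fun i => ⟨dval i.val, hmem i.val (by have := i.isLt; omega)⟩ with hd
    have keyStep : ∀ i : ℕ, i < m * L → dval i < dval (i + 1) := by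
      intro i hiv
      have htm : i % m < m := Nat.mod_lt _ hm
      have hkL : i / m < L := hdiv i hiv
      have hsplit : m * (i / m) + i % m = i := Nat.div_add_mod i m
      by_cases hts : i % m + 1 < m
      · have hd1 : (i + 1) / m = i / m := by
          conv_lhs => rw [← hsplit]
          rw [Nat.add_assoc, Nat.mul_add_div hm, Nat.div_eq_of_lt hts, Nat.add_zero]
        have hd2 : (i + 1) % m = i % m + 1 := by
          conv_lhs => rw [← hsplit]
          rw [Nat.add_assoc, Nat.mul_add_mod, Nat.mod_eq_of_lt hts]
        simp only [hdval, hd1, hd2]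
        exact keyLt (i % m) (i / m) htm hkL
      · have htm1 : i % m + 1 = m := by omega
        have e1 : i + 1 = m * (i / m + 1) := by
          rw [Nat.mul_succ]
          conv_lhs => rw [← hsplit]
          rw [Nat.add_assoc, htm1]
        have hd1 : (i + 1) / m = i / m + 1 := by
          rw [e1]; exact Nat.mul_div_cancel_left _ hm
        have hd2 : (i + 1) % m = 0 := by rw [e1]; exact Nat.mul_mod_right _ _
        simp only [hdval, hd1, hd2]
        have hrw : (fun j : Fin m => if (j : ℕ) + 0 < m then cc (i / m + 1) else cc (i / m + 1 + 1))
            = fun j : Fin m => if (j : ℕ) + (i % m + 1) < m then cc (i / m) else cc (i / m + 1) := by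
          funext j
          rw [if_pos (show (j : ℕ) + 0 < m by have := j.isLt; omega),
            if_neg (show ¬((j : ℕ) + (i % m + 1) < m) by omega)]
        rw [hrw]
        exact keyLt (i % m) (i / m) htm hkL
    have hdmono : StrictMono d := by
      rw [Fin.strictMono_iff_lt_succ]
      intro i
      have hiv : i.val < m * L := i.isLt
      simp only [hd]
      rw [Subtype.mk_lt_mk]
      show dval i.val < dval (i.val + 1)
      exact keyStep i.val hiv
    have hd0 : ∀ j : Fin m, (d 0).1 j = ⊥ := by
      intro j
      show dval ((0 : Fin (m * L + 1)) : ℕ) j = ⊥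
      simp only [Fin.val_zero, hdval, Nat.zero_mod, Nat.zero_div]
      rw [if_pos (show (j : ℕ) + 0 < m by have := j.isLt; omega)]
      exact cc0
    have hdtop : ∀ j : Fin m, (d (Fin.last (m * L))).1 j = ⊤ := by
      intro j
      show dval ((Fin.last (m * L)) : ℕ) j = ⊤
      simp only [Fin.val_last, hdval]
      rw [Nat.mul_mod_right, Nat.mul_div_cancel_left _ hm]
      rw [if_pos (show (j : ℕ) + 0 < m by have := j.isLt; omega)]
      exact ccL le_rfl
    have hbot : IsBot (d 0) := by
      intro g
      rw [← Subtype.coe_le_coe]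
      intro j
      rw [hd0 j]
      exact bot_le
    have htop : IsTop (d (Fin.last (m * L))) := by
      intro g
      rw [← Subtype.coe_le_coe]
      intro j
      rw [hdtop j]
      exact le_top
    have hmemL : m * L ∈ {n : ℕ | ∃ f : Fin (n + 1) → MCover α m,
        StrictMono f ∧ IsBot (f 0) ∧ IsTop (f (Fin.last n))} := ⟨d, hdmono, hbot, htop⟩
    have hbddM : BddAbove {n : ℕ | ∃ f : Fin (n + 1) → MCover α m,
        StrictMono f ∧ IsBot (f 0) ∧ IsTop (f (Fin.last n))} := by
      refine ⟨Nat.card (MCover α m), ?_⟩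
      rintro n ⟨f, hf, -, -⟩
      have h1 : Nat.card (Fin (n + 1)) ≤ Nat.card (MCover α m) :=
        Nat.card_le_card_of_injective f hf.injective
      rw [Nat.card_eq_fintype_card, Fintype.card_fin] at h1
      omega
    have hub : ∀ n ∈ {n : ℕ | ∃ f : Fin (n + 1) → MCover α m,
        StrictMono f ∧ IsBot (f 0) ∧ IsTop (f (Fin.last n))}, n ≤ m * L := by
      rintro n ⟨f, hf, hb, ht'⟩
      set H : MCover α m → ℕ := fun g => ∑ j : Fin m, mc5Ht (g.1 j) with hH
      have hHmono : StrictMono (H ∘ f) := by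
        intro a b hab
        have hfab := hf hab
        rw [← Subtype.coe_lt_coe, Pi.lt_def] at hfab
        obtain ⟨hle, j, hj⟩ := hfab
        exact Finset.sum_lt_sum (fun j _ => mc5Ht_mono (hle j))
          ⟨j, Finset.mem_univ j, mc5Ht_lt hj⟩
      have key : ∀ i : Fin (n + 1), (H ∘ f) 0 + i.val ≤ (H ∘ f) i := by
        intro i
        induction i using Fin.induction with
        | zero => simp
        | succ j ihj =>
            have h2 := hHmono (Fin.castSucc_lt_succ : j.castSucc < j.succ)
            have hv : (j.succ : ℕ) = (j.castSucc : ℕ) + 1 := by simp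
            omega
      have hlast := key (Fin.last n)
      simp only [Function.comp_apply, Fin.val_last] at hlast
      have hf0 : H (f 0) = 0 := by
        have hz : ∀ j : Fin m, (f 0).1 j = ⊥ := by
          intro j
          refine le_antisymm ?_ bot_le
          have h3 := hb (d 0)
          rw [← Subtype.coe_le_coe] at h3
          have h4 := h3 j
          rw [hd0 j] at h4
          exact h4
        simp [hH, hz, mc5Ht_bot]
      have hfl : H (f (Fin.last n)) = m * L := by
        have hz : ∀ j : Fin m, (f (Fin.last n)).1 j = ⊤ := by
          intro j
          refine le_antisymm le_top ?_
          have h3 := ht' (d (Fin.last (m * L)))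
          rw [← Subtype.coe_le_coe] at h3
          have h4 := h3 j
          rw [hdtop j] at h4
          exact h4
        simp only [hH, hz, hLt]
        rw [Finset.sum_const, Finset.card_univ, Fintype.card_fin, smul_eq_mul]
      omega
    show posetLength (MCover α m) = m * L
    unfold posetLength
    exact le_antisymm (csSup_le ⟨m * L, hmemL⟩ hub) (le_csSup hbddM hmemL)
end

section
/- Let P be a finite bounded poset and let m > 0 be an integer. The join-irreducible elements of the m-cover poset P^⟨m⟩ are exactly the tuples (0̂^l, p^{m−l}) with p ∈ J(P) and 0 ≤ l < m. -/
namespace MCoverAux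

variable {α : Type*} [PartialOrder α] [OrderBot α] {m : ℕ}

/-- The standard three-block tuple. -/
def F (m l₀ l₁ : ℕ) (p₁ p₂ : α) : Fin m → α :=
  fun i => if (i : ℕ) < l₀ then ⊥ else if (i : ℕ) < l₀ + l₁ then p₁ else p₂

lemma memF {l₀ l₁ : ℕ} {p₁ p₂ : α} (h : p₁ ⋖ p₂) (hle : l₀ + l₁ ≤ m) :
    IsMCoverTuple m (F m l₀ l₁ p₁ p₂) :=
  ⟨l₀, l₁, m - (l₀ + l₁), p₁, p₂, by omega, h, fun i => rfl⟩

lemma mono {f : Fin m → α} (hf : IsMCoverTuple m f) {i j : Fin m}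
    (hij : (i : ℕ) ≤ (j : ℕ)) : f i ≤ f j := by
  obtain ⟨l₀, l₁, l₂, p₁, p₂, hs, hc, hform⟩ := hf
  rw [hform i, hform j]
  split_ifs <;> first | exact le_rfl | exact bot_le | exact hc.le | (exfalso; omega)

lemma le_of_pw {x y : MCover α m} (h : ∀ i, x.1 i ≤ y.1 i) : x ≤ y :=
  Subtype.coe_le_coe.mp (Pi.le_def.mpr h)

lemma pw_of_le {x y : MCover α m} (h : x ≤ y) (i : Fin m) : x.1 i ≤ y.1 i :=
  Pi.le_def.mp (Subtype.coe_le_coe.mpr h) i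

lemma lt_ext {x y : MCover α m} (hle : ∀ i, x.1 i ≤ y.1 i) {i : Fin m}
    (hne : x.1 i ≠ y.1 i) : x < y :=
  lt_of_le_of_ne (le_of_pw hle) (fun h => hne (congrFun (congrArg Subtype.val h) i))

lemma F_mk {l₀ l₁ : ℕ} {p₁ p₂ : α} {k : ℕ} (hk : k < m) :
    F m l₀ l₁ p₁ p₂ ⟨k, hk⟩ = if k < l₀ then ⊥ else if k < l₀ + l₁ then p₁ else p₂ := rfl

/-- Extending the middle block down by one gives a lower cover. -/
lemma covby_extend {l₀ l₁ : ℕ} (hlt : l₀ + l₁ < m) {p₁ p₂ : α} (hc : p₁ ⋖ p₂)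
    {x y : MCover α m} (hx : ∀ i : Fin m, x.1 i = F m l₀ l₁ p₁ p₂ i)
    (hy : ∀ i : Fin m, y.1 i = F m l₀ (l₁ + 1) p₁ p₂ i) : y ⋖ x := by
  have hxj : x.1 ⟨l₀ + l₁, hlt⟩ = p₂ := by
    rw [hx ⟨l₀ + l₁, hlt⟩, F_mk]
    split_ifs <;> first | rfl | (exfalso; omega)
  have hyj : y.1 ⟨l₀ + l₁, hlt⟩ = p₁ := by
    rw [hy ⟨l₀ + l₁, hlt⟩, F_mk]
    split_ifs <;> first | rfl | (exfalso; omega)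
  have pin : ∀ i : Fin m, (i : ℕ) ≠ l₀ + l₁ → y.1 i = x.1 i := by
    intro i hi
    rw [hx i, hy i]
    show (if _ then _ else _) = (if _ then _ else _)
    split_ifs <;> first | rfl | (exfalso; omega)
  have hyx : y < x := by
    refine lt_ext (fun i => ?_) (i := ⟨l₀ + l₁, hlt⟩) (by rw [hxj, hyj]; exact hc.ne)
    by_cases hi : (i : ℕ) = l₀ + l₁
    · have hij : i = ⟨l₀ + l₁, hlt⟩ := Fin.ext hi
      rw [hij, hxj, hyj]; exact hc.le
    · rw [pin i hi]
  refine covBy_of_eq_or_eq hyx (fun z h1 h2 => ?_)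
  have hzj : z.1 ⟨l₀ + l₁, hlt⟩ = p₁ ∨ z.1 ⟨l₀ + l₁, hlt⟩ = p₂ := by
    have := hc.eq_or_eq (c := z.1 ⟨l₀ + l₁, hlt⟩)
      (by rw [← hyj]; exact pw_of_le h1 ⟨l₀ + l₁, hlt⟩)
      (by rw [← hxj]; exact pw_of_le h2 ⟨l₀ + l₁, hlt⟩)
    tauto
  have pinz : ∀ i : Fin m, (i : ℕ) ≠ l₀ + l₁ → z.1 i = x.1 i := fun i hi =>
    le_antisymm (pw_of_le h2 i) (by rw [← pin i hi]; exact pw_of_le h1 i)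
  rcases hzj with h | h
  · left
    apply Subtype.ext; funext i
    by_cases hi : (i : ℕ) = l₀ + l₁
    · have hij : i = ⟨l₀ + l₁, hlt⟩ := Fin.ext hi
      rw [hij, hyj, h]
    · rw [pinz i hi, pin i hi]
  · right
    apply Subtype.ext; funext i
    by_cases hi : (i : ℕ) = l₀ + l₁
    · have hij : i = ⟨l₀ + l₁, hlt⟩ := Fin.ext hi
      rw [hij, hxj, h]
    · exact pinz i hi

/-- Extending the bottom block down by one gives a lower cover (needs `p₁ ≠ ⊥`). -/
lemma covby_shift {l₀ l₁ : ℕ} (hsum : l₀ + l₁ < m) (hl₁ : 0 < l₁) {p₁ p₂ : α}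
    (hp₁ : p₁ ≠ ⊥) (hc : p₁ ⋖ p₂) {x y : MCover α m}
    (hx : ∀ i : Fin m, x.1 i = F m l₀ l₁ p₁ p₂ i)
    (hy : ∀ i : Fin m, y.1 i = F m (l₀ + 1) (l₁ - 1) p₁ p₂ i) : y ⋖ x := by
  have hl₀ : l₀ < m := by omega
  have hxj : x.1 ⟨l₀, hl₀⟩ = p₁ := by
    rw [hx ⟨l₀, hl₀⟩, F_mk]
    split_ifs <;> first | rfl | (exfalso; omega)
  have hyj : y.1 ⟨l₀, hl₀⟩ = ⊥ := by
    rw [hy ⟨l₀, hl₀⟩, F_mk]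
    split_ifs <;> first | rfl | (exfalso; omega)
  have hxj₂ : x.1 ⟨l₀ + l₁, hsum⟩ = p₂ := by
    rw [hx ⟨l₀ + l₁, hsum⟩, F_mk]
    split_ifs <;> first | rfl | (exfalso; omega)
  have pin : ∀ i : Fin m, (i : ℕ) ≠ l₀ → y.1 i = x.1 i := by
    intro i hi
    rw [hx i, hy i]
    show (if _ then _ else _) = (if _ then _ else _)
    split_ifs <;> first | rfl | (exfalso; omega)
  have hyx : y < x := by
    refine lt_ext (fun i => ?_) (i := ⟨l₀, hl₀⟩)
      (by rw [hxj, hyj]; exact fun h => hp₁ h.symm)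
    by_cases hi : (i : ℕ) = l₀
    · have hij : i = ⟨l₀, hl₀⟩ := Fin.ext hi
      rw [hij, hyj]; exact bot_le
    · rw [pin i hi]
  refine covBy_of_eq_or_eq hyx (fun z h1 h2 => ?_)
  have pinz : ∀ i : Fin m, (i : ℕ) ≠ l₀ → z.1 i = x.1 i := fun i hi =>
    le_antisymm (pw_of_le h2 i) (by rw [← pin i hi]; exact pw_of_le h1 i)
  have hzj₂ : z.1 ⟨l₀ + l₁, hsum⟩ = p₂ := by
    rw [pinz ⟨l₀ + l₁, hsum⟩ (by simp [Fin.val_mk]; omega), hxj₂]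
  have hzjle : z.1 ⟨l₀, hl₀⟩ ≤ p₁ := by rw [← hxj]; exact pw_of_le h2 ⟨l₀, hl₀⟩
  obtain ⟨k₀, k₁, k₂, q₁, q₂, hk, hq, hzf⟩ := z.2
  have hzfj := hzf ⟨l₀, hl₀⟩
  have hzfj₂ := hzf ⟨l₀ + l₁, hsum⟩
  simp only [Fin.val_mk] at hzfj hzfj₂
  by_cases hA : l₀ < k₀
  · -- z j = ⊥, so z = y
    left
    apply Subtype.ext; funext i
    by_cases hi : (i : ℕ) = l₀
    · have hij : i = ⟨l₀, hl₀⟩ := Fin.ext hi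
      rw [hij, hyj, hzfj, if_pos hA]
    · rw [pinz i hi, pin i hi]
  · by_cases hB : l₀ < k₀ + k₁
    · -- z j = q₁
      have hzjq : z.1 ⟨l₀, hl₀⟩ = q₁ := by rw [hzfj, if_neg hA, if_pos hB]
      have hq₁p₁ : q₁ ≤ p₁ := hzjq ▸ hzjle
      by_cases hC : l₀ + l₁ < k₀ + k₁
      · exfalso
        have h' : z.1 ⟨l₀ + l₁, hsum⟩ = q₁ := by
          rw [hzfj₂, if_neg (by omega), if_pos hC]
        rw [hzj₂] at h'
        have : p₂ ≤ p₁ := by rw [h']; exact hq₁p₁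
        exact lt_irrefl _ (this.trans_lt hc.lt)
      · -- q₂ = p₂, then q₁ = p₁, so z = x
        have hq₂ : q₂ = p₂ := by
          have h' : z.1 ⟨l₀ + l₁, hsum⟩ = q₂ := by
            rw [hzfj₂, if_neg (by omega), if_neg hC]
          rw [← h', hzj₂]
        have hq₁ : q₁ = p₁ := by
          rcases hq₁p₁.lt_or_eq with h | h
          · exact absurd hc.lt ((hq₂ ▸ hq).2 h)
          · exact h
        right
        apply Subtype.ext; funext i
        by_cases hi : (i : ℕ) = l₀
        · have hij : i = ⟨l₀, hl₀⟩ := Fin.ext hi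
          rw [hij, hxj, hzjq, hq₁]
        · exact pinz i hi
    · exfalso
      have h1' : z.1 ⟨l₀, hl₀⟩ = q₂ := by
        rw [hzfj, if_neg hA, if_neg hB]
      have h2' : z.1 ⟨l₀ + l₁, hsum⟩ = q₂ := by
        rw [hzfj₂, if_neg (by omega), if_neg (by omega)]
      rw [hzj₂] at h2'
      rw [h1', ← h2'] at hzjle
      exact lt_irrefl _ (hzjle.trans_lt hc.lt)

/-- For `x = (⊥^l, p^{m-l})` and `q ⋖ p`, the tuple `(⊥^l, q, p^{m-l-1})` covers from below. -/
lemma cover_of_onevalue {l : ℕ} (hl : l < m) {p q : α} (hq : q ⋖ p) (x : MCover α m)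
    (hx : ∀ i : Fin m, x.1 i = if (i : ℕ) < l then ⊥ else p) :
    (⟨F m l 1 q p, memF hq (by omega)⟩ : MCover α m) ⋖ x := by
  refine covby_extend (l₀ := l) (l₁ := 0) (by omega) hq (fun i => ?_) (fun i => ?_)
  · rw [hx i]
    show (if _ then _ else _) = (if _ then _ else _)
    split_ifs <;> first | rfl | (exfalso; omega)
  · show F m l 1 q p i = F m l (0 + 1) q p i
    rfl

end MCoverAux

open MCoverAux in
/-- The join-irreducible elements of the m-cover poset are exactly the tuples
`(⊥^l, p^{m−l})` with `p` join-irreducible in `P` and `0 ≤ l < m`. -/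
theorem stmt_7 {α : Type*} [Fintype α] [PartialOrder α] [BoundedOrder α]
    (m : ℕ) (hm : 0 < m) (x : MCover α m) :
    JoinIrred x ↔
      ∃ (p : α) (l : ℕ), JoinIrred p ∧ l < m ∧
        ∀ i : Fin m, x.1 i = if (i : ℕ) < l then ⊥ else p := by
  constructor
  · rintro ⟨⟨w, hwx⟩, c₀, hc₀, huc⟩
    -- x is not the all-⊥ tuple
    have hnb : ∃ i : Fin m, x.1 i ≠ ⊥ := by
      by_contra h
      push_neg at h
      refine hwx.ne (Subtype.ext (funext fun i => ?_))
      have hwb : w.1 i ≤ ⊥ := le_of_le_of_eq (pw_of_le hwx.le i) (h i)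
      rw [h i]
      exact le_antisymm hwb bot_le
    obtain ⟨L₀, L₁, L₂, p₁, p₂, hsum, hc, hform⟩ := x.2
    -- reduce to the one-value form
    have hone : ∃ l p, l ≤ m ∧ ∀ i : Fin m, x.1 i = if (i : ℕ) < l then ⊥ else p := by
      by_cases h2 : L₂ = 0
      · refine ⟨L₀, p₁, by omega, fun i => ?_⟩
        rw [hform i]
        have := i.isLt
        split_ifs <;> first | rfl | (exfalso; omega)
      by_cases h1 : L₁ = 0
      · refine ⟨L₀, p₂, by omega, fun i => ?_⟩
        rw [hform i]
        have := i.isLt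
        split_ifs <;> first | rfl | (exfalso; omega)
      by_cases hbot : p₁ = ⊥
      · refine ⟨L₀ + L₁, p₂, by omega, fun i => ?_⟩
        rw [hform i]
        subst hbot
        have := i.isLt
        split_ifs <;> first | rfl | (exfalso; omega)
      · exfalso
        have hxF : ∀ i : Fin m, x.1 i = F m L₀ L₁ p₁ p₂ i := hform
        have hl1 : 0 < L₁ := by omega
        have hLm : L₀ < m := by omega
        have e₁ := huc ⟨F m L₀ (L₁ + 1) p₁ p₂, memF hc (by omega)⟩
          (covby_extend (by omega) hc hxF (fun i => rfl))
        have e₂ := huc ⟨F m (L₀ + 1) (L₁ - 1) p₁ p₂, memF hc (by omega)⟩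
          (covby_shift (by omega) hl1 hbot hc hxF (fun i => rfl))
        have he : F m L₀ (L₁ + 1) p₁ p₂ ⟨L₀, hLm⟩ = F m (L₀ + 1) (L₁ - 1) p₁ p₂ ⟨L₀, hLm⟩ :=
          congrFun (congrArg Subtype.val (e₁.trans e₂.symm)) ⟨L₀, hLm⟩
        rw [F_mk, F_mk] at he
        rw [if_neg (by omega : ¬ (L₀ < L₀)), if_pos (by omega : L₀ < L₀ + (L₁ + 1)),
          if_pos (by omega : L₀ < L₀ + 1)] at he
        exact hbot he
    obtain ⟨l, p, hlm, hxl⟩ := hone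
    -- p ≠ ⊥ and l < m
    obtain ⟨i0, hi0⟩ := hnb
    have hkey := hxl i0
    have hpbot : p ≠ ⊥ ∧ l < m := by
      by_cases hi : (i0 : ℕ) < l
      · rw [if_pos hi] at hkey
        exact absurd hkey hi0
      · rw [if_neg hi] at hkey
        have := i0.isLt
        exact ⟨hkey ▸ hi0, by omega⟩
    obtain ⟨hpne, hl⟩ := hpbot
    have hbp : (⊥ : α) < p := Ne.bot_lt hpne
    obtain ⟨q, hqle, hq⟩ := exists_le_covBy_of_lt hbp
    refine ⟨p, l, ⟨⟨⊥, hbp⟩, q, hq, fun r hr => ?_⟩, hl, hxl⟩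
    have er := huc _ (cover_of_onevalue hl hr x hxl)
    have eq' := huc _ (cover_of_onevalue hl hq x hxl)
    have he : F m l 1 r p ⟨l, hl⟩ = F m l 1 q p ⟨l, hl⟩ :=
      congrFun (congrArg Subtype.val (er.trans eq'.symm)) ⟨l, hl⟩
    rw [F_mk, F_mk] at he
    rw [if_neg (by omega : ¬ (l < l)), if_pos (by omega : l < l + 1),
      if_neg (by omega : ¬ (l < l)), if_pos (by omega : l < l + 1)] at he
    exact he
  · rintro ⟨p, l, ⟨⟨w, hwp⟩, q, hq, huq⟩, hl, hx⟩
    have hbp : (⊥ : α) < p := bot_le.trans_lt hwp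
    have hxlval : x.1 ⟨l, hl⟩ = p := by
      rw [hx ⟨l, hl⟩]
      simp only [Fin.val_mk]
      rw [if_neg (by omega : ¬ (l < l))]
    constructor
    · -- the all-⊥ tuple is strictly below x
      refine ⟨⟨fun _ => ⊥, ⟨m, 0, 0, q, p, by omega, hq, fun i => (if_pos i.isLt).symm⟩⟩, ?_⟩
      refine lt_ext (fun i => bot_le) (i := ⟨l, hl⟩) ?_
      rw [hxlval]
      exact fun h => hbp.ne' h.symm
    · -- unique lower cover (⊥^l, q, p^{m-l-1})
      have hycov : (⟨F m l 1 q p, memF hq (by omega)⟩ : MCover α m) ⋖ x :=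
        cover_of_onevalue hl hq x hx
      refine ⟨⟨F m l 1 q p, memF hq (by omega)⟩, hycov, fun c hc => ?_⟩
      -- every lower cover c satisfies c ≤ y
      have hkey : ∀ i : Fin m, c.1 i ≤ F m l 1 q p i := by
        intro i
        have hle := pw_of_le hc.1.le i
        rw [hx i] at hle
        by_cases h1 : (i : ℕ) < l
        · rw [if_pos h1] at hle
          show c.1 i ≤ (if _ then _ else _)
          rw [if_pos h1]
          exact hle
        rw [if_neg h1] at hle
        by_cases h2 : (i : ℕ) = l
        · have hciq : c.1 i ≤ q := by
            rcases hle.lt_or_eq with hlt | heq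
            · obtain ⟨d, hcd, hdp⟩ := exists_le_covBy_of_lt hlt
              exact (huq d hdp) ▸ hcd
            · exfalso
              refine hc.1.ne (Subtype.ext (funext fun j' => ?_))
              rw [hx j']
              by_cases hj' : (j' : ℕ) < l
              · rw [if_pos hj']
                have hle' := pw_of_le hc.1.le j'
                rw [hx j', if_pos hj'] at hle'
                exact le_antisymm hle' bot_le
              · rw [if_neg hj']
                have hmono : c.1 i ≤ c.1 j' := mono c.2 (by omega)
                have hle' := pw_of_le hc.1.le j'
                rw [hx j', if_neg hj'] at hle'
                exact le_antisymm hle' (heq ▸ hmono)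
          show c.1 i ≤ (if _ then _ else _)
          rw [if_neg h1, if_pos (by omega : (i : ℕ) < l + 1)]
          exact hciq
        · show c.1 i ≤ (if _ then _ else _)
          rw [if_neg h1, if_neg (by omega : ¬ ((i : ℕ) < l + 1))]
          exact hle
      have hcy : c ≤ ⟨F m l 1 q p, memF hq (by omega)⟩ := le_of_pw hkey
      rcases hcy.lt_or_eq with hlt | heq
      · exact absurd hycov.lt (hc.2 hlt)
      · exact heq
end

section
/- Let P be a finite bounded poset with n > 1 elements such that the m-cover poset P^⟨m⟩ is a lattice for every integer m > 0. Then |P^⟨m⟩| = n·C(m+1,2) − m² + 1 for every integer m > 0, where C(m+1,2) is the binomial coefficient (m+1) choose 2. -/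
namespace Stmt10

variable {α : Type*} [PartialOrder α] [BoundedOrder α]

/-- The generic block tuple: `⊥` on `[0,a)`, `p₁` on `[a,b)`, `p₂` on `[b,m)`. -/
def tup (m : ℕ) (p₁ p₂ : α) (a b : ℕ) : Fin m → α :=
  fun i => if (i : ℕ) < a then ⊥ else if (i : ℕ) < b then p₁ else p₂

lemma tup_isMCoverTuple {m a b : ℕ} {p₁ p₂ : α} (hab : a ≤ b) (hbm : b ≤ m)
    (hc : p₁ ⋖ p₂) : IsMCoverTuple m (tup m p₁ p₂ a b) := by
  refine ⟨a, b - a, m - b, p₁, p₂, by omega, hc, fun i => ?_⟩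
  have h : a + (b - a) = b := by omega
  simp only [tup, h]

lemma tup_apply {m : ℕ} (p₁ p₂ : α) (a b i : ℕ) (hi : i < m) :
    tup m p₁ p₂ a b ⟨i, hi⟩ = if i < a then ⊥ else if i < b then p₁ else p₂ := rfl

lemma exists_cover [Finite α] (h : (⊥ : α) ≠ ⊤) : ∃ p₁ p₂ : α, p₁ ⋖ p₂ := by
  obtain ⟨t, ht, hct⟩ := exists_le_covBy_of_lt (h.lt_of_le le_top : (⊥:α) < ⊤)
  exact ⟨t, ⊤, hct⟩

lemma const_isMCoverTuple [Finite α] (hbt : (⊥ : α) ≠ ⊤) (m : ℕ) (x : α) :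
    IsMCoverTuple m (fun _ => x) := by
  rcases eq_or_ne x ⊥ with rfl | hx
  · obtain ⟨p₁, p₂, hc⟩ := exists_cover hbt
    have : (fun _ : Fin m => (⊥:α)) = tup m p₁ p₂ m m := by
      funext i; simp [tup, i.isLt]
    rw [this]; exact tup_isMCoverTuple le_rfl le_rfl hc
  · rcases eq_or_ne x ⊤ with rfl | hxt
    · obtain ⟨t, ht, hct⟩ := exists_le_covBy_of_lt (hbt.lt_of_le le_top : (⊥:α) < ⊤)
      have : (fun _ : Fin m => (⊤:α)) = tup m t ⊤ 0 0 := by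
        funext i; simp [tup]
      rw [this]; exact tup_isMCoverTuple le_rfl (Nat.zero_le m) hct
    · obtain ⟨w, hw, hwle⟩ := exists_covBy_le_of_lt (hxt.lt_top)
      have : (fun _ : Fin m => x) = tup m x w 0 m := by
        funext i; simp [tup, i.isLt]
      rw [this]; exact tup_isMCoverTuple (Nat.zero_le m) le_rfl hw

end Stmt10

namespace Stmt10
set_option linter.unusedSectionVars false
variable {α : Type*} [PartialOrder α] [BoundedOrder α] [Finite α]

lemma pair_isMCoverTuple {x y : α} (hxy : x ⋖ y) : IsMCoverTuple 2 ![x, y] := by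
  have : ![x, y] = tup 2 x y 0 1 := by
    funext i; fin_cases i <;> simp [tup]
  rw [this]; exact tup_isMCoverTuple (by norm_num) (by norm_num) hxy

/-- If `MCover α 2` is a lattice, every `p ≠ ⊥` has at most one upper cover. -/
lemma cover_unique (h2 : IsLatticeOrder (MCover α 2)) {p q r : α}
    (hp : p ≠ ⊥) (hq : p ⋖ q) (hr : p ⋖ r) : q = r := by
  by_contra hqr
  set a : MCover α 2 := ⟨![p, q], pair_isMCoverTuple hq⟩ with ha
  set b : MCover α 2 := ⟨![p, r], pair_isMCoverTuple hr⟩ with hb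
  obtain ⟨c, hc⟩ := h2.1 a b
  have hac : a ≤ c := hc.1 (Set.mem_insert _ _)
  have hbc : b ≤ c := hc.1 (Set.mem_insert_of_mem _ rfl)
  set x := c.1 0 with hx
  set y := c.1 1 with hy
  have hpx : p ≤ x := hac 0
  have hqy : q ≤ y := hac 1
  have hry : r ≤ y := hbc 1
  have hqy' : q < y := hqy.lt_of_ne
    (fun h' => hq.2 hr.1 ((h' ▸ hry).lt_of_ne (fun h'' => hqr (h' ▸ h''.symm))))
  have hry' : r < y := hry.lt_of_ne
    (fun h' => hr.2 hq.1 ((h' ▸ hqy).lt_of_ne (fun h'' => hqr (h' ▸ h''))))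
  have hxbot : x ≠ ⊥ := fun h' => hp (le_bot_iff.mp (h' ▸ hpx))
  have hshape : x = y ∨ x ⋖ y := by
    obtain ⟨l0, l1, l2, p1, p2, hsum, hcov, hf⟩ := c.2
    have h0 := hf ⟨0, by norm_num⟩
    have h1 := hf ⟨1, by norm_num⟩
    simp only at h0 h1
    have hx0 : x = c.1 ⟨0, by norm_num⟩ := rfl
    have hy1 : y = c.1 ⟨1, by norm_num⟩ := rfl
    rw [← hx0] at h0
    rw [← hy1] at h1
    rcases Nat.lt_or_ge 0 l0 with hl | hl
    · exact absurd (by rw [h0, if_pos hl]) hxbot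
    · have hl0 : l0 = 0 := by omega
      subst hl0
      simp only [Nat.not_lt_zero, if_false, Nat.zero_add] at h0 h1
      have hl1 : l1 ≤ 2 := by omega
      interval_cases l1
      · left; rw [h0, h1]; simp
      · right; rw [h0, h1]; simpa using hcov
      · left; rw [h0, h1]; simp
  -- upper bounds of the form (t, y) with t ⋖ y force x ≤ t
  have hle : ∀ t : α, p ≤ t → t ⋖ y → x ≤ t := by
    intro t hpt hty
    have hub : (⟨![t, y], pair_isMCoverTuple hty⟩ : MCover α 2) ∈ upperBounds {a, b} := by
      rintro z (rfl | rfl)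
      · intro i; fin_cases i
        · exact hpt
        · exact hqy'.le
      · intro i; fin_cases i
        · exact hpt
        · exact hry'.le
    exact hc.2 hub 0
  obtain ⟨t, hqt, hty⟩ := exists_le_covBy_of_lt hqy'
  obtain ⟨t', hrt', ht'y⟩ := exists_le_covBy_of_lt hry'
  have hxt : x ≤ t := hle t (hq.le.trans hqt) hty
  have hxt' : x ≤ t' := hle t' (hr.le.trans hrt') ht'y
  have hxcov : x ⋖ y := by
    rcases hshape with h' | h'
    · exact absurd (show y ≤ t from h' ▸ hxt) hty.1.not_ge
    · exact h'
  have hxteq : x = t := (hxt.lt_or_eq).resolve_left (fun hlt => hxcov.2 hlt hty.1)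
  have hxt'eq : x = t' := (hxt'.lt_or_eq).resolve_left (fun hlt => hxcov.2 hlt ht'y.1)
  have hqx : q ≤ x := hxteq ▸ hqt
  have hrx : r ≤ x := hxt'eq ▸ hrt'
  have hbt : (⊥ : α) ≠ ⊤ := fun h' => hp (le_bot_iff.mp (h' ▸ (le_top : p ≤ ⊤)))
  have hub2 : (⟨fun _ => x, const_isMCoverTuple hbt 2 x⟩ : MCover α 2) ∈ upperBounds {a, b} := by
    rintro z (rfl | rfl)
    · intro i; fin_cases i
      · exact hpx
      · exact hqx
    · intro i; fin_cases i
      · exact hpx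
      · exact hrx
  have hyx : y ≤ x := hc.2 hub2 1
  exact absurd hyx hxcov.1.not_ge

end Stmt10

namespace Stmt10
variable {α : Type*} [PartialOrder α] [BoundedOrder α] [Finite α]

lemma twoBlock_isMCoverTuple (hbt : (⊥:α) ≠ ⊤) {m l : ℕ} (hlm : l ≤ m) (x : α) :
    IsMCoverTuple m (tup m x x l l) := by
  rcases eq_or_ne x ⊥ with rfl | hx
  · have h : tup m (⊥:α) ⊥ l l = fun _ => (⊥:α) := by
      funext i; simp [tup]
    rw [h]; exact const_isMCoverTuple hbt m ⊥
  rcases eq_or_ne x ⊤ with rfl | hxt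
  · obtain ⟨t, ht, hct⟩ := exists_le_covBy_of_lt (hbt.lt_of_le le_top : (⊥:α) < ⊤)
    have h : tup m (⊤:α) ⊤ l l = tup m t ⊤ l l := by
      funext i; simp only [tup]; split_ifs <;> rfl
    rw [h]; exact tup_isMCoverTuple le_rfl hlm hct
  · obtain ⟨w, hw, _⟩ := exists_covBy_le_of_lt (hxt.lt_top : x < ⊤)
    have h : tup m x x l l = tup m x w l m := by
      funext i; simp only [tup]
      split_ifs with h1 h2 <;> first | rfl | exact absurd i.isLt (by omega)
    rw [h]; exact tup_isMCoverTuple hlm le_rfl hw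

end Stmt10

open Finset in
theorem card_eq_aux {α : Type*} [Fintype α] [PartialOrder α] [BoundedOrder α]
    (hn : 1 < Fintype.card α)
    (hu : ∀ p q r : α, p ≠ ⊥ → p ⋖ q → p ⋖ r → q = r)
    (m : ℕ) (hm : 0 < m) :
    (Nat.card (MCover α m) : ℤ) =
      (Fintype.card α : ℤ) * (m + 1).choose 2 - (m : ℤ) ^ 2 + 1 := by
  classical
  have hnt : Nontrivial α := Fintype.one_lt_card_iff_nontrivial.mp hn
  have hbt : (⊥:α) ≠ ⊤ := bot_ne_top
  set n := Fintype.card α with hndef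
  set SA : Finset (Fin m → α) := (univ : Finset α).image (fun p _ => p) with hSAdef
  set SB : Finset (Fin m → α) :=
    ((univ.filter fun b : α => b ≠ ⊥) ×ˢ Ioo 0 m).image
      (fun x => Stmt10.tup m x.1 x.1 x.2 x.2) with hSBdef
  set Cov : Finset (α × α) :=
    (univ ×ˢ univ).filter (fun pq : α × α => pq.1 ⋖ pq.2 ∧ pq.1 ≠ ⊥) with hCovdef
  set E : Finset (ℕ × ℕ) :=
    (range m ×ˢ range m).filter (fun ab => ab.1 < ab.2) with hEdef
  set SC : Finset (Fin m → α) :=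
    (Cov ×ˢ E).image (fun x => Stmt10.tup m x.1.1 x.1.2 x.2.1 x.2.2) with hSCdef
  have hcard : Nat.card (MCover α m)
      = (univ.filter fun f : Fin m → α => IsMCoverTuple m f).card := by
    rw [Nat.card_eq_fintype_card, Fintype.card_subtype]
  have hsplit : (univ.filter fun f : Fin m → α => IsMCoverTuple m f) = SA ∪ SB ∪ SC := by
    ext f
    simp only [mem_filter, mem_univ, true_and, mem_union]
    constructor
    · rintro ⟨l0, l1, l2, p1, p2, hsum, hcov, hf⟩
      have memA : ∀ x : α, (∀ i : Fin m, f i = x) → f ∈ SA := by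
        intro x hx
        rw [hSAdef, mem_image]
        refine ⟨x, mem_univ x, ?_⟩
        funext i
        exact (hx i).symm
      have memB : ∀ (x : α) (l : ℕ), x ≠ ⊥ → 0 < l → l < m →
          (∀ i : Fin m, f i = if (i : ℕ) < l then ⊥ else x) → f ∈ SB := by
        intro x l hxb h0 hl hfx
        rw [hSBdef, mem_image]
        refine ⟨(x, l), ?_, ?_⟩
        · simp only [mem_product, mem_filter, mem_univ, true_and, mem_Ioo]
          exact ⟨hxb, h0, hl⟩
        · funext i
          show Stmt10.tup m x x l l i = f i
          rw [hfx i]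
          simp only [Stmt10.tup]
          split_ifs <;> rfl
      have hp2b : p2 ≠ ⊥ := (bot_le.trans_lt hcov.1).ne'
      by_cases hp1 : p1 = ⊥
      · subst hp1
        have hf' : ∀ i : Fin m, f i = if (i : ℕ) < l0 + l1 then ⊥ else p2 := by
          intro i
          rw [hf i]
          split_ifs <;> first | rfl | omega
        by_cases hml : m ≤ l0 + l1
        · exact Or.inl (Or.inl (memA ⊥ fun i =>
            by rw [hf' i, if_pos (by have := i.isLt; omega)]))
        · by_cases h0 : l0 + l1 = 0
          · exact Or.inl (Or.inl (memA p2 fun i => by rw [hf' i, if_neg (by omega)]))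
          · exact Or.inl (Or.inr (memB p2 (l0 + l1) hp2b (by omega) (by omega) hf'))
      · by_cases hl1 : l1 = 0
        · have hf' : ∀ i : Fin m, f i = if (i : ℕ) < l0 then ⊥ else p2 := by
            intro i
            rw [hf i]
            split_ifs <;> first | rfl | omega
          by_cases hml : m ≤ l0
          · exact Or.inl (Or.inl (memA ⊥ fun i =>
              by rw [hf' i, if_pos (by have := i.isLt; omega)]))
          · by_cases h0 : l0 = 0
            · exact Or.inl (Or.inl (memA p2 fun i => by rw [hf' i, if_neg (by omega)]))
            · exact Or.inl (Or.inr (memB p2 l0 hp2b (by omega) (by omega) hf'))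
        · by_cases hl2 : l2 = 0
          · have hf' : ∀ i : Fin m, f i = if (i : ℕ) < l0 then ⊥ else p1 := by
              intro i
              rw [hf i]
              split_ifs <;> first | rfl | omega | (exfalso; have := i.isLt; omega)
            by_cases h0 : l0 = 0
            · exact Or.inl (Or.inl (memA p1 fun i => by rw [hf' i, if_neg (by omega)]))
            · exact Or.inl (Or.inr (memB p1 l0 hp1 (by omega) (by omega) hf'))
          · refine Or.inr ?_
            rw [hSCdef, mem_image]
            refine ⟨((p1, p2), (l0, l0 + l1)), ?_, ?_⟩
            · simp only [mem_product, hCovdef, hEdef, mem_filter, mem_univ, true_and,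
                mem_range]
              exact ⟨⟨hcov, hp1⟩, ⟨by omega, by omega⟩, by omega⟩
            · funext i
              show Stmt10.tup m p1 p2 l0 (l0 + l1) i = f i
              rw [hf i]
              rfl
    · rintro ((hfA | hfB) | hfC)
      · rw [hSAdef, mem_image] at hfA
        obtain ⟨p, -, hp⟩ := hfA
        exact hp ▸ Stmt10.const_isMCoverTuple hbt m p
      · rw [hSBdef, mem_image] at hfB
        obtain ⟨⟨x, l⟩, hx, hxf⟩ := hfB
        simp only [mem_product, mem_filter, mem_univ, true_and, mem_Ioo] at hx
        rw [← hxf]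
        exact Stmt10.twoBlock_isMCoverTuple hbt hx.2.2.le x
      · rw [hSCdef, mem_image] at hfC
        obtain ⟨⟨⟨p1, p2⟩, ⟨a, b⟩⟩, hx, hxf⟩ := hfC
        simp only [mem_product, hCovdef, hEdef, mem_filter, mem_univ, true_and,
          mem_range] at hx
        rw [← hxf]
        exact Stmt10.tup_isMCoverTuple hx.2.2.le hx.2.1.2.le hx.1.1
  have hSAcard : SA.card = n := by
    rw [hSAdef, card_image_of_injective _ (fun p q hpq => congrFun hpq ⟨0, hm⟩), card_univ]
  have hSBcard : SB.card = (n - 1) * (m - 1) := by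
    rw [hSBdef, card_image_of_injOn, card_product, Nat.card_Ioo]
    · congr 1
      rw [Finset.filter_ne', card_erase_of_mem (mem_univ _), card_univ]
    · rintro ⟨x, l⟩ hx ⟨x', l'⟩ hx' heq
      simp only [mem_coe, mem_product, mem_filter, mem_univ, true_and, mem_Ioo] at hx hx'
      obtain ⟨hxb, h0l, hlm⟩ := hx
      obtain ⟨hxb', h0l', hlm'⟩ := hx'
      have heq' : Stmt10.tup m x x l l = Stmt10.tup m x' x' l' l' := heq
      have hll : l = l' := by
        by_contra hne
        rcases Nat.lt_or_ge l l' with hl | hl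
        · have h := congrFun heq' ⟨l, by omega⟩
          rw [Stmt10.tup_apply, Stmt10.tup_apply] at h
          split_ifs at h <;> first | omega | exact hxb h
        · have h := congrFun heq' ⟨l', by omega⟩
          rw [Stmt10.tup_apply, Stmt10.tup_apply] at h
          split_ifs at h <;> first | omega | exact hxb' h.symm
      have hxx : x = x' := by
        have h := congrFun heq' ⟨m - 1, by omega⟩
        rw [Stmt10.tup_apply, Stmt10.tup_apply] at h
        split_ifs at h <;> first | omega | exact h
      simp [hxx, hll]
  have hSCcard : SC.card = (n - 2) * E.card := by
    have hCovcard : Cov.card = n - 2 := by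
      have hbij : Cov.card = (univ.filter (fun p : α => p ≠ ⊥ ∧ p ≠ ⊤)).card := by
        apply Finset.card_bij (fun pq _ => pq.1)
        · rintro ⟨p1, p2⟩ hmem
          simp only [hCovdef, mem_filter, mem_product, mem_univ, true_and] at hmem ⊢
          exact ⟨hmem.2, (hmem.1.1.trans_le le_top).ne⟩
        · rintro ⟨p1, p2⟩ hmem ⟨p1', p2'⟩ hmem' hpp
          simp only [hCovdef, mem_filter, mem_product, mem_univ, true_and] at hmem hmem'
          simp only at hpp
          subst hpp
          exact Prod.ext rfl (hu p1 p2 p2' hmem.2 hmem.1 hmem'.1)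
        · intro p hp
          simp only [mem_filter, mem_univ, true_and] at hp
          obtain ⟨w, hw, -⟩ := exists_covBy_le_of_lt (hp.2.lt_top : p < ⊤)
          refine ⟨(p, w), ?_, rfl⟩
          simp only [hCovdef, mem_filter, mem_product, mem_univ, true_and]
          exact ⟨hw, hp.1⟩
      rw [hbij]
      have hset : (univ.filter (fun p : α => p ≠ ⊥ ∧ p ≠ ⊤)) = univ \ {⊥, ⊤} := by
        ext p
        simp [mem_sdiff, not_or]
      rw [hset, card_sdiff_of_subset (subset_univ _), card_univ]
      have : ({⊥, ⊤} : Finset α).card = 2 := by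
        rw [card_insert_of_notMem (by simpa using hbt), card_singleton]
      rw [this]
    rw [hSCdef, card_image_of_injOn, card_product, hCovcard]
    rintro ⟨⟨p1, p2⟩, ⟨a, b⟩⟩ hx ⟨⟨p1', p2'⟩, ⟨a', b'⟩⟩ hx' heq
    simp only [mem_coe, mem_product, hCovdef, hEdef, mem_filter, mem_univ, true_and,
      mem_range] at hx hx'
    obtain ⟨⟨hcov, hp1b⟩, ⟨⟨ha, hb⟩, hab⟩⟩ := hx
    obtain ⟨⟨hcov', hp1b'⟩, ⟨⟨ha', hb'⟩, hab'⟩⟩ := hx'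
    have heq' : Stmt10.tup m p1 p2 a b = Stmt10.tup m p1' p2' a' b' := heq
    have hp2b : p2 ≠ ⊥ := (bot_le.trans_lt hcov.1).ne'
    have hp2b' : p2' ≠ ⊥ := (bot_le.trans_lt hcov'.1).ne'
    have hp2 : p2 = p2' := by
      have h := congrFun heq' ⟨m - 1, by omega⟩
      rw [Stmt10.tup_apply, Stmt10.tup_apply] at h
      split_ifs at h <;> first | omega | exact h
    have haa : a = a' := by
      by_contra hne
      rcases Nat.lt_or_ge a a' with hl | hl
      · have h := congrFun heq' ⟨a, by omega⟩
        rw [Stmt10.tup_apply, Stmt10.tup_apply] at h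
        split_ifs at h <;> first | omega | exact hp1b h | exact hp2b h
      · have h := congrFun heq' ⟨a', by omega⟩
        rw [Stmt10.tup_apply, Stmt10.tup_apply] at h
        split_ifs at h <;> first | omega | exact hp1b' h.symm | exact hp2b' h.symm
    have hbb : b = b' := by
      by_contra hne
      rcases Nat.lt_or_ge b b' with hl | hl
      · have h := congrFun heq' ⟨b, by omega⟩
        rw [Stmt10.tup_apply, Stmt10.tup_apply] at h
        split_ifs at h <;>
          first | omega | exact hp2b h | exact hcov'.1.ne (h.symm.trans hp2)
      · have h := congrFun heq' ⟨b', by omega⟩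
        rw [Stmt10.tup_apply, Stmt10.tup_apply] at h
        split_ifs at h <;>
          first | omega | exact hp2b' h.symm | exact hcov.1.ne (h.trans hp2.symm)
    have hp1 : p1 = p1' := by
      have h := congrFun heq' ⟨a, by omega⟩
      rw [Stmt10.tup_apply, Stmt10.tup_apply] at h
      split_ifs at h <;> first | omega | exact h
    simp [hp1, hp2, haa, hbb]
  have hE2 : 2 * E.card = m * (m - 1) := by
    have hEeq : E = (range m).biUnion (fun b => (range b).image (fun a => (a, b))) := by
      ext ⟨a, b⟩
      simp only [hEdef, mem_filter, mem_product, mem_range, mem_biUnion, mem_image,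
        Prod.mk.injEq]
      constructor
      · rintro ⟨⟨ha, hb⟩, hab⟩; exact ⟨b, hb, a, hab, rfl, rfl⟩
      · rintro ⟨b', hb', a', ha', rfl, rfl⟩; exact ⟨⟨ha'.trans hb', hb'⟩, ha'⟩
    have hdisjb : ∀ x ∈ range m, ∀ y ∈ range m, x ≠ y →
        Disjoint ((range x).image (fun a => (a, x))) ((range y).image (fun a => (a, y))) := by
      intro x _ y _ hxy
      rw [Finset.disjoint_left]
      rintro ⟨a, b⟩ hxmem hymem
      simp only [mem_image, mem_range, Prod.mk.injEq] at hxmem hymem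
      obtain ⟨a1, _, rfl, rfl⟩ := hxmem
      obtain ⟨a2, _, _, h2⟩ := hymem
      exact hxy h2.symm
    rw [hEeq, card_biUnion hdisjb]
    have : ∀ b ∈ range m, ((range b).image (fun a => (a, b))).card = b := by
      intro b _
      rw [card_image_of_injective _ (fun a a' h => (Prod.mk.injEq _ _ _ _).mp h |>.1),
        card_range]
    rw [Finset.sum_congr rfl this, Nat.mul_comm, Finset.sum_range_id_mul_two]
  have hdisj1 : Disjoint SA SB := by
    rw [Finset.disjoint_left]
    intro f hfA hfB
    rw [hSAdef, mem_image] at hfA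
    rw [hSBdef, mem_image] at hfB
    obtain ⟨p, -, hp⟩ := hfA
    obtain ⟨⟨x, l⟩, hx, hxf⟩ := hfB
    simp only [mem_product, mem_filter, mem_univ, true_and, mem_Ioo] at hx
    obtain ⟨hxb, h0l, hlm⟩ := hx
    have e0 : (⊥ : α) = p := by
      have h : Stmt10.tup m x x l l ⟨0, hm⟩ = p := congrFun (hxf.trans hp.symm) ⟨0, hm⟩
      rw [Stmt10.tup_apply, if_pos h0l] at h
      exact h
    have e1 : x = p := by
      have h : Stmt10.tup m x x l l ⟨m - 1, by omega⟩ = p :=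
        congrFun (hxf.trans hp.symm) ⟨m - 1, by omega⟩
      rw [Stmt10.tup_apply] at h
      split_ifs at h <;> first | omega | exact h
    exact hxb (e1.trans e0.symm)
  have hdisj2 : Disjoint (SA ∪ SB) SC := by
    rw [Finset.disjoint_left]
    intro f hfAB hfC
    rw [hSCdef, mem_image] at hfC
    obtain ⟨⟨⟨p1, p2⟩, ⟨a, b⟩⟩, hx, hxf⟩ := hfC
    simp only [mem_product, hCovdef, hEdef, mem_filter, mem_univ, true_and, mem_range,
      and_true] at hx
    obtain ⟨⟨hcov, hp1b⟩, ⟨ha, hb⟩, hab⟩ := hx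
    have e1 : f ⟨a, by omega⟩ = p1 := by
      have h := congrFun hxf.symm ⟨a, by omega⟩
      simp only [Stmt10.tup] at h
      rw [if_neg (by simp), if_pos (by simpa using hab)] at h
      exact h
    have e2 : f ⟨m - 1, by omega⟩ = p2 := by
      have h := congrFun hxf.symm ⟨m - 1, by omega⟩
      simp only [Stmt10.tup] at h
      rw [if_neg (by simp; omega), if_neg (by simp; omega)] at h
      exact h
    rcases mem_union.mp hfAB with hfA | hfB
    · rw [hSAdef, mem_image] at hfA
      obtain ⟨p, -, hp⟩ := hfA
      rw [← hp] at e1 e2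
      exact hcov.1.ne (e1.symm.trans e2)
    · rw [hSBdef, mem_image] at hfB
      obtain ⟨⟨x, l⟩, hxm, hxf'⟩ := hfB
      simp only [mem_product, mem_filter, mem_univ, true_and, mem_Ioo] at hxm
      obtain ⟨hxb, h0l, hlm⟩ := hxm
      rw [← hxf'] at e1 e2
      simp only [Stmt10.tup] at e1 e2
      have hp1x : p1 = x := by
        split_ifs at e1 with h1
        · exact absurd e1.symm hp1b
        · exact e1.symm
      have hp2x : p2 = x := by
        rw [if_neg (by simp; omega)] at e2
        split_ifs at e2 <;> exact e2.symm
      exact hcov.1.ne (hp1x.trans hp2x.symm)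
  have htot : Nat.card (MCover α m) = n + (n - 1) * (m - 1) + (n - 2) * E.card := by
    rw [hcard, hsplit, card_union_of_disjoint hdisj2, card_union_of_disjoint hdisj1,
      hSAcard, hSBcard, hSCcard]
  have hC : 2 * ((m+1).choose 2) = m * (m+1) := by
    obtain ⟨k, hk⟩ := Nat.even_mul_succ_self m
    have h1 : (m+1).choose 2 = m * (m+1) / 2 := by
      rw [Nat.choose_two_right, Nat.add_sub_cancel, Nat.mul_comm]
    rw [h1, hk]
    omega
  -- final arithmetic over ℤ
  have hn2 : 2 ≤ n := hn
  have hm1 : 1 ≤ m := hm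
  rw [htot]
  push_cast [Nat.cast_sub (by omega : 1 ≤ n), Nat.cast_sub (by omega : 2 ≤ n),
    Nat.cast_sub (by omega : 1 ≤ m)]
  have hC' : (2:ℤ) * ((m+1).choose 2 : ℤ) = (m:ℤ) * ((m:ℤ)+1) := by exact_mod_cast hC
  have hE' : (2:ℤ) * (E.card : ℤ) = (m:ℤ) * ((m:ℤ) - 1) := by
    have : ((2 * E.card : ℕ) : ℤ) = ((m * (m-1) : ℕ) : ℤ) := by exact_mod_cast hE2
    push_cast [Nat.cast_sub (by omega : 1 ≤ m)] at this
    linarith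
  have h2 : (2:ℤ) * ((n:ℤ) + ((n:ℤ)-1)*((m:ℤ)-1) + ((n:ℤ)-2)*(E.card:ℤ))
      = 2 * ((n:ℤ) * ((m + 1).choose 2 : ℤ) - (m:ℤ)^2 + 1) := by
    linear_combination (-(n:ℤ)) * hC' + ((n:ℤ)-2) * hE'
  linarith [h2]

/-- If `P` has `n > 1` elements and all its m-cover posets are lattices, then
`|P^⟨m⟩| = n·C(m+1,2) − m² + 1`. -/
theorem stmt_10 {α : Type*} [Fintype α] [PartialOrder α] [BoundedOrder α]
    (hn : 1 < Fintype.card α)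
    (h : ∀ m : ℕ, 0 < m → IsLatticeOrder (MCover α m))
    (m : ℕ) (hm : 0 < m) :
    (Nat.card (MCover α m) : ℤ) =
      (Fintype.card α : ℤ) * (m + 1).choose 2 - (m : ℤ) ^ 2 + 1 := by
  have hu : ∀ p q r : α, p ≠ ⊥ → p ⋖ q → p ⋖ r → q = r :=
    fun p q r hp hq hr => Stmt10.cover_unique (h 2 (by norm_num)) hp hq hr
  exact card_eq_aux hn hu m hm
end

section
/- Let P be a finite bounded poset such that the m-cover poset P^⟨m⟩ is a trim lattice for every integer m > 0, and fix an integer m > 0. Then for all elements x < y of P^⟨m⟩, the Möbius function μ of P^⟨m⟩ satisfies: μ(x,y) = 1 if the interval [x,y] is nuclear and has exactly two atoms; μ(x,y) = −1 if y covers x; and μ(x,y) = 0 otherwise. -/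
/-- An element `x` of a lattice is left-modular if `(y ∨ x) ∧ z = y ∨ (x ∧ z)` whenever
`y < z` (phrased via least upper bounds and greatest lower bounds). -/
def LeftModularElt {β : Type*} [PartialOrder β] (x : β) : Prop :=
  ∀ y z : β, y < z → ∀ jyx mxz lhs rhs : β,
    IsLUB {y, x} jyx → IsGLB {x, z} mxz →
    IsGLB {jyx, z} lhs → IsLUB {y, mxz} rhs → lhs = rhs

/-- A lattice is left-modular if it has a maximal chain all of whose elements are
left-modular. -/
def IsLeftModularLattice (β : Type*) [PartialOrder β] : Prop :=
  ∃ C : Set β, IsMaxChain (· ≤ ·) C ∧ ∀ x ∈ C, LeftModularElt x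

/-- An interval `[x, y]` of a lattice is nuclear if `y` is the join of the atoms of
`[x, y]` (the elements of the interval covering `x`). -/
def NuclearInterval {β : Type*} [PartialOrder β] (x y : β) : Prop :=
  IsLUB {z : β | x ⋖ z ∧ z ≤ y} y

namespace Stmt13

section Utils

variable {β : Type*} [PartialOrder β] [Finite β]

lemma exists_covby_le {x y : β} (h : x < y) : ∃ z, x ⋖ z ∧ z ≤ y := by
  classical
  letI := Fintype.ofFinite β
  obtain ⟨z, hz, hmin⟩ : ∃ z ∈ Finset.univ.filter (fun z => x < z ∧ z ≤ y),
      ∀ w ∈ Finset.univ.filter (fun z => x < z ∧ z ≤ y), ¬ w < z := by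
    obtain ⟨z, hz⟩ := Finset.exists_minimal
      (s := Finset.univ.filter (fun z => x < z ∧ z ≤ y)) ⟨y, by simp [h]⟩
    exact ⟨z, hz.1, fun w hw hlt => hlt.not_ge (hz.2 hw hlt.le)⟩
  simp only [Finset.mem_filter, Finset.mem_univ, true_and] at hz hmin
  refine ⟨z, ⟨hz.1, fun w hw hwz => ?_⟩, hz.2⟩
  exact hmin w ⟨hw, hwz.le.trans hz.2⟩ hwz

lemma exists_le_covby {u v : β} (h : u < v) : ∃ c, u ≤ c ∧ c ⋖ v := by
  classical
  letI := Fintype.ofFinite β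
  obtain ⟨c, hc, hmax⟩ : ∃ c ∈ Finset.univ.filter (fun z => u ≤ z ∧ z < v),
      ∀ w ∈ Finset.univ.filter (fun z => u ≤ z ∧ z < v), ¬ c < w := by
    obtain ⟨c, hc⟩ := Finset.exists_maximal
      (s := Finset.univ.filter (fun z => u ≤ z ∧ z < v)) ⟨u, by simp [h, le_refl]⟩
    exact ⟨c, hc.1, fun w hw hlt => hlt.not_ge (hc.2 hw hlt.le)⟩
  simp only [Finset.mem_filter, Finset.mem_univ, true_and] at hc hmax
  refine ⟨c, hc.1, hc.2, fun w hcw hwv => ?_⟩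
  exact hmax w ⟨hc.1.trans hcw.le, hwv⟩ hcw

omit [Finite β] in
lemma unique_cover_of {x v : β} (hvx : x < v) (hall : ∀ z, x < z → v ≤ z) :
    ∃! z, x ⋖ z := by
  refine ⟨v, ⟨hvx, fun w hw hwv => absurd (hall w hw) hwv.not_ge⟩, ?_⟩
  intro z hz
  rcases eq_or_lt_of_le (hall z hz.1) with h | h
  · exact h.symm
  · exact absurd h (hz.2 hvx)

/-- An atom below any element strictly above x. -/
lemma exists_atom_below {x z : β} (h : x < z) : ∃ t, x ⋖ t ∧ t ≤ z :=
  exists_covby_le h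

end Utils

section Crosscut

variable {β : Type*} [PartialOrder β] [Finite β]

theorem crosscut (hsup : ∀ a b : β, ∃ c, IsLUB {a, b} c)
    (μ : β → β → ℤ) (hrefl : ∀ x, μ x x = 1)
    (hsum : ∀ x y : β, x < y → (∑ᶠ z ∈ {z : β | x ≤ z ∧ z ≤ y}, μ x z) = 0)
    {x y : β} (hxy : x < y) :
    (¬ NuclearInterval x y → μ x y = 0) ∧
    (NuclearInterval x y → Nat.card {z : β // x ⋖ z ∧ z ≤ y} = 2 → μ x y = 1) ∧
    (NuclearInterval x y → Nat.card {z : β // x ⋖ z ∧ z ≤ y} = 1 → x ⋖ y) ∧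
    (Nat.card {z : β // x ⋖ z ∧ z ≤ y} ≠ 0) := by
  classical
  letI : Fintype β := Fintype.ofFinite β
  -- supremum structure
  letI : SemilatticeSup β :=
    { (inferInstance : PartialOrder β) with
      sup := fun a b => (hsup a b).choose
      le_sup_left := fun a b => (hsup a b).choose_spec.1 (by simp)
      le_sup_right := fun a b => (hsup a b).choose_spec.1 (by simp)
      sup_le := fun a b c hac hbc => (hsup a b).choose_spec.2 (by
        rintro z (rfl | rfl) <;> assumption) }
  -- the atom finset
  set A : Finset β := Finset.univ.filter (fun z => x ⋖ z ∧ z ≤ y) with hA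
  have memA : ∀ z, z ∈ A ↔ (x ⋖ z ∧ z ≤ y) := by
    intro z; simp [hA]
  -- join of a subset together with x
  set jn : Finset β → β := fun B => (insert x B).sup' (Finset.insert_nonempty _ _) id with hjn
  have j1 : ∀ B : Finset β, ∀ b ∈ B, b ≤ jn B := by
    intro B b hb; exact Finset.le_sup' id (Finset.mem_insert_of_mem hb)
  have j2 : ∀ B : Finset β, x ≤ jn B := by
    intro B; exact Finset.le_sup' id (Finset.mem_insert_self _ _)
  have j3 : ∀ (B : Finset β) (u : β), (∀ b ∈ B, b ≤ u) → x ≤ u → jn B ≤ u := by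
    intro B u hb hx
    refine Finset.sup'_le _ _ ?_
    intro b hbmem
    rcases Finset.mem_insert.mp hbmem with rfl | h
    · exact hx
    · exact hb b h
  have jn_empty : jn ∅ = x := by simp [hjn]
  -- cardinal of atoms as Finset card
  have hcard : Nat.card {z : β // x ⋖ z ∧ z ≤ y} = A.card := by
    rw [Nat.card_eq_fintype_card, Fintype.card_subtype]
  -- ν function
  set ν : β → ℤ := fun v => ∑ B ∈ A.powerset.filter (fun B => jn B = v), (-1 : ℤ) ^ B.card
    with hν
  -- interval sums of ν
  have hsum_nu : ∀ v : β, x ≤ v → v ≤ y →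
      ∑ z ∈ Finset.univ.filter (fun z => x ≤ z ∧ z ≤ v), ν z
        = if (A.filter (fun a => a ≤ v)) = ∅ then 1 else 0 := by
    intro v hxv hvy
    have hmaps : ∀ B ∈ A.powerset.filter (fun B => jn B ≤ v),
        jn B ∈ Finset.univ.filter (fun z => x ≤ z ∧ z ≤ v) := by
      intro B hB
      simp only [Finset.mem_filter, Finset.mem_powerset, Finset.mem_univ, true_and] at hB ⊢
      exact ⟨j2 B, hB.2⟩
    have hfib := Finset.sum_fiberwise_of_maps_to hmaps (fun B => (-1 : ℤ) ^ B.card)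
    have hstep : ∀ z ∈ Finset.univ.filter (fun z => x ≤ z ∧ z ≤ v),
        ∑ B ∈ (A.powerset.filter (fun B => jn B ≤ v)).filter (fun B => jn B = z),
          (-1 : ℤ) ^ B.card = ν z := by
      intro z hz
      simp only [Finset.mem_filter, Finset.mem_univ, true_and] at hz
      rw [hν]
      congr 1
      rw [Finset.filter_filter]
      apply Finset.filter_congr
      intro B hB
      constructor
      · rintro ⟨-, h⟩; exact h
      · rintro rfl; exact ⟨hz.2, rfl⟩
    calc ∑ z ∈ Finset.univ.filter (fun z => x ≤ z ∧ z ≤ v), ν z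
        = ∑ z ∈ Finset.univ.filter (fun z => x ≤ z ∧ z ≤ v),
            ∑ B ∈ (A.powerset.filter (fun B => jn B ≤ v)).filter (fun B => jn B = z),
              (-1 : ℤ) ^ B.card := by
          exact (Finset.sum_congr rfl hstep).symm
      _ = ∑ B ∈ A.powerset.filter (fun B => jn B ≤ v), (-1 : ℤ) ^ B.card := hfib
      _ = ∑ B ∈ (A.filter (fun a => a ≤ v)).powerset, (-1 : ℤ) ^ B.card := by
          congr 1
          ext B
          simp only [Finset.mem_filter, Finset.mem_powerset]
          constructor
          · rintro ⟨hBA, hle⟩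
            intro b hb
            exact Finset.mem_filter.mpr ⟨hBA hb, (j1 B b hb).trans hle⟩
          · intro h
            constructor
            · exact h.trans (Finset.filter_subset _ _)
            · refine j3 B v ?_ hxv
              intro b hb
              exact (Finset.mem_filter.mp (h hb)).2
      _ = _ := Finset.sum_powerset_neg_one_pow_card
  -- key: atoms below v nonempty iff v ≠ x
  have hatom_ne : ∀ v : β, x ≤ v → v ≤ y → v ≠ x → (A.filter (fun a => a ≤ v)) ≠ ∅ := by
    intro v hxv hvy hne
    obtain ⟨t, ht, htv⟩ := exists_atom_below (lt_of_le_of_ne hxv (Ne.symm hne))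
    apply Finset.ne_empty_of_mem (a := t)
    exact Finset.mem_filter.mpr ⟨(memA t).mpr ⟨ht, htv.trans hvy⟩, htv⟩
  have hatom_x : (A.filter (fun a => a ≤ x)) = ∅ := by
    apply Finset.filter_false_of_mem
    intro a ha hax
    exact absurd (lt_of_lt_of_le ((memA a).mp ha).1.lt hax) (lt_irrefl x)
  -- μ = ν on the interval
  have hνapp : ∀ v, ν v = ∑ B ∈ A.powerset.filter (fun B => jn B = v), (-1 : ℤ) ^ B.card :=
    fun v => rfl
  have main : ∀ v : β, x ≤ v → v ≤ y → μ x v = ν v := by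
    intro v
    induction v using WellFoundedLT.induction with
    | ind v IH =>
      intro hxv hvy
      rcases eq_or_lt_of_le hxv with heq | hlt
      · -- v = x
        rw [← heq, hrefl, hνapp]
        have hempty : A.powerset.filter (fun B => jn B = x) = {∅} := by
          ext B
          simp only [Finset.mem_filter, Finset.mem_powerset, Finset.mem_singleton]
          constructor
          · rintro ⟨hBA, hjnB⟩
            by_contra hne
            obtain ⟨b, hb⟩ := Finset.nonempty_iff_ne_empty.mpr hne
            have h1 := j1 B b hb
            have h2 := ((memA b).mp (hBA hb)).1.lt
            rw [hjnB] at h1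
            exact absurd (lt_of_lt_of_le h2 h1) (lt_irrefl x)
          · rintro rfl
            exact ⟨Finset.empty_subset _, jn_empty⟩
        rw [hempty, Finset.sum_singleton, Finset.card_empty, pow_zero]
      · -- v > x
        have h0 := hsum x v hlt
        have hconv : {z : β | x ≤ z ∧ z ≤ v}
            = ↑(Finset.univ.filter (fun z => x ≤ z ∧ z ≤ v)) := by
          ext z; simp
        rw [hconv, finsum_mem_coe_finset] at h0
        have hvmem : v ∈ Finset.univ.filter (fun z => x ≤ z ∧ z ≤ v) := by
          simp [hxv]
        rw [← Finset.add_sum_erase _ _ hvmem] at h0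
        have hIH : ∀ z ∈ (Finset.univ.filter (fun z => x ≤ z ∧ z ≤ v)).erase v,
            μ x z = ν z := by
          intro z hz
          have hz' := Finset.mem_of_mem_erase hz
          have hzne := Finset.ne_of_mem_erase hz
          simp only [Finset.mem_filter, Finset.mem_univ, true_and] at hz'
          exact IH z (lt_of_le_of_ne hz'.2 hzne) hz'.1 (hz'.2.trans hvy)
        have h1 := hsum_nu v hxv hvy
        rw [if_neg (hatom_ne v hxv hvy hlt.ne')] at h1
        rw [← Finset.add_sum_erase _ _ hvmem] at h1
        have e0 := eq_neg_of_add_eq_zero_left h0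
        have e1 := eq_neg_of_add_eq_zero_left h1
        rw [e0, e1]
        exact congrArg Neg.neg (Finset.sum_congr rfl hIH)
  have hμν : μ x y = ν y := main y hxy.le le_rfl
  -- nuclear iff some subset joins to y, basically
  have hnuc_of : ∀ B ∈ A.powerset, jn B = y → NuclearInterval x y := by
    intro B hB hjnB
    constructor
    · intro z hz
      exact hz.2
    · intro u hu
      have hxu : x ≤ u := by
        obtain ⟨t, ht, hty⟩ := exists_atom_below hxy
        exact ht.lt.le.trans (hu ⟨ht, hty⟩)
      rw [← hjnB]
      refine j3 B u ?_ hxu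
      intro b hb
      have := (memA b).mp (Finset.mem_powerset.mp hB hb)
      exact hu this
  refine ⟨?_, ?_, ?_, ?_⟩
  · -- not nuclear → 0
    intro hnn
    rw [hμν, hν]
    apply Finset.sum_eq_zero
    intro B hB
    rw [Finset.mem_filter] at hB
    exact absurd (hnuc_of B hB.1 hB.2) hnn
  · -- nuclear ∧ two atoms → 1
    intro hnuc h2
    rw [hcard] at h2
    obtain ⟨a, b, hab, hAab⟩ := Finset.card_eq_two.mp h2
    have haA : a ∈ A := by rw [hAab]; simp
    have hbA : b ∈ A := by rw [hAab]; simp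
    have hay : a ≠ y := by
      rintro rfl
      have hxb := ((memA b).mp hbA).1
      have hby := ((memA b).mp hbA).2
      have : b = a := by
        rcases eq_or_lt_of_le hby with h | h
        · exact h
        · exact absurd h (((memA a).mp haA).1.2 hxb.lt)
      exact hab this.symm
    have hby : b ≠ y := by
      rintro rfl
      have hxa := ((memA a).mp haA).1
      have hay' := ((memA a).mp haA).2
      have : a = b := by
        rcases eq_or_lt_of_le hay' with h | h
        · exact h
        · exact absurd h (((memA b).mp hbA).1.2 hxa.lt)
      exact hab this
    -- jn on subsets of {a, b}
    have hjn_singleton : ∀ c ∈ A, jn {c} = c := by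
      intro c hc
      apply le_antisymm
      · exact j3 _ _ (by intro b hb; rw [Finset.mem_singleton] at hb; subst hb; rfl)
          ((memA c).mp hc).1.lt.le
      · exact j1 _ _ (Finset.mem_singleton_self c)
    have hjn_pair : jn {a, b} = y := by
      apply le_antisymm
      · refine j3 _ _ ?_ hxy.le
        intro c hc
        rcases Finset.mem_insert.mp hc with rfl | hc
        · exact ((memA c).mp haA).2
        · rw [Finset.mem_singleton] at hc; subst hc
          exact ((memA c).mp hbA).2
      · have hub : jn {a, b} ∈ upperBounds {z : β | x ⋖ z ∧ z ≤ y} := by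
          rintro z hz
          have hzA : z ∈ A := (memA z).mpr hz
          rw [hAab] at hzA
          rcases Finset.mem_insert.mp hzA with rfl | hz'
          · exact j1 _ _ (by simp)
          · rw [Finset.mem_singleton] at hz'; subst hz'
            exact j1 _ _ (by simp)
        exact hnuc.2 hub
    rw [hμν, hνapp]
    have hfilter : A.powerset.filter (fun B => jn B = y) = {({a, b} : Finset β)} := by
      ext B
      simp only [Finset.mem_filter, Finset.mem_powerset, Finset.mem_singleton]
      constructor
      · rintro ⟨hBA, hjnB⟩
        rw [hAab] at hBA
        by_cases haB : a ∈ B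
        · by_cases hbB : b ∈ B
          · apply Finset.Subset.antisymm hBA
            intro c hc
            rcases Finset.mem_insert.mp hc with rfl | hc'
            · exact haB
            · rw [Finset.mem_singleton] at hc'; subst hc'; exact hbB
          · exfalso
            have hBa : B ⊆ {a} := by
              intro c hc
              rcases Finset.mem_insert.mp (hBA hc) with rfl | hc'
              · exact Finset.mem_singleton_self _
              · rw [Finset.mem_singleton] at hc'; subst hc'; exact absurd hc hbB
            rcases Finset.subset_singleton_iff.mp hBa with rfl | rfl
            · rw [jn_empty] at hjnB; exact hxy.ne hjnB
            · rw [hjn_singleton a haA] at hjnB; exact hay hjnB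
        · exfalso
          have hBb : B ⊆ {b} := by
            intro c hc
            rcases Finset.mem_insert.mp (hBA hc) with rfl | hc'
            · exact absurd hc haB
            · exact hc'
          rcases Finset.subset_singleton_iff.mp hBb with rfl | rfl
          · rw [jn_empty] at hjnB; exact hxy.ne hjnB
          · rw [hjn_singleton b hbA] at hjnB; exact hby hjnB
      · rintro rfl
        refine ⟨?_, hjn_pair⟩
        rw [hAab]
    rw [hfilter, Finset.sum_singleton, Finset.card_pair hab]
    norm_num
  · -- nuclear ∧ one atom → cover
    intro hnuc h1
    rw [hcard] at h1
    obtain ⟨a, hAa⟩ := Finset.card_eq_one.mp h1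
    have haA : a ∈ A := by rw [hAa]; simp
    have hya : y = a := by
      apply le_antisymm
      · apply hnuc.2
        intro z hz
        have : z ∈ A := (memA z).mpr hz
        rw [hAa, Finset.mem_singleton] at this
        subst this
        rfl
      · exact ((memA a).mp haA).2
    rw [hya]
    exact ((memA a).mp haA).1
  · -- atoms nonempty
    rw [hcard]
    obtain ⟨t, ht, hty⟩ := exists_atom_below hxy
    have : t ∈ A := (memA t).mpr ⟨ht, hty⟩
    exact fun h => absurd (Finset.card_eq_zero.mp h ▸ this) (by simp)

end Crosscut

section MC

variable {α : Type*} [Fintype α] [PartialOrder α] [BoundedOrder α]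

lemma MCmono {m : ℕ} (x : MCover α m) : Monotone x.val := by
  obtain ⟨l0, l1, l2, p1, p2, hs, hc, hf⟩ := x.2
  intro i j hij
  have hij' : (i : ℕ) ≤ (j : ℕ) := hij
  rw [hf i, hf j]
  by_cases hj0 : (j : ℕ) < l0
  · rw [if_pos (lt_of_le_of_lt hij' hj0), if_pos hj0]
  · rw [if_neg hj0]
    by_cases hj1 : (j : ℕ) < l0 + l1
    · rw [if_pos hj1]
      by_cases hi0 : (i : ℕ) < l0
      · rw [if_pos hi0]; exact bot_le
      · rw [if_neg hi0, if_pos (lt_of_le_of_lt hij' hj1)]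
    · rw [if_neg hj1]
      by_cases hi0 : (i : ℕ) < l0
      · rw [if_pos hi0]; exact bot_le
      · rw [if_neg hi0]
        by_cases hi1 : (i : ℕ) < l0 + l1
        · rw [if_pos hi1]; exact hc.le
        · rw [if_neg hi1]

lemma MCbt {m : ℕ} (x : MCover α m) : (⊥ : α) < ⊤ := by
  obtain ⟨l0, l1, l2, p1, p2, hs, hc, hf⟩ := x.2
  exact (bot_le.trans_lt hc.lt).trans_le le_top

/-- Build an element of `MCover α 2` from an admissible pair. -/
def mk2 (hbt : (⊥ : α) < ⊤) (a b : α) (hab : a ≤ b) (h : a = ⊥ ∨ a = b ∨ a ⋖ b) :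
    MCover α 2 := by
  refine ⟨![a, b], ?_⟩
  rcases h with rfl | rfl | hcov
  · -- a = ⊥
    by_cases hb : b = ⊥
    · subst hb
      obtain ⟨c, hc, -⟩ := exists_covby_le hbt
      exact ⟨2, 0, 0, ⊥, c, by omega, hc, fun i => by fin_cases i <;> simp⟩
    · obtain ⟨t, -, ht⟩ := exists_le_covby (bot_lt_iff_ne_bot.mpr hb)
      exact ⟨1, 0, 1, t, b, by omega, ht, fun i => by fin_cases i <;> simp⟩
  · -- b = a
    by_cases hb : a = ⊤
    · subst hb
      obtain ⟨t, -, ht⟩ := exists_le_covby hbt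
      exact ⟨0, 0, 2, t, ⊤, by omega, ht, fun i => by fin_cases i <;> simp⟩
    · obtain ⟨u, hu, -⟩ := exists_covby_le (lt_top_iff_ne_top.mpr hb)
      exact ⟨0, 2, 0, a, u, by omega, hu, fun i => by fin_cases i <;> simp⟩
  · exact ⟨0, 1, 1, a, b, by omega, hcov, fun i => by fin_cases i <;> simp⟩

@[simp] lemma mk2_val0 (hbt : (⊥ : α) < ⊤) (a b : α) (hab : a ≤ b)
    (h : a = ⊥ ∨ a = b ∨ a ⋖ b) : (mk2 hbt a b hab h).val 0 = a := rfl

@[simp] lemma mk2_val1 (hbt : (⊥ : α) < ⊤) (a b : α) (hab : a ≤ b)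
    (h : a = ⊥ ∨ a = b ∨ a ⋖ b) : (mk2 hbt a b hab h).val 1 = b := rfl

lemma le2 (x y : MCover α 2) : x ≤ y ↔ x.val 0 ≤ y.val 0 ∧ x.val 1 ≤ y.val 1 := by
  rw [← Subtype.coe_le_coe, Pi.le_def]
  constructor
  · intro h; exact ⟨h 0, h 1⟩
  · intro h i; fin_cases i
    · exact h.1
    · exact h.2

lemma eq2 (x y : MCover α 2) (h0 : x.val 0 = y.val 0) (h1 : x.val 1 = y.val 1) : x = y := by
  apply Subtype.ext
  funext i
  fin_cases i
  · exact h0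
  · exact h1

lemma char2 (x : MCover α 2) :
    x.val 0 = ⊥ ∨ x.val 0 = x.val 1 ∨ x.val 0 ⋖ x.val 1 := by
  obtain ⟨l0, l1, l2, p1, p2, hs, hc, hf⟩ := x.2
  have h0 := hf 0
  have h1 := hf 1
  simp only [Fin.val_zero, Fin.val_one] at h0 h1
  by_cases c0 : (0 : ℕ) < l0
  · rw [if_pos c0] at h0
    exact Or.inl h0
  · rw [if_neg c0] at h0
    have hl0 : l0 = 0 := by omega
    by_cases c01 : (0 : ℕ) < l0 + l1
    · rw [if_pos c01] at h0
      rw [if_neg (by omega : ¬ (1 : ℕ) < l0)] at h1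
      by_cases c11 : (1 : ℕ) < l0 + l1
      · rw [if_pos c11] at h1
        exact Or.inr (Or.inl (h0.trans h1.symm))
      · rw [if_neg c11] at h1
        exact Or.inr (Or.inr (h0 ▸ h1 ▸ hc))
    · rw [if_neg c01] at h0
      rw [if_neg (by omega : ¬ (1 : ℕ) < l0), if_neg (by omega : ¬ (1 : ℕ) < l0 + l1)] at h1
      exact Or.inr (Or.inl (h0.trans h1.symm))

/-- Build an element of `MCover α 1`. -/
def mk1 (hbt : (⊥ : α) < ⊤) (a : α) : MCover α 1 := by
  refine ⟨![a], ?_⟩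
  by_cases hb : a = ⊥
  · subst hb
    obtain ⟨c, hc, -⟩ := exists_covby_le hbt
    exact ⟨1, 0, 0, ⊥, c, by omega, hc, fun i => by fin_cases i <;> simp⟩
  · by_cases ht : a = ⊤
    · subst ht
      obtain ⟨t, -, htc⟩ := exists_le_covby hbt
      exact ⟨0, 0, 1, t, ⊤, by omega, htc, fun i => by fin_cases i <;> simp⟩
    · obtain ⟨u, hu, -⟩ := exists_covby_le (lt_top_iff_ne_top.mpr ht)
      exact ⟨0, 1, 0, a, u, by omega, hu, fun i => by fin_cases i <;> simp⟩

@[simp] lemma mk1_val (hbt : (⊥ : α) < ⊤) (a : α) : (mk1 hbt a).val 0 = a := rfl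

lemma mk1_le (hbt : (⊥ : α) < ⊤) (a b : α) : mk1 hbt a ≤ mk1 hbt b ↔ a ≤ b := by
  rw [← Subtype.coe_le_coe, Pi.le_def]
  constructor
  · intro h; exact h 0
  · intro h i; fin_cases i; exact h

lemma alpha_isLUB (hbt : (⊥ : α) < ⊤) (h1 : IsLatticeOrder (MCover α 1)) (a b : α) :
    ∃ e : α, IsLUB {a, b} e := by
  obtain ⟨c, hc⟩ := h1.1 (mk1 hbt a) (mk1 hbt b)
  refine ⟨c.val 0, ?_, ?_⟩
  · rintro z (rfl | rfl)
    · have := hc.1 (Set.mem_insert _ _)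
      exact this 0
    · have := hc.1 (Set.mem_insert_of_mem _ rfl)
      exact this 0
  · intro d hd
    have hd1 : a ≤ d := hd (Set.mem_insert _ _)
    have hd2 : b ≤ d := hd (Set.mem_insert_of_mem _ rfl)
    have : c ≤ mk1 hbt d := by
      apply hc.2
      rintro z (rfl | rfl)
      · exact (mk1_le hbt a d).mpr hd1
      · exact (mk1_le hbt b d).mpr hd2
    have h0 : c.val 0 ≤ (mk1 hbt d).val 0 := this 0
    rwa [mk1_val] at h0

/-- Key lattice-theoretic kill: if the 1- and 2-cover posets are lattices,
then every element strictly above `⊥` has at most one upper cover. -/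
lemma cover_unique (hbt : (⊥ : α) < ⊤) (h1 : IsLatticeOrder (MCover α 1))
    (h2 : IsLatticeOrder (MCover α 2)) {q u v : α} (hq : ⊥ < q) (hu : q ⋖ u) (hv : q ⋖ v) :
    u = v := by
  by_contra hne
  obtain ⟨e, he⟩ := alpha_isLUB hbt h1 u v
  have hue : u ≤ e := he.1 (Set.mem_insert _ _)
  have hve : v ≤ e := he.1 (Set.mem_insert_of_mem _ rfl)
  have hu_lt : u < e := by
    rcases eq_or_lt_of_le hue with h | h
    · exfalso
      rw [← h] at hve
      rcases eq_or_lt_of_le hve with h' | h'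
      · exact hne h'.symm
      · exact hu.2 hv.lt h'
    · exact h
  have hv_lt : v < e := by
    rcases eq_or_lt_of_le hve with h | h
    · exfalso
      rw [← h] at hue
      rcases eq_or_lt_of_le hue with h' | h'
      · exact hne h'
      · exact hv.2 hu.lt h'
    · exact h
  obtain ⟨c₁, hc₁u, hc₁e⟩ := exists_le_covby hu_lt
  obtain ⟨c₂, hc₂v, hc₂e⟩ := exists_le_covby hv_lt
  have hc12 : c₁ ≠ c₂ := by
    rintro rfl
    have : e ≤ c₁ := he.2 (by rintro z (rfl | rfl) <;> assumption)
    exact hc₁e.lt.not_ge this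
  set w₁ := mk2 hbt ⊥ u bot_le (Or.inl rfl) with hw₁
  set w₂ := mk2 hbt q v hv.le (Or.inr (Or.inr hv)) with hw₂
  set U₁ := mk2 hbt c₁ e hc₁e.le (Or.inr (Or.inr hc₁e)) with hU₁
  set U₂ := mk2 hbt c₂ e hc₂e.le (Or.inr (Or.inr hc₂e)) with hU₂
  obtain ⟨L, hL⟩ := h2.1 w₁ w₂
  have hLw₁ : w₁ ≤ L := hL.1 (Set.mem_insert _ _)
  have hLw₂ : w₂ ≤ L := hL.1 (Set.mem_insert_of_mem _ rfl)
  have hUB : ∀ (c : α) (hce : c ⋖ e), q ≤ c → u ≤ e →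
      (mk2 hbt c e hce.le (Or.inr (Or.inr hce))) ∈ upperBounds ({w₁, w₂} : Set (MCover α 2)) := by
    intro c hce hqc hue'
    rintro z (rfl | rfl)
    · rw [le2]
      simp only [mk2_val0, mk2_val1]
      exact ⟨bot_le, hue'⟩
    · rw [le2]
      simp only [mk2_val0, mk2_val1]
      exact ⟨hqc, hve⟩
  have hLU₁ : L ≤ U₁ := hL.2 (hUB c₁ hc₁e (hu.lt.le.trans hc₁u) hue)
  have hLU₂ : L ≤ U₂ := hL.2 (hUB c₂ hc₂e (hv.lt.le.trans hc₂v) hue)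
  have hL0c₁ : L.val 0 ≤ c₁ := by
    have := (le2 _ _).mp hLU₁
    simpa [hU₁] using this.1
  have hL0c₂ : L.val 0 ≤ c₂ := by
    have := (le2 _ _).mp hLU₂
    simpa [hU₂] using this.1
  have hL0q : q ≤ L.val 0 := by
    have := (le2 _ _).mp hLw₂
    simpa [hw₂] using this.1
  have hL1e : L.val 1 = e := by
    apply le_antisymm
    · have := (le2 _ _).mp hLU₁
      simpa [hU₁] using this.2
    · apply he.2
      rintro z (rfl | rfl)
      · have := (le2 _ _).mp hLw₁
        simpa [hw₁] using this.2
      · have := (le2 _ _).mp hLw₂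
        simpa [hw₂] using this.2
  rcases char2 L with h | h | h
  · rw [h] at hL0q
    exact hq.not_ge hL0q
  · rw [h, hL1e] at hL0c₁
    exact hc₁e.lt.not_ge hL0c₁
  · rw [hL1e] at h
    have e₁ : L.val 0 = c₁ := by
      rcases eq_or_lt_of_le hL0c₁ with h' | h'
      · exact h'
      · exact absurd hc₁e.lt (h.2 h')
    have e₂ : L.val 0 = c₂ := by
      rcases eq_or_lt_of_le hL0c₂ with h' | h'
      · exact h'
      · exact absurd hc₂e.lt (h.2 h')
    exact hc12 (e₁ ▸ e₂)

end MC


section Counting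

variable {α : Type*} [Fintype α] [PartialOrder α] [BoundedOrder α]

attribute [local instance] Classical.propDecidable

/-- Height: the longest strictly increasing chain ending at `a`. -/
noncomputable def hgt (a : α) : ℕ :=
  sSup {n : ℕ | ∃ f : Fin (n + 1) → α, StrictMono f ∧ f (Fin.last n) = a}

lemma hgt_set_zero_mem (a : α) :
    0 ∈ {n : ℕ | ∃ f : Fin (n + 1) → α, StrictMono f ∧ f (Fin.last n) = a} := by
  refine ⟨fun _ => a, ?_, rfl⟩
  intro i j hij
  exact absurd (Fin.lt_def.mp hij) (by have := i.isLt; have := j.isLt; omega)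

lemma hgt_set_bdd (a : α) {n : ℕ}
    (hn : n ∈ {n : ℕ | ∃ f : Fin (n + 1) → α, StrictMono f ∧ f (Fin.last n) = a}) :
    n ≤ Fintype.card α := by
  obtain ⟨f, hf, -⟩ := hn
  have := Fintype.card_le_of_injective f hf.injective
  simp only [Fintype.card_fin] at this
  omega

lemma hgt_spec (a : α) :
    ∃ f : Fin (hgt a + 1) → α, StrictMono f ∧ f (Fin.last _) = a := by
  have := Nat.sSup_mem ⟨0, hgt_set_zero_mem a⟩ ⟨Fintype.card α, fun n hn => hgt_set_bdd a hn⟩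
  exact this

lemma hgt_lt_of_lt {a b : α} (hab : a < b) : hgt a < hgt b := by
  obtain ⟨f, hf, hlast⟩ := hgt_spec a
  have hmem : hgt a + 1 ∈
      {n : ℕ | ∃ f : Fin (n + 1) → α, StrictMono f ∧ f (Fin.last n) = b} := by
    refine ⟨Fin.snoc f b, ?_, by simp⟩
    intro i j hij
    induction j using Fin.lastCases with
    | last =>
      have hi : i ≠ Fin.last _ := hij.ne
      obtain ⟨k, rfl⟩ := Fin.exists_castSucc_eq.mpr hi
      rw [Fin.snoc_castSucc, Fin.snoc_last]
      calc f k ≤ f (Fin.last _) := hf.monotone (Fin.le_last k)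
        _ = a := hlast
        _ < b := hab
    | cast k =>
      have hi : i ≠ Fin.last _ := (hij.trans (Fin.castSucc_lt_last k)).ne
      obtain ⟨k', rfl⟩ := Fin.exists_castSucc_eq.mpr hi
      rw [Fin.snoc_castSucc, Fin.snoc_castSucc]
      exact hf (Fin.castSucc_lt_castSucc_iff.mp hij)
  have : hgt a + 1 ≤ hgt b :=
    le_csSup ⟨Fintype.card α, fun n hn => hgt_set_bdd b hn⟩ hmem
  omega

lemma hgt_mono {a b : α} (hab : a ≤ b) : hgt a ≤ hgt b := by
  rcases eq_or_lt_of_le hab with rfl | h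
  · exact le_rfl
  · exact (hgt_lt_of_lt h).le

lemma strictmono_fin_nat {n : ℕ} (g : Fin (n + 1) → ℕ) (hg : StrictMono g) :
    g 0 + n ≤ g (Fin.last n) := by
  have key : ∀ k : ℕ, ∀ hk : k < n + 1, g 0 + k ≤ g ⟨k, hk⟩ := by
    intro k
    induction k with
    | zero => intro hk; simp
    | succ k ih =>
      intro hk
      have h1 := ih (by omega)
      have h2 : g ⟨k, by omega⟩ < g ⟨k + 1, hk⟩ := hg (by simp [Fin.lt_def])
      omega
  have := key n (by omega)
  simpa [Fin.last] using this

lemma lenMC2_le : posetLength (MCover α 2) ≤ 2 * hgt (⊤ : α) := by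
  apply csSup_le'
  rintro n ⟨f, hf, -, -⟩
  set W : Fin (n + 1) → ℕ := fun i => hgt ((f i).val 0) + hgt ((f i).val 1) with hW
  have hWmono : StrictMono W := by
    intro i j hij
    have hfij : (f i).val < (f j).val := Subtype.coe_lt_coe.mpr (hf hij)
    obtain ⟨hle, k, hk⟩ := Pi.lt_def.mp hfij
    fin_cases k
    · exact Nat.add_lt_add_of_lt_of_le (hgt_lt_of_lt hk) (hgt_mono (hle 1))
    · exact Nat.add_lt_add_of_le_of_lt (hgt_mono (hle 0)) (hgt_lt_of_lt hk)
  have h1 := strictmono_fin_nat W hWmono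
  have h2 : W (Fin.last n) ≤ 2 * hgt (⊤ : α) := by
    have ha := hgt_mono (le_top (a := (f (Fin.last n)).val 0))
    have hb := hgt_mono (le_top (a := (f (Fin.last n)).val 1))
    simp only [hW]
    omega
  omega

/-- Bound on the height of ⊤ given atoms missing from any chain. -/
lemma hgt_top_le {a₁ a₂ : α} (hA1 : (⊥ : α) ⋖ a₁) (hA2 : (⊥ : α) ⋖ a₂) (hne : a₁ ≠ a₂)
    (extra : Option {a₃ : α // ((⊥ : α) ⋖ a₃) ∧ a₃ ≠ a₁ ∧ a₃ ≠ a₂}) :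
    hgt (⊤ : α) + (if extra.isSome then 1 else 0)
      ≤ (Finset.univ.filter (fun s : α => ⊥ < s ∧ s < ⊤)).card := by
  classical
  obtain ⟨f, hf, hlast⟩ := hgt_spec (⊤ : α)
  set img : Finset α := (Finset.univ.image f) \ {⊥, ⊤} with himg
  have himgcard : hgt (⊤ : α) + 1 ≤ img.card + 2 := by
    have h1 : (Finset.univ.image f).card = hgt (⊤ : α) + 1 := by
      rw [Finset.card_image_of_injective _ hf.injective]
      simp
    have h2 : (Finset.univ.image f) ⊆ img ∪ {⊥, ⊤} := by
      intro z hz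
      by_cases hmem : z ∈ ({⊥, ⊤} : Finset α)
      · exact Finset.mem_union_right _ hmem
      · exact Finset.mem_union_left _ (Finset.mem_sdiff.mpr ⟨hz, hmem⟩)
    have h3 := Finset.card_le_card h2
    have h4 := Finset.card_union_le img ({⊥, ⊤} : Finset α)
    have h5 : ({⊥, ⊤} : Finset α).card ≤ 2 := Finset.card_insert_le _ _ |>.trans (by simp)
    omega
  -- atoms are interior
  have hatom_int : ∀ a : α, (⊥ : α) ⋖ a → (∃ a' : α, ((⊥ : α) ⋖ a') ∧ a' ≠ a) →
      ⊥ < a ∧ a < ⊤ := by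
    intro a ha ⟨a', ha', hne'⟩
    refine ⟨ha.lt, ?_⟩
    rcases lt_or_eq_of_le (le_top (a := a)) with h | h
    · exact h
    · exfalso
      subst h
      have : a' < ⊤ := lt_of_le_of_ne le_top (fun hh => hne' hh)
      exact ha.2 ha'.lt this
  -- at most one atom is in the image of f
  have honeatom : ∀ b b' : α, (⊥ : α) ⋖ b → (⊥ : α) ⋖ b' → b ≠ b' →
      b ∈ Finset.univ.image f → b' ∈ Finset.univ.image f → False := by
    intro b b' hb hb' hbne hbi hbi'
    obtain ⟨i, -, hi⟩ := Finset.mem_image.mp hbi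
    obtain ⟨j, -, hj⟩ := Finset.mem_image.mp hbi'
    rcases le_total i j with h | h
    · have : b ≤ b' := hi ▸ hj ▸ hf.monotone h
      rcases lt_or_eq_of_le this with h' | h'
      · exact hb'.2 hb.lt h'
      · exact hbne h'
    · have : b' ≤ b := hi ▸ hj ▸ hf.monotone h
      rcases lt_or_eq_of_le this with h' | h'
      · exact hb.2 hb'.lt h'
      · exact hbne h'.symm
  -- choose missed atoms
  have hsub : ∀ (b₁ b₂ : α), ((⊥:α) ⋖ b₁) → ((⊥:α) ⋖ b₂) → b₁ ≠ b₂ →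
      b₁ ∉ Finset.univ.image f → b₂ ∉ Finset.univ.image f →
      img.card + 2 ≤ (Finset.univ.filter (fun s : α => ⊥ < s ∧ s < ⊤)).card := by
    intro b₁ b₂ hb₁ hb₂ hbne hni₁ hni₂
    have hsubset : insert b₁ (insert b₂ img) ⊆
        Finset.univ.filter (fun s : α => ⊥ < s ∧ s < ⊤) := by
      intro z hz
      rcases Finset.mem_insert.mp hz with rfl | hz'
      · exact Finset.mem_filter.mpr ⟨Finset.mem_univ _, hatom_int z hb₁ ⟨b₂, hb₂, hbne.symm⟩⟩
      · rcases Finset.mem_insert.mp hz' with rfl | hz''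
        · exact Finset.mem_filter.mpr ⟨Finset.mem_univ _, hatom_int z hb₂ ⟨b₁, hb₁, hbne⟩⟩
        · rw [himg, Finset.mem_sdiff] at hz''
          refine Finset.mem_filter.mpr ⟨Finset.mem_univ _, ?_, ?_⟩
          · rcases eq_or_lt_of_le (bot_le (a := z)) with h | h
            · exact absurd (by simp [← h]) hz''.2
            · exact h
          · rcases eq_or_lt_of_le (le_top (a := z)) with h | h
            · exact absurd (by simp [h]) hz''.2
            · exact h
    have hcard : (insert b₁ (insert b₂ img)).card = img.card + 2 := by
      rw [Finset.card_insert_of_notMem, Finset.card_insert_of_notMem]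
      · intro hmem
        exact hni₂ (Finset.mem_sdiff.mp hmem).1
      · intro hmem
        rcases Finset.mem_insert.mp hmem with rfl | hmem'
        · exact hbne rfl
        · exact hni₁ (Finset.mem_sdiff.mp hmem').1
    calc img.card + 2 = (insert b₁ (insert b₂ img)).card := hcard.symm
      _ ≤ _ := Finset.card_le_card hsubset
  have hsub1 : ∀ (b₁ : α), ((⊥:α) ⋖ b₁) → (∃ b', ((⊥:α) ⋖ b') ∧ b' ≠ b₁) →
      b₁ ∉ Finset.univ.image f →
      img.card + 1 ≤ (Finset.univ.filter (fun s : α => ⊥ < s ∧ s < ⊤)).card := by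
    intro b₁ hb₁ hex hni₁
    have hsubset : insert b₁ img ⊆
        Finset.univ.filter (fun s : α => ⊥ < s ∧ s < ⊤) := by
      intro z hz
      rcases Finset.mem_insert.mp hz with rfl | hz''
      · exact Finset.mem_filter.mpr ⟨Finset.mem_univ _, hatom_int z hb₁ hex⟩
      · rw [himg, Finset.mem_sdiff] at hz''
        refine Finset.mem_filter.mpr ⟨Finset.mem_univ _, ?_, ?_⟩
        · rcases eq_or_lt_of_le (bot_le (a := z)) with h | h
          · exact absurd (by simp [← h]) hz''.2
          · exact h
        · rcases eq_or_lt_of_le (le_top (a := z)) with h | h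
          · exact absurd (by simp [h]) hz''.2
          · exact h
    have hcard : (insert b₁ img).card = img.card + 1 := by
      rw [Finset.card_insert_of_notMem]
      intro hmem
      exact hni₁ (Finset.mem_sdiff.mp hmem).1
    calc img.card + 1 = (insert b₁ img).card := hcard.symm
      _ ≤ _ := Finset.card_le_card hsubset
  match extra with
  | none =>
    simp only [Option.isSome_none, Bool.false_eq_true, if_false]
    -- need K ≤ I : at least one of a₁ a₂ missed
    by_cases h₁ : a₁ ∈ Finset.univ.image f
    · by_cases h₂ : a₂ ∈ Finset.univ.image f
      · exact absurd (honeatom a₁ a₂ hA1 hA2 hne h₁ h₂) (by simp)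
      · have := hsub1 a₂ hA2 ⟨a₁, hA1, hne⟩ h₂
        omega
    · have := hsub1 a₁ hA1 ⟨a₂, hA2, hne.symm⟩ h₁
      omega
  | some ⟨a₃, hA3, hne31, hne32⟩ =>
    simp only [Option.isSome_some, if_true]
    -- two of the three atoms are missed
    by_cases h₁ : a₁ ∈ Finset.univ.image f
    · have h₂ : a₂ ∉ Finset.univ.image f :=
        fun h => honeatom a₁ a₂ hA1 hA2 hne h₁ h
      have h₃ : a₃ ∉ Finset.univ.image f :=
        fun h => honeatom a₁ a₃ hA1 hA3 (Ne.symm hne31) h₁ h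
      have := hsub a₂ a₃ hA2 hA3 (Ne.symm hne32) h₂ h₃
      omega
    · by_cases h₂ : a₂ ∈ Finset.univ.image f
      · have h₃ : a₃ ∉ Finset.univ.image f :=
          fun h => honeatom a₂ a₃ hA2 hA3 (Ne.symm hne32) h₂ h
        have := hsub a₁ a₃ hA1 hA3 (Ne.symm hne31) h₁ h₃
        omega
      · have := hsub a₁ a₂ hA1 hA2 hne h₁ h₂
        omega

end Counting

section Kills

variable {α : Type*} [Fintype α] [PartialOrder α] [BoundedOrder α]

attribute [local instance] Classical.propDecidable

lemma MI_ss (hbt : (⊥ : α) < ⊤) {s u : α} (hs : ⊥ < s) (hsu : s ⋖ u)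
    (huniq : ∀ c, s ⋖ c → c = u) :
    MeetIrred (mk2 hbt s s le_rfl (Or.inr (Or.inl rfl))) := by
  set x := mk2 hbt s s le_rfl (Or.inr (Or.inl rfl)) with hx
  set v := mk2 hbt s u hsu.le (Or.inr (Or.inr hsu)) with hv
  have hxv : x < v := by
    refine lt_iff_le_and_ne.mpr ⟨(le2 _ _).mpr (by simp [hx, hv, hsu.le]), ?_⟩
    intro h
    exact hsu.lt.ne (by simpa [hx, hv] using congrArg (fun w => w.val 1) h)
  have hall : ∀ z, x < z → v ≤ z := by
    intro z hz
    have hle := (le2 x z).mp hz.le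
    simp only [hx, mk2_val0, mk2_val1] at hle
    rcases eq_or_lt_of_le hle.2 with h1 | h1
    · exfalso
      apply hz.ne'
      have h01 : z.val 0 ≤ z.val 1 := MCmono z (Fin.zero_le 1)
      exact eq2 z x (le_antisymm (h01.trans h1.symm.le) hle.1) h1.symm
    · obtain ⟨c, hc, hcz⟩ := exists_covby_le h1
      rw [huniq c hc] at hcz
      exact (le2 v z).mpr (by simp [hv, hle.1, hcz])
  exact ⟨⟨v, hxv⟩, unique_cover_of hxv hall⟩

lemma MI_su (hbt : (⊥ : α) < ⊤) {s u : α} (hs : ⊥ < s) (hsu : s ⋖ u)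
    (huniq : ∀ c, s ⋖ c → c = u) :
    MeetIrred (mk2 hbt s u hsu.le (Or.inr (Or.inr hsu))) := by
  set x := mk2 hbt s u hsu.le (Or.inr (Or.inr hsu)) with hx
  set v := mk2 hbt u u le_rfl (Or.inr (Or.inl rfl)) with hv
  have hxv : x < v := by
    refine lt_iff_le_and_ne.mpr ⟨(le2 _ _).mpr (by simp [hx, hv, hsu.le]), ?_⟩
    intro h
    exact hsu.lt.ne (by simpa [hx, hv] using congrArg (fun w => w.val 0) h)
  have hall : ∀ z, x < z → v ≤ z := by
    intro z hz
    have hle := (le2 x z).mp hz.le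
    simp only [hx, mk2_val0, mk2_val1] at hle
    by_cases h0 : z.val 0 = s
    · rcases eq_or_lt_of_le hle.2 with h1 | h1
      · exact absurd (eq2 z x h0 h1.symm) hz.ne'
      · exfalso
        rcases char2 z with hch | hch | hch
        · rw [h0] at hch
          exact hs.ne' hch
        · rw [h0] at hch
          rw [← hch] at h1
          exact lt_irrefl s (hsu.lt.trans h1)
        · rw [h0] at hch
          exact h1.ne' (huniq _ hch)
    · have h0' : s < z.val 0 := lt_of_le_of_ne hle.1 (Ne.symm h0)
      obtain ⟨c, hc, hcz⟩ := exists_covby_le h0'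
      rw [huniq c hc] at hcz
      exact (le2 v z).mpr (by simp [hv, hcz, hle.2])
  exact ⟨⟨v, hxv⟩, unique_cover_of hxv hall⟩

lemma MI_bt (hbt : (⊥ : α) < ⊤) {c : α} (hbc : (⊥ : α) < c) (hct : c ⋖ ⊤)
    (huniq : ∀ d, d ⋖ ⊤ → d = c) :
    MeetIrred (mk2 hbt ⊥ ⊤ bot_le (Or.inl rfl)) := by
  set x := mk2 hbt ⊥ ⊤ bot_le (Or.inl rfl) with hx
  set v := mk2 hbt c ⊤ le_top (Or.inr (Or.inr hct)) with hv
  have hxv : x < v := by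
    refine lt_iff_le_and_ne.mpr ⟨(le2 _ _).mpr (by simp [hx, hv]), ?_⟩
    intro h
    exact hbc.ne (by simpa [hx, hv] using congrArg (fun w => w.val 0) h)
  have hall : ∀ z, x < z → v ≤ z := by
    intro z hz
    have hle := (le2 x z).mp hz.le
    simp only [hx, mk2_val0, mk2_val1] at hle
    have hz1 : z.val 1 = ⊤ := top_unique hle.2
    have hz0 : z.val 0 ≠ ⊥ := by
      intro h0
      exact hz.ne' (eq2 z x h0 hz1)
    rcases char2 z with hch | hch | hch
    · exact absurd hch hz0
    · rw [hz1] at hch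
      exact (le2 v z).mpr (by simp [hv, hch, hz1])
    · rw [hz1] at hch
      have := huniq _ hch
      exact (le2 v z).mpr (by simp [hv, ← this, hz1])
  exact ⟨⟨v, hxv⟩, unique_cover_of hxv hall⟩

lemma countkill (hbt : (⊥ : α) < ⊤) (h1 : IsLatticeOrder (MCover α 1))
    (h2 : IsLatticeOrder (MCover α 2)) (hext : Extremal (MCover α 2))
    {a₁ a₂ : α} (hA1 : (⊥ : α) ⋖ a₁) (hA2 : (⊥ : α) ⋖ a₂) (hne : a₁ ≠ a₂)
    (hextra : (∃ a₃, ((⊥ : α) ⋖ a₃) ∧ a₃ ≠ a₁ ∧ a₃ ≠ a₂) ∨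
      (∃ c, (⊥ : α) < c ∧ c ⋖ ⊤ ∧ ∀ d, d ⋖ ⊤ → d = c)) : False := by
  letI : Fintype (MCover α 2) := Fintype.ofFinite _
  set interiorF := Finset.univ.filter (fun s : α => ⊥ < s ∧ s < ⊤) with hintF
  have F1 : ∀ s : α, ⊥ < s → s < ⊤ → ∃ u, (s ⋖ u) ∧ ∀ c, s ⋖ c → c = u := by
    intro s hs hst
    obtain ⟨u, hu, -⟩ := exists_covby_le hst
    exact ⟨u, hu, fun c hc => cover_unique hbt h1 h2 hs hc hu⟩
  choose ucov hcov using F1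
  set MIset := Finset.univ.filter (fun x : MCover α 2 => MeetIrred x) with hMI
  have hmemint : ∀ s : {s // s ∈ interiorF}, ⊥ < s.1 ∧ s.1 < ⊤ := fun s =>
    (Finset.mem_filter.mp s.2).2
  set φ₁ : {s // s ∈ interiorF} → MCover α 2 :=
    fun s => mk2 hbt s.1 s.1 le_rfl (Or.inr (Or.inl rfl)) with hφ₁
  set φ₂ : {s // s ∈ interiorF} → MCover α 2 :=
    fun s => mk2 hbt s.1 (ucov s.1 (hmemint s).1 (hmemint s).2)
      (hcov s.1 (hmemint s).1 (hmemint s).2).1.le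
      (Or.inr (Or.inr (hcov s.1 (hmemint s).1 (hmemint s).2).1)) with hφ₂
  set G₁ := interiorF.attach.image φ₁ with hG₁
  set G₂ := interiorF.attach.image φ₂ with hG₂
  have hG₁sub : G₁ ⊆ MIset := by
    intro z hz
    obtain ⟨s, -, rfl⟩ := Finset.mem_image.mp hz
    refine Finset.mem_filter.mpr ⟨Finset.mem_univ _, ?_⟩
    exact MI_ss hbt (hmemint s).1 (hcov s.1 (hmemint s).1 (hmemint s).2).1
      (hcov s.1 (hmemint s).1 (hmemint s).2).2
  have hG₂sub : G₂ ⊆ MIset := by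
    intro z hz
    obtain ⟨s, -, rfl⟩ := Finset.mem_image.mp hz
    refine Finset.mem_filter.mpr ⟨Finset.mem_univ _, ?_⟩
    exact MI_su hbt (hmemint s).1 (hcov s.1 (hmemint s).1 (hmemint s).2).1
      (hcov s.1 (hmemint s).1 (hmemint s).2).2
  have hG₁card : G₁.card = interiorF.card := by
    rw [hG₁, Finset.card_image_of_injective _ ?_, Finset.card_attach]
    intro s s' h
    apply Subtype.ext
    simpa [hφ₁] using congrArg (fun w => w.val 0) h
  have hG₂card : G₂.card = interiorF.card := by
    rw [hG₂, Finset.card_image_of_injective _ ?_, Finset.card_attach]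
    intro s s' h
    apply Subtype.ext
    simpa [hφ₂] using congrArg (fun w => w.val 0) h
  have hdisj : Disjoint G₁ G₂ := by
    rw [Finset.disjoint_left]
    intro z hz1 hz2
    obtain ⟨s, -, rfl⟩ := Finset.mem_image.mp hz1
    obtain ⟨t, -, ht⟩ := Finset.mem_image.mp hz2
    have e0 := congrArg (fun w => w.val 0) ht
    have e1 := congrArg (fun w => w.val 1) ht
    simp only [hφ₁, hφ₂, mk2_val0, mk2_val1] at e0 e1
    exact (hcov t.1 (hmemint t).1 (hmemint t).2).1.lt.ne (e0.trans e1.symm)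
  have hunioncard : (G₁ ∪ G₂).card = 2 * interiorF.card := by
    rw [Finset.card_union_of_disjoint hdisj, hG₁card, hG₂card]
    omega
  have hMIcard : Nat.card {x : MCover α 2 // MeetIrred x} = MIset.card := by
    rw [Nat.card_eq_fintype_card, Fintype.card_subtype]
  have hpl : MIset.card = posetLength (MCover α 2) := by
    rw [← hMIcard]
    exact hext.2
  have hlen2 := lenMC2_le (α := α)
  rcases hextra with ⟨a₃, hA3, h31, h32⟩ | ⟨c, hbc, hct, hcuniq⟩
  · have hK := hgt_top_le hA1 hA2 hne (some ⟨a₃, hA3, h31, h32⟩)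
    simp only [Option.isSome_some, if_true] at hK
    have hsub : G₁ ∪ G₂ ⊆ MIset := Finset.union_subset hG₁sub hG₂sub
    have := Finset.card_le_card hsub
    rw [hunioncard] at this
    rw [← hintF] at hK
    omega
  · have hK := hgt_top_le hA1 hA2 hne none
    simp only [Option.isSome_none, Bool.false_eq_true, if_false, add_zero] at hK
    set xbt := mk2 hbt ⊥ ⊤ bot_le (Or.inl rfl) with hxbt
    have hxbtMI : xbt ∈ MIset :=
      Finset.mem_filter.mpr ⟨Finset.mem_univ _, MI_bt hbt hbc hct hcuniq⟩
    have hnotin : xbt ∉ G₁ ∪ G₂ := by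
      intro hmem
      rcases Finset.mem_union.mp hmem with hm | hm
      · obtain ⟨s, -, hsx⟩ := Finset.mem_image.mp hm
        have := congrArg (fun w => w.val 0) hsx
        simp only [hφ₁, hxbt, mk2_val0] at this
        exact (hmemint s).1.ne' this
      · obtain ⟨s, -, hsx⟩ := Finset.mem_image.mp hm
        have := congrArg (fun w => w.val 0) hsx
        simp only [hφ₂, hxbt, mk2_val0] at this
        exact (hmemint s).1.ne' this
    have hsub : insert xbt (G₁ ∪ G₂) ⊆ MIset :=
      Finset.insert_subset hxbtMI (Finset.union_subset hG₁sub hG₂sub)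
    have hcardins : (insert xbt (G₁ ∪ G₂)).card = 2 * interiorF.card + 1 := by
      rw [Finset.card_insert_of_notMem hnotin, hunioncard]
    have := Finset.card_le_card hsub
    rw [hcardins] at this
    rw [← hintF] at hK
    omega

end Kills

section Covers

variable {α : Type*} [Fintype α] [PartialOrder α] [BoundedOrder α]

omit [Fintype α] in
lemma canon {m : ℕ} (x : MCover α m) :
    (∀ i, x.val i = ⊥) ∨
    (∃ (a : ℕ) (s : α), s ≠ ⊥ ∧ a < m ∧
      ∀ i : Fin m, x.val i = if (i : ℕ) < a then ⊥ else s) ∨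
    (∃ (a b : ℕ) (q₁ q₂ : α), q₁ ≠ ⊥ ∧ q₁ ⋖ q₂ ∧ 1 ≤ b ∧ a + b < m ∧
      ∀ i : Fin m, x.val i = if (i : ℕ) < a then ⊥ else if (i : ℕ) < a + b then q₁ else q₂) := by
  obtain ⟨l0, l1, l2, p1, p2, hs, hc, hf⟩ := x.2
  by_cases hp1 : p1 = ⊥
  · by_cases hl2 : m ≤ l0 + l1
    · left
      intro i
      rw [hf i]
      have := i.isLt
      by_cases h : (i : ℕ) < l0
      · rw [if_pos h]
      · rw [if_neg h, if_pos (by omega), hp1]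
    · right; left
      refine ⟨l0 + l1, p2, ?_, by omega, ?_⟩
      · exact fun h => (hp1 ▸ h ▸ hc.lt).false
      · intro i
        rw [hf i]
        by_cases h : (i : ℕ) < l0
        · rw [if_pos h, if_pos (by omega)]
        · by_cases h2 : (i : ℕ) < l0 + l1
          · rw [if_neg h, if_pos h2, if_pos h2, hp1]
          · rw [if_neg h, if_neg h2, if_neg h2]
  · by_cases hl1 : l1 = 0
    · by_cases hl0 : m ≤ l0
      · left
        intro i
        rw [hf i, if_pos (by have := i.isLt; omega)]
      · right; left
        refine ⟨l0, p2, fun h => (h ▸ (bot_le.trans_lt hc.lt)).false, by omega, ?_⟩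
        intro i
        rw [hf i]
        by_cases h : (i : ℕ) < l0
        · rw [if_pos h, if_pos h]
        · rw [if_neg h, if_neg (by omega), if_neg h]
    · by_cases hl2 : m ≤ l0 + l1
      · by_cases hl0 : m ≤ l0
        · left
          intro i
          rw [hf i, if_pos (by have := i.isLt; omega)]
        · right; left
          refine ⟨l0, p1, hp1, by omega, ?_⟩
          intro i
          rw [hf i]
          by_cases h : (i : ℕ) < l0
          · rw [if_pos h, if_pos h]
          · rw [if_neg h, if_pos (by have := i.isLt; omega), if_neg h]
      · right; right
        exact ⟨l0, l1, p1, p2, hp1, hc, by omega, by omega, hf⟩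

lemma le_lst {m : ℕ} (hm : 0 < m) (i : Fin m) : i ≤ (⟨m - 1, by omega⟩ : Fin m) := by
  rw [Fin.le_def]
  have := i.isLt
  exact (by omega : (i : ℕ) ≤ m - 1)

lemma cover_case0 {m : ℕ} (hm : 0 < m) (x z : MCover α m) (hx : ∀ i, x.val i = ⊥)
    (hz : x ⋖ z) :
    ∃ t, ((⊥ : α) ⋖ t) ∧ ∀ i : Fin m, z.val i = if (i : ℕ) < m - 1 then ⊥ else t := by
  have hle : ∀ i, x.val i ≤ z.val i := fun i => (Subtype.coe_le_coe.mpr hz.lt.le) i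
  set lst : Fin m := ⟨m - 1, by omega⟩ with hlst
  have hlstv : ((lst : Fin m) : ℕ) = m - 1 := rfl
  have hzl : (⊥ : α) < z.val lst := by
    rcases eq_or_lt_of_le (bot_le (a := z.val lst)) with h | h
    · exfalso
      apply hz.lt.ne
      apply Subtype.ext; funext i
      have h1 : z.val i ≤ z.val lst := MCmono z (le_lst hm i)
      rw [← h] at h1
      rw [hx i]
      exact (le_bot_iff.mp h1).symm
    · exact h
  obtain ⟨t, ht, htz⟩ := exists_covby_le hzl
  have hshape : IsMCoverTuple m (fun i : Fin m => if (i : ℕ) < m - 1 then ⊥ else t) := by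
    refine ⟨m - 1, 0, 1, ⊥, t, by omega, ht, fun i => ?_⟩
    beta_reduce
    by_cases h : (i : ℕ) < m - 1
    · rw [if_pos h, if_pos h]
    · rw [if_neg h, if_neg h, if_neg (by omega)]
  set w : MCover α m := ⟨_, hshape⟩ with hw
  have hxw : x < w := by
    refine lt_of_le_of_ne (Subtype.coe_le_coe.mp fun i => ?_) ?_
    · rw [hx i]; exact bot_le
    · intro h
      have h2 := congrArg (fun v : MCover α m => v.val lst) h
      simp only [hw] at h2
      rw [hx lst] at h2
      rw [if_neg (by omega : ¬ ((lst : Fin m) : ℕ) < m - 1)] at h2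
      exact ht.lt.ne h2
  have hwz : w ≤ z := by
    apply Subtype.coe_le_coe.mp
    intro i
    show (if ((i : Fin m) : ℕ) < m - 1 then ⊥ else t) ≤ z.val i
    by_cases h : (i : ℕ) < m - 1
    · rw [if_pos h]; exact bot_le
    · rw [if_neg h]
      have hieq : i = lst := Fin.ext (by have := i.isLt; omega)
      rw [hieq]
      exact htz
  rcases eq_or_lt_of_le hwz with heq | hlt
  · exact ⟨t, ht, fun i => by rw [← heq]⟩
  · exact absurd hlt (hz.2 hxw)

lemma cover_case1 {m : ℕ} (x z : MCover α m) {a : ℕ} {s : α} (hs : s ≠ ⊥) (ham : a < m)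
    (hx : ∀ i : Fin m, x.val i = if (i : ℕ) < a then ⊥ else s) (hz : x ⋖ z) :
    (∃ u, (s ⋖ u) ∧ ∀ i : Fin m, z.val i =
        if (i : ℕ) < a then ⊥ else if (i : ℕ) < m - 1 then s else u) ∨
    (∃ t, (t ⋖ s) ∧ t ≠ ⊥ ∧ 1 ≤ a ∧ ∀ i : Fin m, z.val i =
        if (i : ℕ) < a - 1 then ⊥ else if (i : ℕ) < a then t else s) ∨
    (1 ≤ a ∧ ∀ i : Fin m, z.val i = if (i : ℕ) < a - 1 then ⊥ else s) := by
  have hm : 0 < m := by omega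
  have hbt : (⊥ : α) < ⊤ := MCbt x
  have hle : ∀ i, x.val i ≤ z.val i := fun i => (Subtype.coe_le_coe.mpr hz.lt.le) i
  set lst : Fin m := ⟨m - 1, by omega⟩ with hlst
  have hlstv : ((lst : Fin m) : ℕ) = m - 1 := rfl
  have hxl : x.val lst = s := by
    rw [hx lst, if_neg (by omega : ¬ ((lst : Fin m) : ℕ) < a)]
  have hsl : s ≤ z.val lst := hxl ▸ hle lst
  by_cases hB : z.val lst = s
  · -- top coordinate still s : A-type or A'-type
    have hcoord : ∀ i : Fin m, a ≤ (i : ℕ) → z.val i = s := by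
      intro i hi
      have h1 : z.val i ≤ s := hB ▸ MCmono z (le_lst hm i)
      have h2 : s ≤ z.val i := by
        have := hle i; rwa [hx i, if_neg (by omega)] at this
      exact le_antisymm h1 h2
    have hdiff : ∃ i : Fin m, (i : ℕ) < a ∧ z.val i ≠ ⊥ := by
      by_contra hcon
      push_neg at hcon
      apply hz.lt.ne
      apply Subtype.ext; funext i
      rw [hx i]
      by_cases h1 : (i : ℕ) < a
      · rw [if_pos h1]; exact (hcon i h1).symm
      · rw [if_neg h1]; exact (hcoord i (by omega)).symm
    obtain ⟨i₀, hi₀a, hi₀⟩ := hdiff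
    have ha1 : 1 ≤ a := by have := i₀.isLt; omega
    set am1 : Fin m := ⟨a - 1, by omega⟩ with ham1
    have ham1v : ((am1 : Fin m) : ℕ) = a - 1 := rfl
    set v := z.val am1 with hv
    have hvne : v ≠ ⊥ := by
      intro h
      apply hi₀
      have h1 : z.val i₀ ≤ v := MCmono z (by rw [Fin.le_def]; exact (by omega : (i₀ : ℕ) ≤ a - 1))
      rw [h] at h1
      exact le_bot_iff.mp h1
    have hvs : v ≤ s := by
      have h1 : v ≤ z.val ⟨a, ham⟩ :=
        MCmono z (by rw [Fin.le_def]; exact (by omega : a - 1 ≤ a))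
      rwa [hcoord ⟨a, ham⟩ (le_refl a)] at h1
    rcases eq_or_lt_of_le hvs with hveq | hvlt
    · -- A'-type
      right; right
      refine ⟨ha1, ?_⟩
      have hshape : IsMCoverTuple m (fun i : Fin m => if (i : ℕ) < a - 1 then ⊥ else s) := by
        by_cases hstop : s = ⊤
        · obtain ⟨t', -, ht'⟩ := exists_le_covby hbt
          refine ⟨a - 1, 0, m - a + 1, t', ⊤, by omega, ht', fun i => ?_⟩
          beta_reduce
          by_cases h : (i : ℕ) < a - 1
          · rw [if_pos h, if_pos h]
          · rw [if_neg h, if_neg h, if_neg (by omega), hstop]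
        · obtain ⟨u', hu', -⟩ := exists_covby_le (lt_top_iff_ne_top.mpr hstop)
          refine ⟨a - 1, m - a + 1, 0, s, u', by omega, hu', fun i => ?_⟩
          beta_reduce
          by_cases h : (i : ℕ) < a - 1
          · rw [if_pos h, if_pos h]
          · rw [if_neg h, if_neg h, if_pos (by have := i.isLt; omega)]
      set w : MCover α m := ⟨_, hshape⟩ with hw
      have hxw : x < w := by
        refine lt_of_le_of_ne (Subtype.coe_le_coe.mp fun i => ?_) ?_
        · rw [hx i]
          show _ ≤ (if ((i : Fin m) : ℕ) < a - 1 then ⊥ else s)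
          by_cases h1 : (i : ℕ) < a
          · rw [if_pos h1]; exact bot_le
          · rw [if_neg h1, if_neg (by omega)]
        · intro h
          have h2 := congrArg (fun v : MCover α m => v.val am1) h
          simp only [hw] at h2
          rw [hx am1, if_pos (by omega : ((am1 : Fin m) : ℕ) < a)] at h2
          rw [if_neg (by omega : ¬ ((am1 : Fin m) : ℕ) < a - 1)] at h2
          exact hs h2.symm
      have hwz : w ≤ z := by
        apply Subtype.coe_le_coe.mp
        intro i
        show (if ((i : Fin m) : ℕ) < a - 1 then ⊥ else s) ≤ z.val i
        by_cases h1 : (i : ℕ) < a - 1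
        · rw [if_pos h1]; exact bot_le
        · rw [if_neg h1]
          by_cases h2 : (i : ℕ) < a
          · have hieq : i = am1 := Fin.ext (by omega)
            rw [hieq, ← hv, ← hveq]
          · rw [hcoord i (by omega)]
      rcases eq_or_lt_of_le hwz with heq | hlt
      · exact fun i => by rw [← heq]
      · exact absurd hlt (hz.2 hxw)
    · -- A-type with v ⋖ s
      right; left
      obtain ⟨k0, k1, k2, r1, r2, hks, hkc, hkf⟩ := z.2
      have hvval : v = if ((am1 : Fin m) : ℕ) < k0 then ⊥
          else if ((am1 : Fin m) : ℕ) < k0 + k1 then r1 else r2 := hkf am1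
      have hsval : s = if ((lst : Fin m) : ℕ) < k0 then ⊥
          else if ((lst : Fin m) : ℕ) < k0 + k1 then r1 else r2 := hB ▸ hkf lst
      have hvor : v = r1 ∨ v = r2 := by
        by_cases c1 : ((am1 : Fin m) : ℕ) < k0
        · rw [if_pos c1] at hvval; exact absurd hvval hvne
        · by_cases c2 : ((am1 : Fin m) : ℕ) < k0 + k1
          · rw [if_neg c1, if_pos c2] at hvval; exact Or.inl hvval
          · rw [if_neg c1, if_neg c2] at hvval; exact Or.inr hvval
      have hsor : s = r1 ∨ s = r2 := by
        by_cases c1 : ((lst : Fin m) : ℕ) < k0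
        · rw [if_pos c1] at hsval; exact absurd hsval hs
        · by_cases c2 : ((lst : Fin m) : ℕ) < k0 + k1
          · rw [if_neg c1, if_pos c2] at hsval; exact Or.inl hsval
          · rw [if_neg c1, if_neg c2] at hsval; exact Or.inr hsval
      have hvcov : v ⋖ s := by
        rcases hvor with h1 | h1 <;> rcases hsor with h2 | h2
        · exact absurd (h1.trans h2.symm) hvlt.ne
        · rw [h1, h2]; exact hkc
        · exfalso
          rw [h1, h2] at hvlt
          exact (hkc.lt.trans hvlt).false
        · exact absurd (h1.trans h2.symm) hvlt.ne
      refine ⟨v, hvcov, hvne, ha1, ?_⟩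
      have hshape : IsMCoverTuple m
          (fun i : Fin m => if (i : ℕ) < a - 1 then ⊥ else if (i : ℕ) < a then v else s) := by
        refine ⟨a - 1, 1, m - a, v, s, by omega, hvcov, fun i => ?_⟩
        beta_reduce
        by_cases h1 : (i : ℕ) < a - 1
        · rw [if_pos h1, if_pos h1]
        · by_cases h2 : (i : ℕ) < a
          · rw [if_neg h1, if_pos h2, if_neg h1, if_pos (by omega)]
          · rw [if_neg h1, if_neg h2, if_neg h1, if_neg (by omega)]
      set w : MCover α m := ⟨_, hshape⟩ with hw
      have hxw : x < w := by
        refine lt_of_le_of_ne (Subtype.coe_le_coe.mp fun i => ?_) ?_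
        · rw [hx i]
          show _ ≤ (if ((i : Fin m) : ℕ) < a - 1 then ⊥
              else if ((i : Fin m) : ℕ) < a then v else s)
          by_cases h1 : (i : ℕ) < a
          · rw [if_pos h1]; exact bot_le
          · rw [if_neg h1, if_neg (by omega), if_neg (by omega)]
        · intro h
          have h2 := congrArg (fun vv : MCover α m => vv.val am1) h
          simp only [hw] at h2
          rw [hx am1, if_pos (by omega : ((am1 : Fin m) : ℕ) < a)] at h2
          rw [if_neg (by omega : ¬ ((am1 : Fin m) : ℕ) < a - 1),
            if_pos (by omega : ((am1 : Fin m) : ℕ) < a)] at h2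
          exact hvne h2.symm
      have hwz : w ≤ z := by
        apply Subtype.coe_le_coe.mp
        intro i
        show (if ((i : Fin m) : ℕ) < a - 1 then ⊥
            else if ((i : Fin m) : ℕ) < a then v else s) ≤ z.val i
        by_cases h1 : (i : ℕ) < a - 1
        · rw [if_pos h1]; exact bot_le
        · by_cases h2 : (i : ℕ) < a
          · rw [if_neg h1, if_pos h2]
            have hieq : i = am1 := Fin.ext (by omega)
            rw [hieq]
          · rw [if_neg h1, if_neg h2, hcoord i (by omega)]
      rcases eq_or_lt_of_le hwz with heq | hlt
      · exact fun i => by rw [← heq]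
      · exact absurd hlt (hz.2 hxw)
  · -- B-type
    left
    have hslt : s < z.val lst := lt_of_le_of_ne hsl (Ne.symm hB)
    obtain ⟨u, hu, huz⟩ := exists_covby_le hslt
    refine ⟨u, hu, ?_⟩
    have hshape : IsMCoverTuple m (fun i : Fin m =>
        if (i : ℕ) < a then ⊥ else if (i : ℕ) < m - 1 then s else u) := by
      refine ⟨a, m - 1 - a, 1, s, u, by omega, hu, fun i => ?_⟩
      beta_reduce
      have := i.isLt
      by_cases h1 : (i : ℕ) < a
      · rw [if_pos h1, if_pos h1]
      · by_cases h2 : (i : ℕ) < m - 1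
        · rw [if_neg h1, if_pos h2, if_neg h1, if_pos (by omega)]
        · rw [if_neg h1, if_neg h2, if_neg h1, if_neg (by omega)]
    set w : MCover α m := ⟨_, hshape⟩ with hw
    have hxw : x < w := by
      refine lt_of_le_of_ne (Subtype.coe_le_coe.mp fun i => ?_) ?_
      · rw [hx i]
        show _ ≤ (if ((i : Fin m) : ℕ) < a then ⊥
            else if ((i : Fin m) : ℕ) < m - 1 then s else u)
        by_cases h1 : (i : ℕ) < a
        · rw [if_pos h1]; exact bot_le
        · by_cases h2 : (i : ℕ) < m - 1
          · rw [if_neg h1, if_neg h1, if_pos h2]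
          · rw [if_neg h1, if_neg h1, if_neg h2]; exact hu.le
      · intro h
        have h2 := congrArg (fun v : MCover α m => v.val lst) h
        simp only [hw] at h2
        rw [hxl] at h2
        rw [if_neg (by omega : ¬ ((lst : Fin m) : ℕ) < a),
          if_neg (by omega : ¬ ((lst : Fin m) : ℕ) < m - 1)] at h2
        exact hu.lt.ne h2
    have hwz : w ≤ z := by
      apply Subtype.coe_le_coe.mp
      intro i
      show (if ((i : Fin m) : ℕ) < a then ⊥
          else if ((i : Fin m) : ℕ) < m - 1 then s else u) ≤ z.val i
      by_cases h1 : (i : ℕ) < a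
      · rw [if_pos h1]; exact bot_le
      · by_cases h2 : (i : ℕ) < m - 1
        · rw [if_neg h1, if_pos h2]
          have := hle i
          rwa [hx i, if_neg h1] at this
        · rw [if_neg h1, if_neg h2]
          have hieq : i = lst := Fin.ext (by have := i.isLt; omega)
          rw [hieq]
          exact huz
    rcases eq_or_lt_of_le hwz with heq | hlt
    · exact fun i => by rw [← heq]
    · exact absurd hlt (hz.2 hxw)

end Covers

section Covers2

variable {α : Type*} [Fintype α] [PartialOrder α] [BoundedOrder α]

lemma cover_case2 {m : ℕ} (x z : MCover α m) {a b : ℕ} {q₁ q₂ : α} (hq1 : q₁ ≠ ⊥)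
    (hq : q₁ ⋖ q₂) (hb : 1 ≤ b) (habm : a + b < m)
    (hx : ∀ i : Fin m, x.val i = if (i : ℕ) < a then ⊥ else if (i : ℕ) < a + b then q₁ else q₂)
    (hz : x ⋖ z) :
    (∀ i : Fin m, z.val i =
        if (i : ℕ) < a then ⊥ else if (i : ℕ) < a + b - 1 then q₁ else q₂) ∨
    (1 ≤ a ∧ ∀ i : Fin m, z.val i =
        if (i : ℕ) < a - 1 then ⊥ else if (i : ℕ) < a + b then q₁ else q₂) ∨
    (∃ w, q₁ ⋖ w ∧ w ≠ q₂) := by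
  have hm : 0 < m := by omega
  have hle : ∀ i, x.val i ≤ z.val i := fun i => (Subtype.coe_le_coe.mpr hz.lt.le) i
  set ix : Fin m := ⟨a + b - 1, by omega⟩ with hix
  have hixv : ((ix : Fin m) : ℕ) = a + b - 1 := rfl
  have hxix : x.val ix = q₁ := by
    rw [hx ix, if_neg (by omega), if_pos (by omega)]
  have hq₁le : q₁ ≤ z.val ix := hxix ▸ hle ix
  by_cases hcase : q₂ ≤ z.val ix
  · -- u₁ form
    left
    have hshape : IsMCoverTuple m (fun i : Fin m =>
        if (i : ℕ) < a then ⊥ else if (i : ℕ) < a + b - 1 then q₁ else q₂) := by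
      refine ⟨a, b - 1, m - a - b + 1, q₁, q₂, by omega, hq, fun i => ?_⟩
      beta_reduce
      by_cases h1 : (i : ℕ) < a
      · rw [if_pos h1, if_pos h1]
      · by_cases h2 : (i : ℕ) < a + b - 1
        · rw [if_neg h1, if_pos h2, if_neg h1, if_pos (by omega)]
        · rw [if_neg h1, if_neg h2, if_neg h1, if_neg (by omega)]
    set w : MCover α m := ⟨_, hshape⟩ with hw
    have hxw : x < w := by
      refine lt_of_le_of_ne (Subtype.coe_le_coe.mp fun i => ?_) ?_
      · rw [hx i]
        show _ ≤ (if ((i : Fin m) : ℕ) < a then ⊥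
            else if ((i : Fin m) : ℕ) < a + b - 1 then q₁ else q₂)
        by_cases h1 : (i : ℕ) < a
        · rw [if_pos h1, if_pos h1]
        · by_cases h2 : (i : ℕ) < a + b - 1
          · rw [if_neg h1, if_pos (by omega : (i : ℕ) < a + b), if_neg h1, if_pos h2]
          · rw [if_neg h1, if_neg h1, if_neg h2]
            by_cases h3 : (i : ℕ) < a + b
            · rw [if_pos h3]; exact hq.le
            · rw [if_neg h3]
      · intro h
        have h2 := congrArg (fun v : MCover α m => v.val ix) h
        simp only [hw] at h2
        beta_reduce at h2
        rw [hxix, if_neg (by omega), if_neg (by omega)] at h2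
        exact hq.lt.ne h2
    have hwz : w ≤ z := by
      apply Subtype.coe_le_coe.mp
      intro i
      show (if ((i : Fin m) : ℕ) < a then ⊥
          else if ((i : Fin m) : ℕ) < a + b - 1 then q₁ else q₂) ≤ z.val i
      by_cases h1 : (i : ℕ) < a
      · rw [if_pos h1]; exact bot_le
      · by_cases h2 : (i : ℕ) < a + b - 1
        · rw [if_neg h1, if_pos h2]
          have := hle i
          rwa [hx i, if_neg h1, if_pos (by omega)] at this
        · rw [if_neg h1, if_neg h2]
          by_cases h3 : (i : ℕ) = a + b - 1
          · have hieq : i = ix := Fin.ext (by omega)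
            rw [hieq]; exact hcase
          · have := hle i
            rwa [hx i, if_neg h1, if_neg (by omega)] at this
    rcases eq_or_lt_of_le hwz with heq | hlt
    · exact fun i => by rw [← heq]
    · exact absurd hlt (hz.2 hxw)
  · by_cases hβ : z.val ix = q₁
    · -- u₂ form
      right; left
      have hcoord1 : ∀ i : Fin m, a ≤ (i : ℕ) → (i : ℕ) < a + b → z.val i = q₁ := by
        intro i hi1 hi2
        have ha' : z.val i ≤ q₁ := hβ ▸ MCmono z (by rw [Fin.le_def]; omega)
        have hb' : q₁ ≤ z.val i := by
          have := hle i; rwa [hx i, if_neg (by omega), if_pos hi2] at this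
        exact le_antisymm ha' hb'
      have hvalz : ∀ j : Fin m, z.val j ≠ ⊥ →
          ∃ (k0 k1 : ℕ) (r1 r2 : α), True := fun _ _ => ⟨0, 0, ⊥, ⊥, trivial⟩
      have hcoord2 : ∀ i : Fin m, a + b ≤ (i : ℕ) → z.val i = q₂ := by
        intro i hi1
        have hgeq : q₂ ≤ z.val i := by
          have := hle i; rwa [hx i, if_neg (by omega), if_neg (by omega)] at this
        obtain ⟨k0, k1, k2, r1, r2, hks, hkc, hkf⟩ := z.2
        have hzix := hkf ix
        rw [hβ] at hzix
        have hzi := hkf i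
        have hiix : ((ix : Fin m) : ℕ) ≤ (i : ℕ) := by omega
        by_cases c1 : ((ix : Fin m) : ℕ) < k0
        · rw [if_pos c1] at hzix; exact absurd hzix hq1
        · by_cases c2 : ((ix : Fin m) : ℕ) < k0 + k1
          · rw [if_neg c1, if_pos c2] at hzix
            by_cases d2 : ((i : Fin m) : ℕ) < k0 + k1
            · rw [if_neg (by omega), if_pos d2] at hzi
              exfalso
              rw [hzi, ← hzix] at hgeq
              exact (hq.lt.trans_le hgeq).false
            · rw [if_neg (by omega), if_neg d2] at hzi
              rw [hzi]
              rw [hzi] at hgeq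
              rcases eq_or_lt_of_le hgeq with heq2 | hlt2
              · exact heq2.symm
              · exact absurd hlt2 (hkc.2 (hzix ▸ hq.lt))
          · rw [if_neg c1, if_neg c2] at hzix
            exfalso
            have hler2 : z.val i ≤ r2 := by
              rw [hzi]
              by_cases d1 : ((i : Fin m) : ℕ) < k0
              · rw [if_pos d1]; exact bot_le
              · by_cases d2 : ((i : Fin m) : ℕ) < k0 + k1
                · rw [if_neg d1, if_pos d2]; exact hkc.le
                · rw [if_neg d1, if_neg d2]
            have : q₂ ≤ r2 := hgeq.trans hler2
            rw [← hzix] at this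
            exact (hq.lt.trans_le this).false
      have hdiff : ∃ i : Fin m, (i : ℕ) < a ∧ z.val i ≠ ⊥ := by
        by_contra hcon
        push_neg at hcon
        apply hz.lt.ne
        apply Subtype.ext; funext i
        rw [hx i]
        by_cases h1 : (i : ℕ) < a
        · rw [if_pos h1]; exact (hcon i h1).symm
        · by_cases h2 : (i : ℕ) < a + b
          · rw [if_neg h1, if_pos h2]; exact (hcoord1 i (by omega) h2).symm
          · rw [if_neg h1, if_neg h2]; exact (hcoord2 i (by omega)).symm
      obtain ⟨i₀, hi₀a, hi₀⟩ := hdiff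
      have ha1 : 1 ≤ a := by have := i₀.isLt; omega
      refine ⟨ha1, ?_⟩
      set am1 : Fin m := ⟨a - 1, by omega⟩ with ham1
      have ham1v : ((am1 : Fin m) : ℕ) = a - 1 := rfl
      set v := z.val am1 with hv
      have hvne : v ≠ ⊥ := by
        intro h
        apply hi₀
        have h1 : z.val i₀ ≤ v :=
          MCmono z (by rw [Fin.le_def]; exact (by omega : (i₀ : ℕ) ≤ a - 1))
        rw [h] at h1
        exact le_bot_iff.mp h1
      have hvq1 : v ≤ q₁ := by
        have h1 : v ≤ z.val ⟨a, by omega⟩ :=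
          MCmono z (by rw [Fin.le_def]; exact (by omega : a - 1 ≤ a))
        rwa [hcoord1 ⟨a, by omega⟩ (le_refl a) (by omega : a < a + b)] at h1
      have hveq : v = q₁ := by
        rcases eq_or_lt_of_le hvq1 with h | h
        · exact h
        exfalso
        obtain ⟨k0, k1, k2, r1, r2, hks, hkc, hkf⟩ := z.2
        set lst : Fin m := ⟨m - 1, by omega⟩ with hlst
        have hlstv : ((lst : Fin m) : ℕ) = m - 1 := rfl
        have hq2l : z.val lst = q₂ := hcoord2 lst (by omega)
        have hval : ∀ j : Fin m, z.val j ≠ ⊥ → z.val j = r1 ∨ z.val j = r2 := by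
          intro j hj
          have hjf := hkf j
          by_cases c1 : (j : ℕ) < k0
          · rw [if_pos c1] at hjf; exact absurd hjf hj
          · by_cases c2 : (j : ℕ) < k0 + k1
            · rw [if_neg c1, if_pos c2] at hjf; exact Or.inl hjf
            · rw [if_neg c1, if_neg c2] at hjf; exact Or.inr hjf
        have h1 := hval am1 hvne
        have h2 := hval ix (by rw [hβ]; exact hq1)
        have h3 := hval lst (by rw [hq2l]; exact (bot_le.trans_lt hq.lt).ne')
        rw [hβ] at h2
        rw [hq2l] at h3
        rw [← hv] at h1
        rcases h1 with e1 | e1 <;> rcases h2 with e2 | e2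
        · exact h.ne (e1.trans e2.symm)
        · rcases h3 with e3 | e3
          · exact (h.trans hq.lt).ne (e1.trans e3.symm)
          · exact hq.lt.ne (e2.trans e3.symm)
        · rw [e1, e2] at h
          exact (hkc.lt.trans h).false
        · exact h.ne (e1.trans e2.symm)
      have hshape : IsMCoverTuple m (fun i : Fin m =>
          if (i : ℕ) < a - 1 then ⊥ else if (i : ℕ) < a + b then q₁ else q₂) := by
        refine ⟨a - 1, b + 1, m - a - b, q₁, q₂, by omega, hq, fun i => ?_⟩
        beta_reduce
        by_cases h1 : (i : ℕ) < a - 1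
        · rw [if_pos h1, if_pos h1]
        · by_cases h2 : (i : ℕ) < a + b
          · rw [if_neg h1, if_pos h2, if_neg h1, if_pos (by omega)]
          · rw [if_neg h1, if_neg h2, if_neg h1, if_neg (by omega)]
      set w : MCover α m := ⟨_, hshape⟩ with hw
      have hxw : x < w := by
        refine lt_of_le_of_ne (Subtype.coe_le_coe.mp fun i => ?_) ?_
        · rw [hx i]
          show _ ≤ (if ((i : Fin m) : ℕ) < a - 1 then ⊥
              else if ((i : Fin m) : ℕ) < a + b then q₁ else q₂)
          by_cases h1 : (i : ℕ) < a
          · rw [if_pos h1]; exact bot_le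
          · by_cases h2 : (i : ℕ) < a + b
            · rw [if_neg h1, if_neg (by omega : ¬ (i : ℕ) < a - 1)]
            · rw [if_neg h1, if_neg (by omega : ¬ (i : ℕ) < a - 1)]
        · intro h
          have h2 := congrArg (fun vv : MCover α m => vv.val am1) h
          simp only [hw] at h2
          beta_reduce at h2
          rw [hx am1, if_pos (by omega)] at h2
          rw [if_neg (by omega), if_pos (by omega)] at h2
          exact hq1 h2.symm
      have hwz : w ≤ z := by
        apply Subtype.coe_le_coe.mp
        intro i
        show (if ((i : Fin m) : ℕ) < a - 1 then ⊥
            else if ((i : Fin m) : ℕ) < a + b then q₁ else q₂) ≤ z.val i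
        by_cases h1 : (i : ℕ) < a - 1
        · rw [if_pos h1]; exact bot_le
        · by_cases h2 : (i : ℕ) < a + b
          · rw [if_neg h1, if_pos h2]
            by_cases h3 : (i : ℕ) < a
            · have hieq : i = am1 := Fin.ext (by omega)
              rw [hieq, ← hv, hveq]
            · rw [hcoord1 i (by omega) h2]
          · rw [if_neg h1, if_neg h2, hcoord2 i (by omega)]
      rcases eq_or_lt_of_le hwz with heq | hlt
      · exact fun i => by rw [← heq]
      · exact absurd hlt (hz.2 hxw)
    · -- exotic
      right; right
      have hlt : q₁ < z.val ix := lt_of_le_of_ne hq₁le (Ne.symm hβ)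
      obtain ⟨w, hw, hwle⟩ := exists_covby_le hlt
      refine ⟨w, hw, ?_⟩
      rintro rfl
      exact hcase hwle

lemma comparable_above (hbt : (⊥ : α) < ⊤) (h1 : IsLatticeOrder (MCover α 1))
    (h2 : IsLatticeOrder (MCover α 2)) :
    ∀ s : α, ⊥ < s → ∀ u v : α, s ≤ u → s ≤ v → u ≤ v ∨ v ≤ u := by
  intro s
  induction s using WellFoundedGT.induction with
  | ind s IH =>
    intro hs u v hsu hsv
    rcases eq_or_lt_of_le hsu with rfl | hu
    · exact Or.inl hsv
    rcases eq_or_lt_of_le hsv with rfl | hv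
    · exact Or.inr hu.le
    obtain ⟨c, hc, hcu⟩ := exists_covby_le hu
    obtain ⟨c', hc', hcv⟩ := exists_covby_le hv
    have hcc : c' = c := cover_unique hbt h1 h2 hs hc' hc
    subst hcc
    exact IH c' hc'.lt (hs.trans hc'.lt) u v hcu hcv

end Covers2

section Dispatch

variable {α : Type*} [Fintype α] [PartialOrder α] [BoundedOrder α]

lemma killE3 (hbt : (⊥ : α) < ⊤) (h1 : IsLatticeOrder (MCover α 1))
    (h2 : IsLatticeOrder (MCover α 2)) (hext : Extremal (MCover α 2))
    {s t₁ t₂ : α} (hs : (⊥ : α) < s) (hst : s < ⊤) (hc₁ : t₁ ⋖ s) (hc₂ : t₂ ⋖ s)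
    (hne : t₁ ≠ t₂) (hb₁ : t₁ ≠ ⊥) (hb₂ : t₂ ≠ ⊥) : False := by
  obtain ⟨a₁, ha₁, ha₁t⟩ := exists_covby_le (bot_lt_iff_ne_bot.mpr hb₁)
  obtain ⟨a₂, ha₂, ha₂t⟩ := exists_covby_le (bot_lt_iff_ne_bot.mpr hb₂)
  have hane : a₁ ≠ a₂ := by
    rintro rfl
    rcases comparable_above hbt h1 h2 a₁ ha₁.lt t₁ t₂ ha₁t ha₂t with h | h
    · rcases eq_or_lt_of_le h with h' | h'
      · exact hne h'
      · exact hc₁.2 h' hc₂.lt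
    · rcases eq_or_lt_of_le h with h' | h'
      · exact hne h'.symm
      · exact hc₂.2 h' hc₁.lt
  by_cases h3 : ∃ a₃, ((⊥ : α) ⋖ a₃) ∧ a₃ ≠ a₁ ∧ a₃ ≠ a₂
  · obtain ⟨a₃, h3'⟩ := h3
    exact countkill hbt h1 h2 hext ha₁ ha₂ hane (Or.inl ⟨a₃, h3'⟩)
  · push_neg at h3
    have hsa₁ : a₁ ≤ s := ha₁t.trans hc₁.le
    have hsa₂ : a₂ ≤ s := ha₂t.trans hc₂.le
    have hco : ∀ d, d ⋖ ⊤ → s ≤ d := by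
      intro d hd
      have hdb : (⊥ : α) < d := by
        rcases eq_or_lt_of_le (bot_le (a := d)) with h | h
        · exact absurd hst ((h ▸ hd).2 hs)
        · exact h
      obtain ⟨ad, had, hadd⟩ := exists_covby_le hdb
      have hads : ad ≤ s := by
        by_cases h' : ad = a₁
        · exact h' ▸ hsa₁
        · exact (h3 ad had h') ▸ hsa₂
      rcases comparable_above hbt h1 h2 ad had.lt d s hadd hads with h' | h'
      · rcases eq_or_lt_of_le h' with h'' | h''
        · exact h''.ge
        · exact absurd hst (hd.2 h'')
      · exact h'
    obtain ⟨c₀, -, hc₀⟩ := exists_le_covby hbt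
    have huniqc : ∀ d, d ⋖ ⊤ → d = c₀ := by
      intro d hd
      rcases comparable_above hbt h1 h2 s hs d c₀ (hco d hd) (hco c₀ hc₀) with h' | h'
      · rcases eq_or_lt_of_le h' with h'' | h''
        · exact h''
        · exact absurd hc₀.lt (hd.2 h'')
      · rcases eq_or_lt_of_le h' with h'' | h''
        · exact h''.symm
        · exact absurd hd.lt (hc₀.2 h'')
    exact countkill hbt h1 h2 hext ha₁ ha₂ hane
      (Or.inr ⟨c₀, hs.trans_le (hco c₀ hc₀), hc₀, huniqc⟩)

lemma kill3coatoms (hbt : (⊥ : α) < ⊤) (h1 : IsLatticeOrder (MCover α 1))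
    (h2 : IsLatticeOrder (MCover α 2)) (hext : Extremal (MCover α 2))
    {c₁ c₂ c₃ : α} (hc₁ : c₁ ⋖ ⊤) (hc₂ : c₂ ⋖ ⊤) (hc₃ : c₃ ⋖ ⊤)
    (hb₁ : c₁ ≠ ⊥) (hb₂ : c₂ ≠ ⊥) (hb₃ : c₃ ≠ ⊥)
    (h12 : c₁ ≠ c₂) (h13 : c₁ ≠ c₃) (h23 : c₂ ≠ c₃) : False := by
  obtain ⟨a₁, ha₁, ha₁c⟩ := exists_covby_le (bot_lt_iff_ne_bot.mpr hb₁)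
  obtain ⟨a₂, ha₂, ha₂c⟩ := exists_covby_le (bot_lt_iff_ne_bot.mpr hb₂)
  obtain ⟨a₃, ha₃, ha₃c⟩ := exists_covby_le (bot_lt_iff_ne_bot.mpr hb₃)
  have key : ∀ {a c c' : α}, ((⊥ : α) ⋖ a) → a ≤ c → a ≤ c' → c ⋖ ⊤ → c' ⋖ ⊤ → c ≠ c' →
      False := by
    intro a c c' ha hac hac' hc hc' hnecc
    rcases comparable_above hbt h1 h2 a ha.lt c c' hac hac' with h | h
    · rcases eq_or_lt_of_le h with h' | h'
      · exact hnecc h'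
      · exact absurd hc'.lt (hc.2 h')
    · rcases eq_or_lt_of_le h with h' | h'
      · exact hnecc h'.symm
      · exact absurd hc.lt (hc'.2 h')
  have hane12 : a₁ ≠ a₂ := fun h => key ha₁ ha₁c (h ▸ ha₂c) hc₁ hc₂ h12
  have hane13 : a₁ ≠ a₃ := fun h => key ha₁ ha₁c (h ▸ ha₃c) hc₁ hc₃ h13
  have hane23 : a₂ ≠ a₃ := fun h => key ha₂ ha₂c (h ▸ ha₃c) hc₂ hc₃ h23
  exact countkill hbt h1 h2 hext ha₁ ha₂ hane12 (Or.inl ⟨a₃, ha₃, hane13.symm, hane23.symm⟩)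

lemma no_three_covers {m : ℕ} (hbt : (⊥ : α) < ⊤) (h1 : IsLatticeOrder (MCover α 1))
    (h2 : IsLatticeOrder (MCover α 2)) (hext : Extremal (MCover α 2))
    (x z₁ z₂ z₃ : MCover α m) (hz1 : x ⋖ z₁) (hz2 : x ⋖ z₂) (hz3 : x ⋖ z₃)
    (h12 : z₁ ≠ z₂) (h13 : z₁ ≠ z₃) (h23 : z₂ ≠ z₃) : False := by
  have hm : 0 < m := by
    by_contra hm0
    apply hz1.lt.ne
    apply Subtype.ext; funext i
    exact absurd i.isLt (by omega)
  rcases canon x with hx | ⟨a, s, hs, ham, hx⟩ | ⟨a, b, q₁, q₂, hq1, hq, hb, habm, hx⟩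
  · -- bottom tuple
    obtain ⟨t₁, ht₁, hf₁⟩ := cover_case0 hm x z₁ hx hz1
    obtain ⟨t₂, ht₂, hf₂⟩ := cover_case0 hm x z₂ hx hz2
    obtain ⟨t₃, ht₃, hf₃⟩ := cover_case0 hm x z₃ hx hz3
    have hkey : ∀ {t t' : α} {z z' : MCover α m},
        (∀ i : Fin m, z.val i = if (i : ℕ) < m - 1 then ⊥ else t) →
        (∀ i : Fin m, z'.val i = if (i : ℕ) < m - 1 then ⊥ else t') → t = t' → z = z' := by
      intro t t' z z' hf hf' htt
      apply Subtype.ext; funext i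
      rw [hf i, hf' i, htt]
    exact countkill hbt h1 h2 hext ht₁ ht₂ (fun h => h12 (hkey hf₁ hf₂ h))
      (Or.inl ⟨t₃, ht₃, fun h => h13 (hkey hf₁ hf₃ h.symm), fun h => h23 (hkey hf₂ hf₃ h.symm)⟩)
  · -- single-value tuple
    have hsb : (⊥ : α) < s := bot_lt_iff_ne_bot.mpr hs
    have hBB : ∀ {u u' : α} {z z' : MCover α m},
        (∀ i : Fin m, z.val i = if (i : ℕ) < a then ⊥ else if (i : ℕ) < m - 1 then s else u) →
        (∀ i : Fin m, z'.val i =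
          if (i : ℕ) < a then ⊥ else if (i : ℕ) < m - 1 then s else u') →
        z ≠ z' → u ≠ u' := by
      intro u u' z z' hf hf' hzz
      rintro rfl
      exact hzz (Subtype.ext (funext fun i => (hf i).trans (hf' i).symm))
    have hAA : ∀ {t t' : α} {z z' : MCover α m},
        (∀ i : Fin m, z.val i = if (i : ℕ) < a - 1 then ⊥ else if (i : ℕ) < a then t else s) →
        (∀ i : Fin m, z'.val i =
          if (i : ℕ) < a - 1 then ⊥ else if (i : ℕ) < a then t' else s) →
        z ≠ z' → t ≠ t' := by
      intro t t' z z' hf hf' hzz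
      rintro rfl
      exact hzz (Subtype.ext (funext fun i => (hf i).trans (hf' i).symm))
    have hPP : ∀ {z z' : MCover α m},
        (∀ i : Fin m, z.val i = if (i : ℕ) < a - 1 then ⊥ else s) →
        (∀ i : Fin m, z'.val i = if (i : ℕ) < a - 1 then ⊥ else s) → z = z' := by
      intro z z' hf hf'
      exact Subtype.ext (funext fun i => (hf i).trans (hf' i).symm)
    have hAP : ∀ {t : α} {z z' : MCover α m}, t ⋖ s → 1 ≤ a →
        (∀ i : Fin m, z.val i = if (i : ℕ) < a - 1 then ⊥ else if (i : ℕ) < a then t else s) →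
        (∀ i : Fin m, z'.val i = if (i : ℕ) < a - 1 then ⊥ else s) →
        (x < z) → (x ⋖ z') → False := by
      intro t z z' ht ha' hfz hfz' hxz hcz'
      have hlt : z < z' := by
        refine lt_of_le_of_ne (Subtype.coe_le_coe.mp fun i => ?_) ?_
        · rw [hfz i, hfz' i]
          by_cases hx1 : (i : ℕ) < a - 1
          · rw [if_pos hx1, if_pos hx1]
          · by_cases hx2 : (i : ℕ) < a
            · rw [if_neg hx1, if_pos hx2, if_neg hx1]; exact ht.le
            · rw [if_neg hx1, if_neg hx2, if_neg hx1]
        · intro h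
          set idx : Fin m := ⟨a - 1, by omega⟩ with hidx
          have hidxv : ((idx : Fin m) : ℕ) = a - 1 := rfl
          have h2 := congrArg (fun vv : MCover α m => vv.val idx) h
          rw [hfz idx, hfz' idx, hidxv] at h2
          rw [if_neg (by omega : ¬ a - 1 < a - 1), if_pos (by omega : a - 1 < a),
            if_neg (by omega : ¬ a - 1 < a - 1)] at h2
          exact ht.lt.ne h2
      exact absurd hlt (hcz'.2 hxz)
    have hkB : ∀ {u u' : α}, s ⋖ u → s ⋖ u' → u ≠ u' → False := fun hu hu' hne' =>
      hne' (cover_unique hbt h1 h2 hsb hu hu')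
    have hkA : ∀ {t t' u : α}, t ⋖ s → t' ⋖ s → t ≠ t' → t ≠ ⊥ → t' ≠ ⊥ → s ⋖ u → False :=
      fun ht ht' hne' hb hb' hu =>
        killE3 hbt h1 h2 hext hsb (hu.lt.trans_le le_top) ht ht' hne' hb hb'
    have hk3 : ∀ {t t' t'' : α}, t ⋖ s → t' ⋖ s → t'' ⋖ s → t ≠ t' → t ≠ t'' → t' ≠ t'' →
        t ≠ ⊥ → t' ≠ ⊥ → t'' ≠ ⊥ → False := by
      intro t t' t'' ht ht' ht'' hne1 hne2 hne3 hbb1 hbb2 hbb3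
      by_cases hstop : s = ⊤
      · subst hstop
        exact kill3coatoms hbt h1 h2 hext ht ht' ht'' hbb1 hbb2 hbb3 hne1 hne2 hne3
      · exact killE3 hbt h1 h2 hext hsb (lt_top_iff_ne_top.mpr hstop) ht ht' hne1 hbb1 hbb2
    have d₁ := cover_case1 x z₁ hs ham hx hz1
    have d₂ := cover_case1 x z₂ hs ham hx hz2
    have d₃ := cover_case1 x z₃ hs ham hx hz3
    rcases d₁ with ⟨u₁, hu₁, f₁⟩ | ⟨t₁, ht₁, hq₁', ha₁, f₁⟩ | ⟨ha₁, f₁⟩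
    · rcases d₂ with ⟨u₂, hu₂, f₂⟩ | ⟨t₂, ht₂, hq₂', ha₂, f₂⟩ | ⟨ha₂, f₂⟩
      · exact hkB hu₁ hu₂ (hBB f₁ f₂ h12)
      · rcases d₃ with ⟨u₃, hu₃, f₃⟩ | ⟨t₃, ht₃, hq₃', ha₃, f₃⟩ | ⟨ha₃, f₃⟩
        · exact hkB hu₁ hu₃ (hBB f₁ f₃ h13)
        · exact hkA ht₂ ht₃ (hAA f₂ f₃ h23) hq₂' hq₃' hu₁
        · exact hAP ht₂ ha₂ f₂ f₃ hz2.lt hz3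
      · rcases d₃ with ⟨u₃, hu₃, f₃⟩ | ⟨t₃, ht₃, hq₃', ha₃, f₃⟩ | ⟨ha₃, f₃⟩
        · exact hkB hu₁ hu₃ (hBB f₁ f₃ h13)
        · exact hAP ht₃ ha₃ f₃ f₂ hz3.lt hz2
        · exact h23 (hPP f₂ f₃)
    · rcases d₂ with ⟨u₂, hu₂, f₂⟩ | ⟨t₂, ht₂, hq₂', ha₂, f₂⟩ | ⟨ha₂, f₂⟩
      · rcases d₃ with ⟨u₃, hu₃, f₃⟩ | ⟨t₃, ht₃, hq₃', ha₃, f₃⟩ | ⟨ha₃, f₃⟩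
        · exact hkB hu₂ hu₃ (hBB f₂ f₃ h23)
        · exact hkA ht₁ ht₃ (hAA f₁ f₃ h13) hq₁' hq₃' hu₂
        · exact hAP ht₁ ha₁ f₁ f₃ hz1.lt hz3
      · rcases d₃ with ⟨u₃, hu₃, f₃⟩ | ⟨t₃, ht₃, hq₃', ha₃, f₃⟩ | ⟨ha₃, f₃⟩
        · exact hkA ht₁ ht₂ (hAA f₁ f₂ h12) hq₁' hq₂' hu₃
        · exact hk3 ht₁ ht₂ ht₃ (hAA f₁ f₂ h12) (hAA f₁ f₃ h13) (hAA f₂ f₃ h23)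
            hq₁' hq₂' hq₃'
        · exact hAP ht₁ ha₁ f₁ f₃ hz1.lt hz3
      · exact hAP ht₁ ha₁ f₁ f₂ hz1.lt hz2
    · rcases d₂ with ⟨u₂, hu₂, f₂⟩ | ⟨t₂, ht₂, hq₂', ha₂, f₂⟩ | ⟨ha₂, f₂⟩
      · rcases d₃ with ⟨u₃, hu₃, f₃⟩ | ⟨t₃, ht₃, hq₃', ha₃, f₃⟩ | ⟨ha₃, f₃⟩
        · exact hkB hu₂ hu₃ (hBB f₂ f₃ h23)
        · exact hAP ht₃ ha₃ f₃ f₁ hz3.lt hz1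
        · exact h13 (hPP f₁ f₃)
      · exact hAP ht₂ ha₂ f₂ f₁ hz2.lt hz1
      · exact h12 (hPP f₁ f₂)
  · -- two-value tuple
    have hex : ∀ {w : α}, q₁ ⋖ w → w ≠ q₂ → False := fun hw hne' =>
      hne' (cover_unique hbt h1 h2 (bot_lt_iff_ne_bot.mpr hq1) hw hq)
    have hEq1 : ∀ {z z' : MCover α m},
        (∀ i : Fin m, z.val i =
          if (i : ℕ) < a then ⊥ else if (i : ℕ) < a + b - 1 then q₁ else q₂) →
        (∀ i : Fin m, z'.val i =
          if (i : ℕ) < a then ⊥ else if (i : ℕ) < a + b - 1 then q₁ else q₂) → z = z' := by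
      intro z z' hf hf'
      exact Subtype.ext (funext fun i => (hf i).trans (hf' i).symm)
    have hEq2 : ∀ {z z' : MCover α m},
        (∀ i : Fin m, z.val i =
          if (i : ℕ) < a - 1 then ⊥ else if (i : ℕ) < a + b then q₁ else q₂) →
        (∀ i : Fin m, z'.val i =
          if (i : ℕ) < a - 1 then ⊥ else if (i : ℕ) < a + b then q₁ else q₂) → z = z' := by
      intro z z' hf hf'
      exact Subtype.ext (funext fun i => (hf i).trans (hf' i).symm)
    have d₁ := cover_case2 x z₁ hq1 hq hb habm hx hz1
    have d₂ := cover_case2 x z₂ hq1 hq hb habm hx hz2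
    have d₃ := cover_case2 x z₃ hq1 hq hb habm hx hz3
    rcases d₁ with f₁ | ⟨ha₁, f₁⟩ | ⟨w, hw, hwne⟩
    · rcases d₂ with f₂ | ⟨ha₂, f₂⟩ | ⟨w, hw, hwne⟩
      · exact h12 (hEq1 f₁ f₂)
      · rcases d₃ with f₃ | ⟨ha₃, f₃⟩ | ⟨w, hw, hwne⟩
        · exact h13 (hEq1 f₁ f₃)
        · exact h23 (hEq2 f₂ f₃)
        · exact hex hw hwne
      · exact hex hw hwne
    · rcases d₂ with f₂ | ⟨ha₂, f₂⟩ | ⟨w, hw, hwne⟩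
      · rcases d₃ with f₃ | ⟨ha₃, f₃⟩ | ⟨w, hw, hwne⟩
        · exact h23 (hEq1 f₂ f₃)
        · exact h13 (hEq2 f₁ f₃)
        · exact hex hw hwne
      · exact h12 (hEq2 f₁ f₂)
      · exact hex hw hwne
    · exact hex hw hwne

end Dispatch

end Stmt13

/-- If all the m-cover posets of `P` are trim lattices, then the Möbius function of
`P^⟨m⟩` takes value `1` on nuclear intervals with two atoms, `−1` on cover relations,
and `0` otherwise. -/
theorem stmt_13 {α : Type*} [Fintype α] [PartialOrder α] [BoundedOrder α]
    (htrim : ∀ m : ℕ, 0 < m →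
      IsLatticeOrder (MCover α m) ∧ Extremal (MCover α m) ∧
        IsLeftModularLattice (MCover α m))
    (m : ℕ) (hm : 0 < m)
    (μ : MCover α m → MCover α m → ℤ)
    (hμ_refl : ∀ x, μ x x = 1)
    (hμ_sum : ∀ x y : MCover α m, x < y →
      (∑ᶠ z ∈ {z : MCover α m | x ≤ z ∧ z ≤ y}, μ x z) = 0) :
    ∀ x y : MCover α m, x < y →
      ((NuclearInterval x y ∧ Nat.card {z : MCover α m // x ⋖ z ∧ z ≤ y} = 2) →
          μ x y = 1) ∧
      (x ⋖ y → μ x y = -1) ∧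
      (¬ (NuclearInterval x y ∧ Nat.card {z : MCover α m // x ⋖ z ∧ z ≤ y} = 2) →
        ¬ x ⋖ y → μ x y = 0) := by
  intro x y hxy
  classical
  letI : Fintype (MCover α m) := Fintype.ofFinite _
  have hbt : (⊥ : α) < ⊤ := Stmt13.MCbt x
  obtain ⟨hlat, hext, -⟩ := htrim m hm
  obtain ⟨hlat1, -, -⟩ := htrim 1 one_pos
  obtain ⟨hlat2, hext2, -⟩ := htrim 2 (by omega)
  have hcc := Stmt13.crosscut hlat.1 μ hμ_refl hμ_sum hxy
  refine ⟨?_, ?_, ?_⟩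
  · rintro ⟨hnuc, h2c⟩
    exact hcc.2.1 hnuc h2c
  · intro hcov
    have h0 := hμ_sum x y hxy
    have hset : {z : MCover α m | x ≤ z ∧ z ≤ y} = {x, y} := by
      ext z
      simp only [Set.mem_setOf_eq, Set.mem_insert_iff, Set.mem_singleton_iff]
      constructor
      · rintro ⟨hz1, hz2⟩
        rcases eq_or_lt_of_le hz1 with h | h
        · exact Or.inl h.symm
        · rcases eq_or_lt_of_le hz2 with h' | h'
          · exact Or.inr h'
          · exact absurd h' (hcov.2 h)
      · rintro (rfl | rfl)
        · exact ⟨le_rfl, hxy.le⟩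
        · exact ⟨hxy.le, le_rfl⟩
    rw [hset, finsum_mem_pair hxy.ne, hμ_refl] at h0
    omega
  · intro hnot hncov
    by_cases hnuc : NuclearInterval x y
    · by_cases hone : Nat.card {z : MCover α m // x ⋖ z ∧ z ≤ y} = 1
      · exact absurd (hcc.2.2.1 hnuc hone) hncov
      · have hzero := hcc.2.2.2
        have hne2 : Nat.card {z : MCover α m // x ⋖ z ∧ z ≤ y} ≠ 2 := fun h => hnot ⟨hnuc, h⟩
        have hconv : Nat.card {z : MCover α m // x ⋖ z ∧ z ≤ y}
            = (Finset.univ.filter (fun z : MCover α m => x ⋖ z ∧ z ≤ y)).card := by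
          rw [Nat.card_eq_fintype_card, Fintype.card_subtype]
        have h3 : 2 < (Finset.univ.filter (fun z : MCover α m => x ⋖ z ∧ z ≤ y)).card := by
          omega
        obtain ⟨z₁, z₂, z₃, hm₁, hm₂, hm₃, h12, h13, h23⟩ := Finset.two_lt_card_iff.mp h3
        simp only [Finset.mem_filter, Finset.mem_univ, true_and] at hm₁ hm₂ hm₃
        exact absurd (Stmt13.no_three_covers hbt hlat1 hlat2 hext2 x z₁ z₂ z₃
          hm₁.1 hm₂.1 hm₃.1 h12 h13 h23) not_false
    · exact hcc.1 hnuc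
end
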